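/- arXiv:1101.2570 — 5 statements merged into one kernel-verified Lean document; each statement's English description precedes it below -/
import Mathlib

section
/- Assume s₀ ≥ 1. Let (p_n)_{n≥0} be a sequence of real numbers satisfying p_n = (1/μ)·n·log n + c_p·n + o(n) for some constant c_p ∈ ℝ, and let (w_n)_{n≥0} be a sequence of real numbers with w_n = O(n²·log n) such that, for some n* and all n ≥ n*, w_n = b·Σ_{k=0}^{n−s₀} P(I_n = k)·(w_k + (n−k)·p_k + k·(n−k)). Then there exists a constant c_w ∈ ℝ such that w_n = (1/μ)·n²·log n + c_w·n² + o(n²) as n → ∞. -/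
open MeasureTheory Filter Topology Asymptotics

open MeasureTheory Filter Topology Asymptotics

lemma bernSum (m : ℕ) (x : ℝ) :
    ∑ j ∈ Finset.range (m + 1), (m.choose j : ℝ) * x ^ j * (1 - x) ^ (m - j) = 1 := by
  have h := bernsteinPolynomial.sum ℝ m
  apply_fun (Polynomial.eval x) at h
  simpa [bernsteinPolynomial, Polynomial.eval_finset_sum] using h

lemma bernSumId (m : ℕ) (x : ℝ) :
    ∑ j ∈ Finset.range (m + 1), (j : ℝ) * ((m.choose j : ℝ) * x ^ j * (1 - x) ^ (m - j))
      = m * x := by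
  have h := bernsteinPolynomial.sum_smul ℝ m
  apply_fun (Polynomial.eval x) at h
  simpa [bernsteinPolynomial, Polynomial.eval_finset_sum] using h

lemma bernNonneg (m j : ℕ) {x : ℝ} (h0 : 0 ≤ x) (h1 : x ≤ 1) :
    0 ≤ (m.choose j : ℝ) * x ^ j * (1 - x) ^ (m - j) := by
  have : (0:ℝ) ≤ 1 - x := by linarith
  positivity

lemma bernLe (m j : ℕ) {x : ℝ} (h0 : 0 ≤ x) (h1 : x ≤ 1) :
    (m.choose j : ℝ) * x ^ j * (1 - x) ^ (m - j) ≤ (m.choose j : ℝ) := by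
  have h1' : (0:ℝ) ≤ 1 - x := by linarith
  calc (m.choose j : ℝ) * x ^ j * (1 - x) ^ (m - j)
      ≤ (m.choose j : ℝ) * 1 * 1 := by
        apply mul_le_mul
        · apply mul_le_mul_of_nonneg_left (pow_le_one₀ h0 h1) (by positivity)
        · exact pow_le_one₀ h1' (by linarith)
        · positivity
        · positivity
    _ = (m.choose j : ℝ) := by ring

/-- integrable of bounded measurable on a finite measure space -/
lemma integrable_of_bound {Ω : Type*} [MeasurableSpace Ω] (ℙ : Measure Ω)
    [IsFiniteMeasure ℙ] (f : Ω → ℝ) (hf : Measurable f) (C : ℝ) (h : ∀ ω, |f ω| ≤ C) :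
    Integrable f ℙ :=
  ⟨hf.aestronglyMeasurable, HasFiniteIntegral.of_bounded (C := C) (ae_of_all _ h)⟩

open unitInterval in
lemma bernstein_eps (f : C(unitInterval, ℝ)) {ε : ℝ} (hε : 0 < ε) :
    ∃ N : ℕ, ∀ m ≥ N, ∀ y : unitInterval, |bernsteinApproximation m f y - f y| ≤ ε := by
  have h := bernsteinApproximation_uniform f
  rw [Metric.tendsto_atTop] at h
  obtain ⟨N, hN⟩ := h ε hε
  refine ⟨N, fun m hm y => ?_⟩
  have h2 := hN m hm
  rw [dist_eq_norm] at h2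
  have h3 : |bernsteinApproximation m f y - f y|
      = ‖(bernsteinApproximation m f - f) y‖ := by
    simp [ContinuousMap.sub_apply]
  rw [h3]
  exact le_of_lt (lt_of_le_of_lt ((bernsteinApproximation m f - f).norm_coe_le_norm y) h2)

lemma cont_bound (φ : ℝ → ℝ) (hφ : Continuous φ) :
    ∃ M : ℝ, 0 ≤ M ∧ ∀ x : ℝ, x ∈ Set.Icc (0:ℝ) 1 → |φ x| ≤ M := by
  obtain ⟨M, hM⟩ := isCompact_Icc.exists_bound_of_continuousOn
    (hφ.continuousOn (s := Set.Icc (0:ℝ) 1))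
  refine ⟨max M 0, le_max_right _ _, fun x hx => ?_⟩
  exact le_trans (hM x hx) (le_max_left _ _)

lemma cont_modulus (φ : ℝ → ℝ) (hφ : Continuous φ) {ε : ℝ} (hε : 0 < ε) :
    ∃ δ : ℝ, 0 < δ ∧ ∀ x ∈ Set.Icc (0:ℝ) 1, ∀ y ∈ Set.Icc (0:ℝ) 1,
      |x - y| < δ → |φ x - φ y| ≤ ε := by
  have h : UniformContinuousOn φ (Set.Icc 0 1) :=
    isCompact_Icc.uniformContinuousOn_of_continuous hφ.continuousOn
  rw [Metric.uniformContinuousOn_iff] at h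
  obtain ⟨δ, hδ, hδ2⟩ := h ε hε
  refine ⟨δ, hδ, fun x hx y hy hxy => le_of_lt ?_⟩
  have := hδ2 x hx y hy (by simpa [Real.dist_eq] using hxy)
  simpa [Real.dist_eq] using this

section Supp
variable {Ω : Type*} [MeasurableSpace Ω] (ℙ : Measure Ω) [IsProbabilityMeasure ℙ]
  (V : Ω → ℝ) (I : ℕ → Ω → ℕ) (b s₀ s₁ : ℕ)

/-- probability that the subtree size is k -/
noncomputable def pS (n k : ℕ) : ℝ := (ℙ {ω | I n ω = k}).toReal

/-- expectation of f(I_n) over the range 0..n-s₀ -/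
noncomputable def sS (n : ℕ) (f : ℕ → ℝ) : ℝ :=
  ∑ k ∈ Finset.range (n - s₀ + 1), pS ℙ I n k * f k

variable (hVmeas : Measurable V) (hV01 : ∀ ω, V ω ∈ Set.Icc (0:ℝ) 1)
  (hImeas : ∀ n, Measurable (I n)) (hb : 2 ≤ b)
  (hIdist : ∀ n : ℕ, s₀ + b * s₁ ≤ n → ∀ k : ℕ, k ≤ n - s₀ - b * s₁ →
      (ℙ {ω | I n ω = k + s₁}).toReal
        = ∫ ω, ((n - s₀ - b * s₁).choose k : ℝ) * V ω ^ k
            * (1 - V ω) ^ (n - s₀ - b * s₁ - k) ∂ℙ)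

include hVmeas hV01 in
lemma bern_integrable (m j : ℕ) :
    Integrable (fun ω => (m.choose j : ℝ) * V ω ^ j * (1 - V ω) ^ (m - j)) ℙ := by
  apply integrable_of_bound ℙ _ (by fun_prop) (m.choose j : ℝ)
  intro ω
  rw [abs_of_nonneg (bernNonneg m j (hV01 ω).1 (hV01 ω).2)]
  exact bernLe m j (hV01 ω).1 (hV01 ω).2

include hVmeas hV01 hImeas hIdist in
lemma union_full {n : ℕ} (hn : s₀ + b * s₁ ≤ n) :
    ℙ (⋃ j ∈ Finset.range (n - s₀ - b * s₁ + 1), {ω | I n ω = j + s₁}) = 1 := by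
  set m := n - s₀ - b * s₁ with hm
  have hdisj : (Finset.range (m + 1) : Set ℕ).PairwiseDisjoint
      (fun j => {ω | I n ω = j + s₁}) := by
    intro i _ j _ hij
    simp only [Function.onFun, Set.disjoint_left]
    intro ω h1 h2
    simp only [Set.mem_setOf_eq] at h1 h2
    omega
  have hmeas : ∀ j ∈ Finset.range (m + 1), MeasurableSet {ω | I n ω = j + s₁} :=
    fun j _ => hImeas n (measurableSet_singleton (j + s₁))
  rw [measure_biUnion_finset hdisj hmeas]
  have htr : (∑ j ∈ Finset.range (m + 1), ℙ {ω | I n ω = j + s₁}).toReal = 1 := by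
    rw [ENNReal.toReal_sum (fun j _ => measure_ne_top ℙ _)]
    have : ∀ j ∈ Finset.range (m + 1), (ℙ {ω | I n ω = j + s₁}).toReal
        = ∫ ω, (m.choose j : ℝ) * V ω ^ j * (1 - V ω) ^ (m - j) ∂ℙ := by
      intro j hj
      exact hIdist n hn j (by simpa using Nat.lt_succ_iff.mp (Finset.mem_range.mp hj))
    rw [Finset.sum_congr rfl this,
      ← integral_finset_sum _ (fun j _ => bern_integrable ℙ V hVmeas hV01 m j)]
    have : ∀ ω, (∑ j ∈ Finset.range (m + 1),
        (m.choose j : ℝ) * V ω ^ j * (1 - V ω) ^ (m - j)) = 1 :=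
      fun ω => bernSum m (V ω)
    rw [integral_congr_ae (ae_of_all _ this)]
    simp
  have hne : (∑ j ∈ Finset.range (m + 1), ℙ {ω | I n ω = j + s₁}) ≠ ⊤ := by
    refine (lt_of_le_of_lt ?_ (lt_top_iff_ne_top.mpr (measure_ne_top ℙ Set.univ))).ne
    rw [← measure_biUnion_finset hdisj hmeas]
    exact measure_mono (Set.subset_univ _)
  rw [← ENNReal.ofReal_toReal hne, htr]
  simp
end Supp
section Supp2
variable {Ω : Type*} [MeasurableSpace Ω] (ℙ : Measure Ω) [IsProbabilityMeasure ℙ]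
  (V : Ω → ℝ) (I : ℕ → Ω → ℕ) (b s₀ s₁ : ℕ)
  (hVmeas : Measurable V) (hV01 : ∀ ω, V ω ∈ Set.Icc (0:ℝ) 1)
  (hImeas : ∀ n, Measurable (I n)) (hb : 2 ≤ b)
  (hIdist : ∀ n : ℕ, s₀ + b * s₁ ≤ n → ∀ k : ℕ, k ≤ n - s₀ - b * s₁ →
      (ℙ {ω | I n ω = k + s₁}).toReal
        = ∫ ω, ((n - s₀ - b * s₁).choose k : ℝ) * V ω ^ k
            * (1 - V ω) ^ (n - s₀ - b * s₁ - k) ∂ℙ)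

include hVmeas hV01 hImeas hb hIdist in
/-- The fundamental representation: expectations of f(I_n) as mixed-binomial integrals. -/
lemma sS_repr {n : ℕ} (hn : s₀ + b * s₁ ≤ n) (f : ℕ → ℝ) :
    sS ℙ I s₀ n f = ∫ ω, (∑ j ∈ Finset.range (n - s₀ - b * s₁ + 1),
      ((n - s₀ - b * s₁).choose j : ℝ) * V ω ^ j
        * (1 - V ω) ^ (n - s₀ - b * s₁ - j) * f (j + s₁)) ∂ℙ := by
  set m := n - s₀ - b * s₁ with hm
  have hs₁m : s₁ ≤ b * s₁ := Nat.le_mul_of_pos_left s₁ (by omega)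
  -- step 1: the sum over range (n - s₀ + 1) localizes to the image of j ↦ j + s₁
  have himg : (Finset.range (m + 1)).image (· + s₁) ⊆ Finset.range (n - s₀ + 1) := by
    intro k hk
    simp only [Finset.mem_image, Finset.mem_range] at hk ⊢
    omega
  have hnull : ∀ k ∈ Finset.range (n - s₀ + 1),
      k ∉ (Finset.range (m + 1)).image (· + s₁) → pS ℙ I n k * f k = 0 := by
    intro k _ hk
    have hsub : {ω | I n ω = k} ⊆
        (⋃ j ∈ Finset.range (m + 1), {ω | I n ω = j + s₁})ᶜ := by
      intro ω hω
      simp only [Set.mem_compl_iff, Set.mem_iUnion, not_exists, Set.mem_setOf_eq] at hω ⊢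
      intro j hj hbad
      exact hk (Finset.mem_image.mpr ⟨j, hj, by omega⟩)
    have h0 : ℙ {ω | I n ω = k} = 0 := by
      apply measure_mono_null hsub
      have := union_full ℙ V I b s₀ s₁ hVmeas hV01 hImeas hIdist hn
      have hms : MeasurableSet (⋃ j ∈ Finset.range (m + 1), {ω | I n ω = j + s₁}) :=
        Finset.measurableSet_biUnion _
          (fun j _ => hImeas n (measurableSet_singleton (j + s₁)))
      rw [measure_compl hms (measure_ne_top ℙ _), this]
      simp
    simp [pS, h0]
  rw [sS, ← Finset.sum_subset himg hnull, Finset.sum_image (by intro x _ y _ h; exact Nat.add_right_cancel h)]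
  have hterm : ∀ j ∈ Finset.range (m + 1), pS ℙ I n (j + s₁) * f (j + s₁)
      = ∫ ω, (m.choose j : ℝ) * V ω ^ j * (1 - V ω) ^ (m - j) * f (j + s₁) ∂ℙ := by
    intro j hj
    rw [pS, hIdist n hn j (by simpa using Nat.lt_succ_iff.mp (Finset.mem_range.mp hj)),
      ← integral_mul_const]
  rw [Finset.sum_congr rfl hterm, ← integral_finset_sum]
  intro j _
  exact (bern_integrable ℙ V hVmeas hV01 m j).mul_const (f (j + s₁))
end Supp2
section KeyLimit
variable {Ω : Type*} [MeasurableSpace Ω] (ℙ : Measure Ω) [IsProbabilityMeasure ℙ]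
  (V : Ω → ℝ) (I : ℕ → Ω → ℕ) (b s₀ s₁ : ℕ)
  (hVmeas : Measurable V) (hV01 : ∀ ω, V ω ∈ Set.Icc (0:ℝ) 1)
  (hImeas : ∀ n, Measurable (I n)) (hb : 2 ≤ b)
  (hIdist : ∀ n : ℕ, s₀ + b * s₁ ≤ n → ∀ k : ℕ, k ≤ n - s₀ - b * s₁ →
      (ℙ {ω | I n ω = k + s₁}).toReal
        = ∫ ω, ((n - s₀ - b * s₁).choose k : ℝ) * V ω ^ k
            * (1 - V ω) ^ (n - s₀ - b * s₁ - k) ∂ℙ)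

include hVmeas hV01 hImeas hb hIdist in
lemma keyLimit (φ : ℝ → ℝ) (hφ : Continuous φ) :
    Filter.Tendsto (fun n : ℕ => sS ℙ I s₀ n (fun k => φ ((k : ℝ) / (n : ℝ))))
      Filter.atTop (nhds (∫ ω, φ (V ω) ∂ℙ)) := by
  have hφV : Integrable (fun ω => φ (V ω)) ℙ := by
    obtain ⟨M, hM0, hM⟩ := cont_bound φ hφ
    exact integrable_of_bound ℙ _ (hφ.measurable.comp hVmeas) M (fun ω => hM _ (hV01 ω))
  rw [Metric.tendsto_atTop]
  intro ε hε
  obtain ⟨δ, hδ, hmod⟩ := cont_modulus φ hφ (show (0:ℝ) < ε/4 by linarith)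
  set φI : C(unitInterval, ℝ) := ⟨fun y => φ y, hφ.comp continuous_subtype_val⟩ with hφI
  obtain ⟨N₂, hN₂⟩ := bernstein_eps φI (show (0:ℝ) < ε/4 by linarith)
  set K := s₀ + b * s₁ with hK
  obtain ⟨N₃, hN₃⟩ := exists_nat_gt (((s₁ : ℝ) + K) / δ)
  refine ⟨max (K + N₂ + 1) (N₃ + 1), fun n hn => ?_⟩
  have hnK : K + N₂ + 1 ≤ n := le_trans (le_max_left _ _) hn
  have hnN₃ : N₃ + 1 ≤ n := le_trans (le_max_right _ _) hn
  set m := n - s₀ - b * s₁ with hm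
  have hmN₂ : N₂ ≤ m := by omega
  have hm1 : 1 ≤ m := by omega
  have hn1 : 1 ≤ n := by omega
  have hnpos : (0:ℝ) < n := by exact_mod_cast hn1
  have hmpos : (0:ℝ) < m := by exact_mod_cast hm1
  have hnm : (n : ℝ) - m = K := by
    have h1 : m + K = n := by omega
    have h2 := congrArg (Nat.cast : ℕ → ℝ) h1
    push_cast at h2; linarith
  -- the total grid perturbation is < δ
  have hKn : ((s₁:ℝ) + K) / n < δ := by
    have h1 : ((s₁:ℝ) + K) / δ < N₃ := hN₃
    have h2 : (N₃ : ℝ) ≤ n := by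
      have : (N₃ : ℝ) ≤ (n : ℝ) := by exact_mod_cast (by omega : N₃ ≤ n)
      exact this
    rw [div_lt_iff₀ hδ] at h1
    rw [div_lt_iff₀ hnpos]
    calc (s₁:ℝ) + K < N₃ * δ := h1
      _ ≤ n * δ := mul_le_mul_of_nonneg_right h2 (le_of_lt hδ)
      _ = δ * n := by ring
  have hgrid : ∀ j : ℕ, j ≤ m → |((j:ℝ) + s₁) / n - (j:ℝ) / m| < δ := by
    intro j hj
    have hjm : (j:ℝ) ≤ m := by exact_mod_cast hj
    have hj0 : (0:ℝ) ≤ j := Nat.cast_nonneg j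
    refine lt_of_le_of_lt ?_ hKn
    have hid : ((j:ℝ) + s₁) / n - (j:ℝ) / m
        = (s₁:ℝ) / n - (j * ((n:ℝ) - m)) / (n * m) := by
      field_simp; ring
    rw [hid]
    have hq0 : (0:ℝ) ≤ (j * ((n:ℝ) - m)) / (n * m) := by rw [hnm]; positivity
    have hq1 : (j * ((n:ℝ) - m)) / (n * m) ≤ (K:ℝ) / n := by
      rw [hnm, div_le_div_iff₀ (by positivity) hnpos]
      calc (j:ℝ) * K * n ≤ (m:ℝ) * K * n := by
            apply mul_le_mul_of_nonneg_right
              (mul_le_mul_of_nonneg_right hjm (Nat.cast_nonneg K)) (le_of_lt hnpos)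
        _ = (K:ℝ) * (n * m) := by ring
    have hp0 : (0:ℝ) ≤ (s₁:ℝ) / n := by positivity
    have hsplit : ((s₁:ℝ) + K) / n = (s₁:ℝ)/n + (K:ℝ)/n := add_div _ _ _
    rw [abs_sub_le_iff]
    constructor <;> [skip; skip] <;> rw [hsplit] <;> linarith
  -- representation as an integral
  rw [sS_repr ℙ V I b s₀ s₁ hVmeas hV01 hImeas hb hIdist (by omega) _]
  set g : Ω → ℝ := fun ω => ∑ j ∈ Finset.range (m + 1),
    (m.choose j : ℝ) * V ω ^ j * (1 - V ω) ^ (m - j) * φ (((j + s₁ : ℕ) : ℝ) / n) with hg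
  have hgint : Integrable g ℙ :=
    integrable_finset_sum _ (fun j _ =>
      (bern_integrable ℙ V hVmeas hV01 m j).mul_const _)
  -- pointwise estimate
  have hpt : ∀ ω, |g ω - φ (V ω)| ≤ ε/2 := by
    intro ω
    set x := V ω with hx
    have hx0 : (0:ℝ) ≤ x := (hV01 ω).1
    have hx1 : x ≤ 1 := (hV01 ω).2
    set B : ℕ → ℝ := fun j => (m.choose j : ℝ) * x ^ j * (1 - x) ^ (m - j) with hB
    have hB0 : ∀ j, 0 ≤ B j := fun j => bernNonneg m j hx0 hx1
    have hB1 : ∑ j ∈ Finset.range (m + 1), B j = 1 := bernSum m x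
    set xI : unitInterval := ⟨x, hx0, hx1⟩ with hxI
    have hdecomp : g ω - φ x
        = (∑ j ∈ Finset.range (m + 1), B j * (φ (((j + s₁ : ℕ) : ℝ) / n) - φ ((j:ℝ)/m)))
          + ((∑ j ∈ Finset.range (m + 1), B j * φ ((j:ℝ)/m)) - φ x) := by
      rw [hg]
      rw [Finset.sum_congr rfl (fun j _ => by ring :
        ∀ j ∈ Finset.range (m+1), B j * (φ (((j + s₁ : ℕ) : ℝ) / n) - φ ((j:ℝ)/m))
          = B j * φ (((j + s₁ : ℕ) : ℝ) / n) - B j * φ ((j:ℝ)/m)), Finset.sum_sub_distrib]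
      ring
    have hA : |∑ j ∈ Finset.range (m + 1),
        B j * (φ (((j + s₁ : ℕ) : ℝ) / n) - φ ((j:ℝ)/m))| ≤ ε/4 := by
      refine le_trans (Finset.abs_sum_le_sum_abs _ _) ?_
      have : ∀ j ∈ Finset.range (m + 1),
          |B j * (φ (((j + s₁ : ℕ) : ℝ) / n) - φ ((j:ℝ)/m))| ≤ B j * (ε/4) := by
        intro j hj
        have hjm : j ≤ m := Nat.lt_succ_iff.mp (Finset.mem_range.mp hj)
        rw [abs_mul, abs_of_nonneg (hB0 j)]
        apply mul_le_mul_of_nonneg_left ?_ (hB0 j)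
        have hcast : ((j + s₁ : ℕ) : ℝ) = (j:ℝ) + s₁ := by push_cast; ring
        rw [hcast]
        apply hmod
        · constructor
          · positivity
          · rw [div_le_one hnpos]
            have hjr : (j:ℝ) ≤ m := by exact_mod_cast hjm
            have hs : s₁ ≤ K := by
              have := Nat.le_mul_of_pos_left s₁ (show 0 < b by omega); omega
            have hsr : (s₁:ℝ) ≤ K := by exact_mod_cast hs
            linarith
        · constructor
          · positivity
          · rw [div_le_one hmpos]; exact_mod_cast hjm
        · exact hgrid j hjm
      refine le_trans (Finset.sum_le_sum this) ?_
      rw [← Finset.sum_mul, hB1, one_mul]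
    have hBrn : (∑ j ∈ Finset.range (m + 1), B j * φ ((j:ℝ)/m))
        = bernsteinApproximation m φI xI := by
      rw [bernsteinApproximation.apply,
        ← Fin.sum_univ_eq_sum_range (fun j : ℕ => B j * φ ((j:ℝ)/m)) (m+1)]
      apply Finset.sum_congr rfl
      intro k _
      have h1 : φI (bernstein.z k) = φ ((k:ℝ)/m) := rfl
      have h2 : bernstein m k xI = B k := by
        rw [bernstein_apply]
      rw [h1, h2, smul_eq_mul, mul_comm]
    have hBv : |(∑ j ∈ Finset.range (m + 1), B j * φ ((j:ℝ)/m)) - φ x| ≤ ε/4 := by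
      rw [hBrn]
      have := hN₂ m hmN₂ xI
      simpa [hφI] using this
    calc |g ω - φ x| ≤ _ + _ := by rw [hdecomp]; exact abs_add_le _ _
      _ ≤ ε/4 + ε/4 := add_le_add hA hBv
      _ = ε/2 := by ring
  -- conclude
  have hdiff : dist (∫ ω, g ω ∂ℙ) (∫ ω, φ (V ω) ∂ℙ) ≤ ε/2 := by
    rw [dist_eq_norm, ← integral_sub hgint hφV]
    have := norm_integral_le_of_norm_le_const (μ := ℙ)
      (f := fun ω => g ω - φ (V ω)) (C := ε/2) (ae_of_all _ (fun ω => by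
        rw [Real.norm_eq_abs]; exact hpt ω))
    simpa using this
  exact lt_of_le_of_lt hdiff (by linarith)
end KeyLimit
section Moments
variable {Ω : Type*} [MeasurableSpace Ω] (ℙ : Measure Ω) [IsProbabilityMeasure ℙ]
  (V : Ω → ℝ) (I : ℕ → Ω → ℕ) (b s₀ s₁ : ℕ)
  (hVmeas : Measurable V) (hV01 : ∀ ω, V ω ∈ Set.Icc (0:ℝ) 1)
  (hImeas : ∀ n, Measurable (I n)) (hb : 2 ≤ b)
  (hIdist : ∀ n : ℕ, s₀ + b * s₁ ≤ n → ∀ k : ℕ, k ≤ n - s₀ - b * s₁ →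
      (ℙ {ω | I n ω = k + s₁}).toReal
        = ∫ ω, ((n - s₀ - b * s₁).choose k : ℝ) * V ω ^ k
            * (1 - V ω) ^ (n - s₀ - b * s₁ - k) ∂ℙ)

include hVmeas hV01 hImeas hb hIdist in
lemma sS_one {n : ℕ} (hn : s₀ + b * s₁ ≤ n) : sS ℙ I s₀ n (fun _ => (1:ℝ)) = 1 := by
  rw [sS_repr ℙ V I b s₀ s₁ hVmeas hV01 hImeas hb hIdist hn]
  have : ∀ ω : Ω, (∑ j ∈ Finset.range (n - s₀ - b * s₁ + 1),
      ((n - s₀ - b * s₁).choose j : ℝ) * V ω ^ j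
        * (1 - V ω) ^ (n - s₀ - b * s₁ - j) * 1) = 1 := by
    intro ω
    simpa [mul_one] using bernSum (n - s₀ - b * s₁) (V ω)
  rw [integral_congr_ae (ae_of_all _ this)]
  simp

include hVmeas hV01 hImeas hb hIdist in
lemma sS_id {n : ℕ} (hn : s₀ + b * s₁ ≤ n) (hEV : (∫ ω, V ω ∂ℙ) = 1 / b) :
    sS ℙ I s₀ n (fun k => (k:ℝ)) = ((n:ℝ) - s₀) / b := by
  rw [sS_repr ℙ V I b s₀ s₁ hVmeas hV01 hImeas hb hIdist hn]
  set m := n - s₀ - b * s₁ with hm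
  have hVint : Integrable V ℙ :=
    integrable_of_bound ℙ V hVmeas 1 (fun ω => by
      rw [abs_of_nonneg (hV01 ω).1]; exact (hV01 ω).2)
  have hpt : ∀ ω : Ω, (∑ j ∈ Finset.range (m + 1),
      (m.choose j : ℝ) * V ω ^ j * (1 - V ω) ^ (m - j) * ((j + s₁ : ℕ) : ℝ))
      = (m:ℝ) * V ω + s₁ := by
    intro ω
    have hsplit : ∀ j ∈ Finset.range (m + 1),
        (m.choose j : ℝ) * V ω ^ j * (1 - V ω) ^ (m - j) * ((j + s₁ : ℕ) : ℝ)
        = (j:ℝ) * ((m.choose j : ℝ) * V ω ^ j * (1 - V ω) ^ (m - j))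
          + (s₁:ℝ) * ((m.choose j : ℝ) * V ω ^ j * (1 - V ω) ^ (m - j)) := by
      intro j _; push_cast; ring
    rw [Finset.sum_congr rfl hsplit, Finset.sum_add_distrib, bernSumId m (V ω),
      ← Finset.mul_sum, bernSum m (V ω)]
    ring
  rw [integral_congr_ae (ae_of_all _ hpt), integral_add ((hVint.const_mul _)) (integrable_const _),
    MeasureTheory.integral_const_mul, hEV, integral_const, probReal_univ]
  have hbpos : (0:ℝ) < b := by exact_mod_cast (by omega : 0 < b)
  have hcast : (m:ℝ) = (n:ℝ) - s₀ - b * s₁ := by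
    have h1 : m + (s₀ + b * s₁) = n := by omega
    have h2 := congrArg (Nat.cast : ℕ → ℝ) h1
    push_cast at h2; linarith
  rw [hcast]
  field_simp
  ring
end Moments
section SBasic
variable {Ω : Type*} [MeasurableSpace Ω] (ℙ : Measure Ω) (I : ℕ → Ω → ℕ) (s₀ : ℕ)

lemma pS_nonneg (n k : ℕ) : 0 ≤ pS ℙ I n k := ENNReal.toReal_nonneg

lemma sS_mono (n : ℕ) {f g : ℕ → ℝ} (h : ∀ k ∈ Finset.range (n - s₀ + 1), f k ≤ g k) :
    sS ℙ I s₀ n f ≤ sS ℙ I s₀ n g :=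
  Finset.sum_le_sum (fun k hk => mul_le_mul_of_nonneg_left (h k hk) (pS_nonneg ℙ I n k))

lemma sS_abs (n : ℕ) (f : ℕ → ℝ) : |sS ℙ I s₀ n f| ≤ sS ℙ I s₀ n (fun k => |f k|) := by
  refine le_trans (Finset.abs_sum_le_sum_abs _ _) (Finset.sum_le_sum fun k hk => ?_)
  rw [abs_mul, abs_of_nonneg (pS_nonneg ℙ I n k)]

lemma sS_add (n : ℕ) (f g : ℕ → ℝ) :
    sS ℙ I s₀ n (fun k => f k + g k) = sS ℙ I s₀ n f + sS ℙ I s₀ n g := by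
  rw [sS, sS, sS, ← Finset.sum_add_distrib]
  exact Finset.sum_congr rfl fun k _ => by ring

lemma sS_smul (n : ℕ) (c : ℝ) (f : ℕ → ℝ) :
    sS ℙ I s₀ n (fun k => c * f k) = c * sS ℙ I s₀ n f := by
  rw [sS, sS, Finset.mul_sum]
  exact Finset.sum_congr rfl fun k _ => by ring

lemma sS_congr (n : ℕ) {f g : ℕ → ℝ} (h : ∀ k ∈ Finset.range (n - s₀ + 1), f k = g k) :
    sS ℙ I s₀ n f = sS ℙ I s₀ n g :=
  Finset.sum_congr rfl (fun k hk => by rw [h k hk])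

end SBasic

set_option maxHeartbeats 2000000 in
/-- (Theorem 3, expected Wiener index of random split trees.)
Assume `s₀ ≥ 1`. Suppose `p_n = (1/μ)·n·log n + c_p·n + o(n)` and `(w_n)` satisfies
`w_n = O(n² log n)` together with, for all large `n`, the recursion
`w_n = b·Σ_{k=0}^{n-s₀} P(I_n = k)·(w_k + (n-k)·p_k + k·(n-k))`. Then there is a constant
`c_w` with `w_n = (1/μ)·n²·log n + c_w·n² + o(n²)`, where `μ = -b·E[V·log V]`. -/
theorem stmt1
    (b s₀ s₁ : ℕ) (hb : 2 ≤ b) (hs₀ : 1 ≤ s₀)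
    {Ω : Type*} [MeasurableSpace Ω] (ℙ : Measure Ω) [IsProbabilityMeasure ℙ]
    (V : Ω → ℝ) (hVmeas : Measurable V)
    (hV01 : ∀ ω, V ω ∈ Set.Icc (0:ℝ) 1)
    (hVdens : ℙ.map V ≪ (volume : Measure ℝ))
    (hVtail : ∀ x : ℝ, x < 1 → ℙ {ω | V ω ≤ x} < 1)
    (hEV : (∫ ω, V ω ∂ℙ) = 1 / b)
    (I : ℕ → Ω → ℕ) (hImeas : ∀ n, Measurable (I n))
    (hIdist : ∀ n : ℕ, s₀ + b * s₁ ≤ n → ∀ k : ℕ, k ≤ n - s₀ - b * s₁ →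
      (ℙ {ω | I n ω = k + s₁}).toReal
        = ∫ ω, ((n - s₀ - b * s₁).choose k : ℝ) * V ω ^ k
            * (1 - V ω) ^ (n - s₀ - b * s₁ - k) ∂ℙ)
    (μ : ℝ) (hμ : μ = -(b : ℝ) * ∫ ω, V ω * Real.log (V ω) ∂ℙ) (hμpos : 0 < μ)
    (p : ℕ → ℝ) (cp : ℝ)
    (hp : (fun n : ℕ => p n - (1 / μ) * n * Real.log n - cp * n) =o[atTop] fun n : ℕ => (n : ℝ))
    (w : ℕ → ℝ)
    (hwO : (fun n : ℕ => w n) =O[atTop] fun n : ℕ => (n : ℝ) ^ 2 * Real.log n)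
    (nstar : ℕ)
    (hrec : ∀ n : ℕ, nstar ≤ n →
      w n = (b : ℝ) * ∑ k ∈ Finset.range (n - s₀ + 1),
        (ℙ {ω | I n ω = k}).toReal * (w k + ((n : ℝ) - k) * p k + (k : ℝ) * ((n : ℝ) - k))) :
    ∃ cw : ℝ,
      (fun n : ℕ => w n - (1 / μ) * (n : ℝ) ^ 2 * Real.log n - cw * (n : ℝ) ^ 2)
        =o[atTop] fun n : ℕ => ((n : ℝ) ^ 2) := by
  classical
  have hbR : (0:ℝ) < b := by exact_mod_cast (by omega : 0 < b)
  -- integrability of V and V^2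
  have hVint : Integrable V ℙ :=
    integrable_of_bound ℙ V hVmeas 1 (fun ω => by
      rw [abs_of_nonneg (hV01 ω).1]; exact (hV01 ω).2)
  have hV2int : Integrable (fun ω => V ω ^ 2) ℙ :=
    integrable_of_bound ℙ _ (by fun_prop) 1 (fun ω => by
      rw [abs_of_nonneg (by positivity)]
      exact pow_le_one₀ (hV01 ω).1 (hV01 ω).2)
  set q : ℝ := (b:ℝ) * ∫ ω, V ω ^ 2 ∂ℙ with hqdef
  have hq0 : 0 ≤ q := by
    apply mul_nonneg (le_of_lt hbR)
    exact integral_nonneg (fun ω => by positivity)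
  have hq1 : q < 1 := by
    have hmono : ∫ ω, V ω ^ 2 ∂ℙ < ∫ ω, V ω ∂ℙ := by
      have hdiffint : Integrable (fun ω => V ω - V ω ^ 2) ℙ := hVint.sub hV2int
      have hnn : 0 ≤ fun ω => V ω - V ω ^ 2 := by
        intro ω
        have h0 := (hV01 ω).1; have h1 := (hV01 ω).2
        simp only [Pi.zero_apply]
        nlinarith
      have hposmeas : 0 < ℙ (Function.support fun ω => V ω - V ω ^ 2) := by
        have hz : ℙ {ω | V ω - V ω ^ 2 = 0} = 0 := by
          have hsub : {ω | V ω - V ω ^ 2 = 0} ⊆ V ⁻¹' {0, 1} := by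
            intro ω hω
            simp only [Set.mem_setOf_eq] at hω
            simp only [Set.mem_preimage, Set.mem_insert_iff, Set.mem_singleton_iff]
            have : V ω * (1 - V ω) = 0 := by nlinarith
            rcases mul_eq_zero.mp this with h | h
            · left; exact h
            · right; linarith
          apply measure_mono_null hsub
          have : ℙ.map V {0, 1} = 0 := by
            apply hVdens
            exact Set.Countable.measure_zero (Set.Countable.insert _ (Set.countable_singleton _)) _
          rwa [Measure.map_apply hVmeas (by measurability)] at this
        have hcover : (Set.univ : Set Ω) ⊆
            (Function.support fun ω => V ω - V ω ^ 2) ∪ {ω | V ω - V ω ^ 2 = 0} := by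
          intro ω _
          by_cases h : V ω - V ω ^ 2 = 0
          · right; exact h
          · left; exact h
        have h1 : (1 : ENNReal) ≤ ℙ (Function.support fun ω => V ω - V ω ^ 2) := by
          calc (1:ENNReal) = ℙ Set.univ := (measure_univ).symm
            _ ≤ ℙ ((Function.support fun ω => V ω - V ω ^ 2) ∪ {ω | V ω - V ω ^ 2 = 0}) :=
                measure_mono hcover
            _ ≤ _ + _ := measure_union_le _ _
            _ = ℙ (Function.support fun ω => V ω - V ω ^ 2) := by rw [hz, add_zero]
        exact lt_of_lt_of_le (by norm_num) h1
      have := (integral_pos_iff_support_of_nonneg hnn hdiffint).mpr hposmeas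
      have hsub := integral_sub hVint hV2int
      rw [hsub] at this
      linarith
    calc q < (b:ℝ) * ∫ ω, V ω ∂ℙ := by
          exact mul_lt_mul_of_pos_left hmono hbR
      _ = 1 := by rw [hEV]; field_simp
  set θ : ℝ := (1 + q)/2 with hθdef
  have hθq : q < θ := by simp only [hθdef]; linarith
  have hθ1 : θ < 1 := by simp only [hθdef]; linarith
  have hθ0 : 0 ≤ θ := by simp only [hθdef]; linarith
  have h1θ : 0 < 1 - θ := by linarith
  have h1q : (1:ℝ) - q ≠ 0 := by intro h; simp only [hθdef] at *; linarith [hq1]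
  set c : ℝ := cp + 1 - 1/(1 - q) with hcdef
  set ρ : ℕ → ℝ := fun k => p k - (1/μ)*k*Real.log k - cp*k with hρdef
  set γ : ℕ → ℝ := fun n => (1/μ)*(n:ℝ)^2*Real.log n + c*(n:ℝ)^2 with hγdef
  set r : ℕ → ℝ := fun n => w n - γ n with hrdef
  set e : ℕ → ℝ := fun n => (b:ℝ) * sS ℙ I s₀ n
      (fun k => γ k + ((n:ℝ)-k)*p k + (k:ℝ)*((n:ℝ)-k)) - γ n with hedef
  set n₀ := s₀ + b * s₁ with hn₀def
  -- the recursion in terms of r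
  have hrecr : ∀ n : ℕ, max nstar n₀ ≤ n → r n = (b:ℝ) * sS ℙ I s₀ n r + e n := by
    intro n hn
    have h1 := hrec n (le_trans (le_max_left _ _) hn)
    have h2 : (b:ℝ) * ∑ k ∈ Finset.range (n - s₀ + 1),
        (ℙ {ω | I n ω = k}).toReal * (w k + ((n:ℝ)-k)*p k + (k:ℝ)*((n:ℝ)-k))
        = (b:ℝ) * sS ℙ I s₀ n (fun k => w k + ((n:ℝ)-k)*p k + (k:ℝ)*((n:ℝ)-k)) := rfl
    have h3 : sS ℙ I s₀ n (fun k => w k + ((n:ℝ)-k)*p k + (k:ℝ)*((n:ℝ)-k))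
        = sS ℙ I s₀ n r + sS ℙ I s₀ n (fun k => γ k + ((n:ℝ)-k)*p k + (k:ℝ)*((n:ℝ)-k)) := by
      rw [← sS_add]
      apply sS_congr
      intro k _
      simp only [hrdef]; ring
    simp only [hrdef, hedef]
    rw [h1, h2, h3]
    ring
  -- the three basic limits
  have keyL : ∀ φ : ℝ → ℝ, Continuous φ →
      Filter.Tendsto (fun n : ℕ => sS ℙ I s₀ n (fun k => φ ((k : ℝ) / (n : ℝ))))
        Filter.atTop (nhds (∫ ω, φ (V ω) ∂ℙ)) :=
    fun φ hφ => keyLimit ℙ V I b s₀ s₁ hVmeas hV01 hImeas hb hIdist φ hφ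
  have hμne : μ ≠ 0 := ne_of_gt hμpos
  have hone : ∀ n : ℕ, n₀ ≤ n → sS ℙ I s₀ n (fun _ => (1:ℝ)) = 1 :=
    fun n hn => sS_one ℙ V I b s₀ s₁ hVmeas hV01 hImeas hb hIdist hn
  -- the three limits, beta-reduced
  have t1 : Filter.Tendsto (fun n : ℕ => sS ℙ I s₀ n
      (fun k => ((k:ℝ)/n) * Real.log ((k:ℝ)/n))) atTop
      (nhds (∫ ω, V ω * Real.log (V ω) ∂ℙ)) := by
    have := keyL (fun x => x * Real.log x) Real.continuous_mul_log
    simpa using this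
  have t2 : Filter.Tendsto (fun n : ℕ => sS ℙ I s₀ n
      (fun k => ((k:ℝ)/n)^2)) atTop (nhds (∫ ω, (V ω)^2 ∂ℙ)) := by
    have := keyL (fun x => x^2) (continuous_pow 2)
    simpa using this
  have t3 : Filter.Tendsto (fun n : ℕ => sS ℙ I s₀ n
      (fun k => ((k:ℝ)/n) * (1 - (k:ℝ)/n))) atTop
      (nhds (∫ ω, V ω * (1 - V ω) ∂ℙ)) := by
    have := keyL (fun x => x * (1 - x))
      (continuous_id.mul (continuous_const.sub continuous_id))
    simpa using this
  set Bf : ℕ → ℝ := fun n =>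
      (1/μ) * ((b:ℝ) * sS ℙ I s₀ n (fun k => ((k:ℝ)/n) * Real.log ((k:ℝ)/n)))
      + c * ((b:ℝ) * sS ℙ I s₀ n (fun k => ((k:ℝ)/n)^2))
      + (cp+1) * ((b:ℝ) * sS ℙ I s₀ n (fun k => ((k:ℝ)/n) * (1 - (k:ℝ)/n)))
      - c with hBfdef
  have hBlim : Filter.Tendsto Bf atTop (nhds 0) := by
    have u1 := (t1.const_mul (b:ℝ)).const_mul (1/μ)
    have u2 := (t2.const_mul (b:ℝ)).const_mul c
    have u3 := (t3.const_mul (b:ℝ)).const_mul (cp+1)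
    have comb := ((u1.add u2).add u3).sub (tendsto_const_nhds (x := c))
    have hv : 1/μ * ((b:ℝ) * ∫ ω, V ω * Real.log (V ω) ∂ℙ)
        + c * ((b:ℝ) * ∫ ω, (V ω)^2 ∂ℙ)
        + (cp+1) * ((b:ℝ) * ∫ ω, V ω * (1 - V ω) ∂ℙ) - c = 0 := by
      have h₁ : (b:ℝ) * ∫ ω, V ω * Real.log (V ω) ∂ℙ = -μ := by rw [hμ]; ring
      have h₂ : (b:ℝ) * ∫ ω, (V ω)^2 ∂ℙ = q := by rw [hqdef]
      have h₃ : (b:ℝ) * ∫ ω, V ω * (1 - V ω) ∂ℙ = 1 - q := by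
        have hcongr : ∫ ω, V ω * (1 - V ω) ∂ℙ = ∫ ω, (V ω - (V ω)^2) ∂ℙ :=
          integral_congr_ae (ae_of_all _ (fun ω => by ring))
        rw [hcongr, integral_sub hVint hV2int, hEV, hqdef]
        have hbne : (b:ℝ) ≠ 0 := ne_of_gt hbR
        field_simp
      rw [h₁, h₂, h₃, hcdef]
      field_simp
      ring
    rw [hv] at comb
    exact comb
  -- log n / n tends to zero
  have hlog : Filter.Tendsto (fun n : ℕ => Real.log n / (n:ℝ)) atTop (nhds 0) := by
    have h := Real.isLittleO_log_id_atTop.comp_tendsto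
      (tendsto_natCast_atTop_atTop (R := ℝ))
    exact h.tendsto_div_nhds_zero
  -- global linear bound on ρ
  have hρb : ∀ ε₀ : ℝ, 0 < ε₀ → ∃ C₀ : ℝ, 0 ≤ C₀ ∧ ∀ k : ℕ, |ρ k| ≤ ε₀ * k + C₀ := by
    intro ε₀ hε₀
    obtain ⟨K, hK⟩ := eventually_atTop.mp (hp.def hε₀)
    refine ⟨∑ j ∈ Finset.range K, |ρ j|, Finset.sum_nonneg (fun j _ => abs_nonneg _), fun k => ?_⟩
    by_cases hk : k < K
    · have h1 : |ρ k| ≤ ∑ j ∈ Finset.range K, |ρ j| :=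
        Finset.single_le_sum (fun j _ => abs_nonneg (ρ j)) (Finset.mem_range.mpr hk)
      have h2 : 0 ≤ ε₀ * k := by positivity
      linarith
    · push_neg at hk
      have h1 := hK k hk
      rw [Real.norm_eq_abs, Real.norm_eq_abs] at h1
      have h2 : |(k:ℝ)| = (k:ℝ) := abs_of_nonneg (Nat.cast_nonneg k)
      rw [h2] at h1
      have h3 : 0 ≤ ∑ j ∈ Finset.range K, |ρ j| :=
        Finset.sum_nonneg (fun j _ => abs_nonneg _)
      linarith
  -- the structural identity for e
  have hiden : ∀ n : ℕ, n₀ ≤ n → 1 ≤ n →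
      e n = -((1/μ) * s₀ * (n:ℝ) * Real.log n) + (n:ℝ)^2 * Bf n
        + (b:ℝ) * sS ℙ I s₀ n (fun k => ((n:ℝ)-(k:ℝ)) * ρ k) := by
    intro n hn hn1
    have hnne : ((n:ℝ)) ≠ 0 := by
      have : (1:ℝ) ≤ (n:ℝ) := by exact_mod_cast hn1
      linarith
    have hterm : ∀ k ∈ Finset.range (n - s₀ + 1),
        γ k + ((n:ℝ)-k)*p k + (k:ℝ)*((n:ℝ)-k)
        = ((1/μ)*(n:ℝ)*Real.log n) * (k:ℝ)
          + (n:ℝ)^2 * ((1/μ)*(((k:ℝ)/n) * Real.log ((k:ℝ)/n)) + c*(((k:ℝ)/n)^2)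
              + (cp+1)*(((k:ℝ)/n)*(1-(k:ℝ)/n)))
          + ((n:ℝ)-(k:ℝ))*ρ k := by
      intro k _
      have hpk : p k = (1/μ)*(k:ℝ)*Real.log k + cp*(k:ℝ) + ρ k := by
        simp only [hρdef]; ring
      rcases Nat.eq_zero_or_pos k with hk0 | hkpos
      · subst hk0
        simp only [hγdef, Nat.cast_zero, zero_div, Real.log_zero, hpk]
        ring
      · have hkne : ((k:ℝ)) ≠ 0 := by
          have : (0:ℝ) < (k:ℝ) := by exact_mod_cast hkpos
          linarith
        have hlogdiv : Real.log ((k:ℝ)/n) = Real.log k - Real.log n :=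
          Real.log_div hkne hnne
        simp only [hγdef, hpk, hlogdiv]
        field_simp
        ring
    have hcongr := sS_congr ℙ I s₀ n hterm
    have hadd1 := sS_add ℙ I s₀ n
      (fun k => ((1/μ)*(n:ℝ)*Real.log n) * (k:ℝ)
        + (n:ℝ)^2 * ((1/μ)*(((k:ℝ)/n) * Real.log ((k:ℝ)/n)) + c*(((k:ℝ)/n)^2)
            + (cp+1)*(((k:ℝ)/n)*(1-(k:ℝ)/n))))
      (fun k => ((n:ℝ)-(k:ℝ))*ρ k)
    have hadd2 := sS_add ℙ I s₀ n
      (fun k => ((1/μ)*(n:ℝ)*Real.log n) * (k:ℝ))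
      (fun k => (n:ℝ)^2 * ((1/μ)*(((k:ℝ)/n) * Real.log ((k:ℝ)/n)) + c*(((k:ℝ)/n)^2)
            + (cp+1)*(((k:ℝ)/n)*(1-(k:ℝ)/n))))
    have hs3 := sS_smul ℙ I s₀ n ((1/μ)*(n:ℝ)*Real.log n) (fun k => (k:ℝ))
    have hs4 := sS_smul ℙ I s₀ n ((n:ℝ)^2)
      (fun k => (1/μ)*(((k:ℝ)/n) * Real.log ((k:ℝ)/n)) + c*(((k:ℝ)/n)^2)
            + (cp+1)*(((k:ℝ)/n)*(1-(k:ℝ)/n)))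
    have hadd3 := sS_add ℙ I s₀ n
      (fun k => (1/μ)*(((k:ℝ)/n) * Real.log ((k:ℝ)/n)) + c*(((k:ℝ)/n)^2))
      (fun k => (cp+1)*(((k:ℝ)/n)*(1-(k:ℝ)/n)))
    have hadd4 := sS_add ℙ I s₀ n
      (fun k => (1/μ)*(((k:ℝ)/n) * Real.log ((k:ℝ)/n)))
      (fun k => c*(((k:ℝ)/n)^2))
    have hs5 := sS_smul ℙ I s₀ n (1/μ) (fun k => ((k:ℝ)/n) * Real.log ((k:ℝ)/n))
    have hs6 := sS_smul ℙ I s₀ n c (fun k => ((k:ℝ)/n)^2)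
    have hs7 := sS_smul ℙ I s₀ n (cp+1) (fun k => ((k:ℝ)/n)*(1-(k:ℝ)/n))
    have hid := sS_id ℙ V I b s₀ s₁ hVmeas hV01 hImeas hb hIdist hn hEV
    simp only [hedef, hBfdef, hγdef]
    rw [hcongr, hadd1, hadd2, hs3, hs4, hadd3, hadd4, hs5, hs6, hs7, hid]
    have hbne : (b:ℝ) ≠ 0 := ne_of_gt hbR
    field_simp
    ring
  -- error term estimate
  have heE : ∀ ε : ℝ, 0 < ε → ∀ᶠ n : ℕ in atTop, |e n| ≤ ε * (n:ℝ)^2 := by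
    intro ε hε
    obtain ⟨C₀, hC₀0, hC₀⟩ := hρb (ε/4) (by positivity)
    have hs₀R : (1:ℝ) ≤ (s₀:ℝ) := by exact_mod_cast hs₀
    set ε₂ : ℝ := ε * μ / (4 * s₀) with hε₂
    have hε₂0 : 0 < ε₂ := by positivity
    have ev1 := hBlim.eventually (eventually_le_nhds (show (0:ℝ) < ε/4 by positivity))
    have ev1' : ∀ᶠ n : ℕ in atTop, |Bf n| ≤ ε/4 := by
      have := NormedAddCommGroup.tendsto_nhds_zero.mp hBlim (ε/4) (by positivity)
      filter_upwards [this] with n hn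
      exact le_of_lt (by simpa [Real.norm_eq_abs] using hn)
    have ev2 : ∀ᶠ n : ℕ in atTop, |Real.log n| / (n:ℝ) ≤ ε₂ := by
      have := NormedAddCommGroup.tendsto_nhds_zero.mp hlog ε₂ hε₂0
      filter_upwards [this] with n hn
      exact le_of_lt (by simpa [Real.norm_eq_abs, abs_div] using hn)
    have ev3 : ∀ᶠ n : ℕ in atTop, (4 * (b:ℝ) * C₀)/ε ≤ (n:ℝ) :=
      (tendsto_natCast_atTop_atTop (R := ℝ)).eventually_ge_atTop _
    filter_upwards [ev1', ev2, ev3, eventually_ge_atTop (max n₀ 1)] with n h1 h2 h3 h4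
    have hnn₀ : n₀ ≤ n := le_trans (le_max_left _ _) h4
    have hn1 : 1 ≤ n := le_trans (le_max_right _ _) h4
    have hn1R : (1:ℝ) ≤ (n:ℝ) := by exact_mod_cast hn1
    have hnpos : (0:ℝ) < (n:ℝ) := by linarith
    rw [hiden n hnn₀ hn1]
    -- bound the three pieces
    have hlogn : |Real.log n| ≤ ε₂ * n := by
      rw [div_le_iff₀ hnpos] at h2
      linarith
    have hp1 : |-((1/μ) * s₀ * (n:ℝ) * Real.log n)| ≤ ε/4 * (n:ℝ)^2 := by
      rw [abs_neg]
      have : |(1/μ) * s₀ * (n:ℝ) * Real.log n|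
          = (1/μ) * s₀ * (n:ℝ) * |Real.log n| := by
        rw [abs_mul]
        congr 1
        rw [abs_of_nonneg]
        positivity
      rw [this]
      calc (1/μ) * s₀ * (n:ℝ) * |Real.log n| ≤ (1/μ) * s₀ * (n:ℝ) * (ε₂ * n) := by
            apply mul_le_mul_of_nonneg_left hlogn (by positivity)
        _ = ε/4 * (n:ℝ)^2 := by
            rw [hε₂]
            have hs₀ne : ((s₀:ℝ)) ≠ 0 := by linarith
            field_simp
    have hp2 : |(n:ℝ)^2 * Bf n| ≤ ε/4 * (n:ℝ)^2 := by
      rw [abs_mul, abs_of_nonneg (by positivity : (0:ℝ) ≤ (n:ℝ)^2)]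
      calc (n:ℝ)^2 * |Bf n| ≤ (n:ℝ)^2 * (ε/4) := mul_le_mul_of_nonneg_left h1 (by positivity)
        _ = ε/4 * (n:ℝ)^2 := by ring
    have hp3 : |(b:ℝ) * sS ℙ I s₀ n (fun k => ((n:ℝ)-(k:ℝ)) * ρ k)|
        ≤ ε/4 * (n:ℝ)^2 + ε/4 * (n:ℝ)^2 := by
      have habs : |sS ℙ I s₀ n (fun k => ((n:ℝ)-(k:ℝ)) * ρ k)|
          ≤ sS ℙ I s₀ n (fun k => |((n:ℝ)-(k:ℝ)) * ρ k|) := sS_abs ℙ I s₀ n _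
      have hterm2 : ∀ k ∈ Finset.range (n - s₀ + 1),
          |((n:ℝ)-(k:ℝ)) * ρ k| ≤ (n:ℝ) * ((ε/4) * (k:ℝ) + C₀ * 1) := by
        intro k hk
        have hkn : k ≤ n := by
          have := Finset.mem_range.mp hk; omega
        have hknR : ((k:ℝ)) ≤ (n:ℝ) := by exact_mod_cast hkn
        rw [abs_mul, abs_of_nonneg (by linarith : (0:ℝ) ≤ (n:ℝ)-(k:ℝ)), mul_one]
        calc ((n:ℝ)-(k:ℝ)) * |ρ k| ≤ (n:ℝ) * |ρ k| := by
              apply mul_le_mul_of_nonneg_right _ (abs_nonneg _)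
              linarith [Nat.cast_nonneg (α := ℝ) k]
          _ ≤ (n:ℝ) * ((ε/4) * (k:ℝ) + C₀) := mul_le_mul_of_nonneg_left (hC₀ k) (by linarith)
      have hmono := sS_mono ℙ I s₀ n hterm2
      have hsplit : sS ℙ I s₀ n (fun k => (n:ℝ) * ((ε/4) * (k:ℝ) + C₀ * 1))
          = (n:ℝ) * ((ε/4) * sS ℙ I s₀ n (fun k => (k:ℝ))
            + C₀ * sS ℙ I s₀ n (fun _ => (1:ℝ))) := by
        rw [sS_smul, sS_add, sS_smul, sS_smul]
      have hid2 := sS_id ℙ V I b s₀ s₁ hVmeas hV01 hImeas hb hIdist hnn₀ hEV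
      have hone2 := hone n hnn₀
      rw [hid2, hone2] at hsplit
      have hbound2 : sS ℙ I s₀ n (fun k => |((n:ℝ)-(k:ℝ)) * ρ k|)
          ≤ (n:ℝ) * ((ε/4) * (((n:ℝ) - s₀)/b) + C₀) := by
        simp only [mul_one] at hmono hsplit
        exact le_trans hmono (le_of_eq hsplit)
      have hs₀0 : (0:ℝ) ≤ (s₀:ℝ) := by linarith
      have hns₀ : (0:ℝ) ≤ ((n:ℝ) - s₀)/b := by
        apply div_nonneg _ (le_of_lt hbR)
        have : (s₀:ℝ) ≤ (n:ℝ) := by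
          have : s₀ ≤ n := by omega
          exact_mod_cast this
        linarith
      rw [abs_mul, abs_of_pos hbR]
      calc (b:ℝ) * |sS ℙ I s₀ n (fun k => ((n:ℝ)-(k:ℝ)) * ρ k)|
          ≤ (b:ℝ) * ((n:ℝ) * ((ε/4) * (((n:ℝ) - s₀)/b) + C₀)) := by
            apply mul_le_mul_of_nonneg_left (le_trans habs hbound2) (le_of_lt hbR)
        _ = (ε/4) * ((n:ℝ) * ((n:ℝ) - s₀)) + (b:ℝ) * C₀ * (n:ℝ) := by
            field_simp
        _ ≤ ε/4 * (n:ℝ)^2 + ε/4 * (n:ℝ)^2 := by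
            have hA : (ε/4) * ((n:ℝ)*((n:ℝ)-s₀)) ≤ ε/4 * (n:ℝ)^2 := by
              nlinarith [mul_nonneg (mul_nonneg hε.le hnpos.le) hs₀0]
            have hB : (b:ℝ)*C₀*(n:ℝ) ≤ ε/4 * (n:ℝ)^2 := by
              rw [div_le_iff₀ hε] at h3
              nlinarith
            exact add_le_add hA hB
    refine le_trans (abs_add_le _ _) (le_trans (add_le_add_left (abs_add_le _ _) _) ?_)
    linarith
  -- second moment bound
  have hsq : ∀ᶠ n : ℕ in atTop, (b:ℝ) * sS ℙ I s₀ n (fun k => (k:ℝ)^2) ≤ θ * (n:ℝ)^2 := by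
    have hFlim : Filter.Tendsto (fun n : ℕ => (b:ℝ) * sS ℙ I s₀ n (fun k => ((k:ℝ)/n)^2))
        atTop (nhds q) := by
      have h := (keyL (fun x => x^2) (continuous_pow 2)).const_mul (b:ℝ)
      simpa [hqdef, mul_comm] using h
    filter_upwards [hFlim.eventually (eventually_le_nhds hθq), eventually_ge_atTop 1]
      with n hF hn1
    have hnne : ((n:ℝ)) ≠ 0 := by
      have : (1:ℝ) ≤ (n:ℝ) := by exact_mod_cast hn1
      linarith
    have hiden : sS ℙ I s₀ n (fun k => (k:ℝ)^2)
        = (n:ℝ)^2 * sS ℙ I s₀ n (fun k => ((k:ℝ)/n)^2) := by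
      rw [← sS_smul]
      apply sS_congr
      intro k _
      field_simp
    calc (b:ℝ) * sS ℙ I s₀ n (fun k => (k:ℝ)^2)
        = (n:ℝ)^2 * ((b:ℝ) * sS ℙ I s₀ n (fun k => ((k:ℝ)/n)^2)) := by rw [hiden]; ring
      _ ≤ (n:ℝ)^2 * θ := mul_le_mul_of_nonneg_left hF (by positivity)
      _ = θ * (n:ℝ)^2 := by ring
  -- global quadratic a priori bound
  -- a common estimation step
  have hstep : ∀ a D₁ : ℝ, 0 ≤ a → 0 ≤ D₁ → ∀ n : ℕ, max (max nstar n₀) 1 ≤ n →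
      (∀ k ∈ Finset.range (n - s₀ + 1), |r k| ≤ a * (k:ℝ)^2 + D₁) →
      ((b:ℝ) * sS ℙ I s₀ n (fun k => (k:ℝ)^2) ≤ θ * (n:ℝ)^2) →
      |(b:ℝ) * sS ℙ I s₀ n r| ≤ a * θ * (n:ℝ)^2 + (b:ℝ) * D₁ := by
    intro a D₁ ha0 hD₁0 n hn hbnd hsqn
    have habs : |sS ℙ I s₀ n r| ≤ sS ℙ I s₀ n (fun k => |r k|) := sS_abs ℙ I s₀ n r
    have hmono : sS ℙ I s₀ n (fun k => |r k|)
        ≤ sS ℙ I s₀ n (fun k => a * (k:ℝ)^2 + D₁ * 1) := by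
      apply sS_mono
      intro k hk
      simpa using hbnd k hk
    have hsplit : sS ℙ I s₀ n (fun k => a * (k:ℝ)^2 + D₁ * 1)
        = a * sS ℙ I s₀ n (fun k => (k:ℝ)^2) + D₁ * sS ℙ I s₀ n (fun _ => (1:ℝ)) := by
      rw [sS_add, sS_smul, sS_smul]
    have h1 : sS ℙ I s₀ n (fun _ => (1:ℝ)) = 1 := hone n (by omega)
    have h2 : |(b:ℝ) * sS ℙ I s₀ n r| = (b:ℝ) * |sS ℙ I s₀ n r| := by
      rw [abs_mul, abs_of_pos hbR]
    rw [h2]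
    have h3 : (b:ℝ) * |sS ℙ I s₀ n r|
        ≤ (b:ℝ) * (a * sS ℙ I s₀ n (fun k => (k:ℝ)^2) + D₁) := by
      apply mul_le_mul_of_nonneg_left _ (le_of_lt hbR)
      rw [h1, mul_one] at hsplit
      simp only [mul_one] at hmono
      linarith [le_trans habs hmono, hsplit]
    have h4 : a * ((b:ℝ) * sS ℙ I s₀ n (fun k => (k:ℝ)^2)) ≤ a * (θ * (n:ℝ)^2) :=
      mul_le_mul_of_nonneg_left hsqn ha0
    nlinarith [h3, h4]
  have hquad : ∃ C D : ℝ, 0 ≤ C ∧ 0 ≤ D ∧ ∀ n : ℕ, |r n| ≤ C * (n:ℝ)^2 + D := by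
    obtain ⟨N₁, hN₁⟩ := eventually_atTop.mp (heE 1 (by norm_num))
    obtain ⟨N₂, hN₂⟩ := eventually_atTop.mp hsq
    set N := max (max N₁ N₂) (max (max nstar n₀) 1) + 1 with hN
    set D := ∑ k ∈ Finset.range N, |r k| with hD
    have hD0 : 0 ≤ D := Finset.sum_nonneg (fun k _ => abs_nonneg _)
    set C := (1 + D * b)/(1 - θ) with hC
    have hC0 : 0 ≤ C := by
      apply div_nonneg _ (le_of_lt h1θ)
      positivity
    refine ⟨C, D, hC0, hD0, ?_⟩
    intro n
    induction n using Nat.strong_induction_on with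
    | _ n ih =>
      by_cases hn : n < N
      · have hmem : |r n| ≤ D :=
          Finset.single_le_sum (fun k _ => abs_nonneg (r k)) (Finset.mem_range.mpr hn)
        have : 0 ≤ C * (n:ℝ)^2 := by positivity
        linarith
      · push_neg at hn
        have hnN : (1:ℝ) ≤ (n:ℝ) := by
          have : 1 ≤ n := by omega
          exact_mod_cast this
        have hbnd : ∀ k ∈ Finset.range (n - s₀ + 1), |r k| ≤ C * (k:ℝ)^2 + D := by
          intro k hk
          apply ih
          have := Finset.mem_range.mp hk
          omega
        have hS := hstep C D hC0 hD0 n (by omega) hbnd (hN₂ n (by omega))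
        have hE := hN₁ n (by omega)
        have hr := hrecr n (by omega)
        have h5 : |r n| ≤ C * θ * (n:ℝ)^2 + (b:ℝ)*D + 1 * (n:ℝ)^2 := by
          rw [hr]
          refine le_trans (abs_add_le _ _) ?_
          linarith
        have hCθ : C * (1 - θ) = 1 + D * b := by
          rw [hC]; field_simp
        have hbb : (2:ℝ) ≤ (b:ℝ) := by exact_mod_cast hb
        have hn2 : (1:ℝ) ≤ (n:ℝ)^2 := by nlinarith
        nlinarith [mul_nonneg hD0 (sub_nonneg.mpr hbb), hCθ, h5,
          mul_le_mul_of_nonneg_left hn2 hD0]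
  -- improvement step
  have himp : ∀ a D₁ : ℝ, 0 ≤ a → 0 ≤ D₁ → (∀ n : ℕ, |r n| ≤ a * (n:ℝ)^2 + D₁) →
      ∀ ε : ℝ, 0 < ε → ∃ D₂ : ℝ, 0 ≤ D₂ ∧ ∀ n : ℕ, |r n| ≤ (a*θ + ε) * (n:ℝ)^2 + D₂ := by
    intro a D₁ ha0 hD₁0 hbound ε hε
    obtain ⟨N₁, hN₁⟩ := eventually_atTop.mp (heE ε hε)
    obtain ⟨N₂, hN₂⟩ := eventually_atTop.mp hsq
    set N := max (max N₁ N₂) (max (max nstar n₀) 1) + 1 with hN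
    refine ⟨(b:ℝ)*D₁ + ∑ k ∈ Finset.range N, |r k|, by positivity, fun n => ?_⟩
    by_cases hn : n < N
    · have hmem : |r n| ≤ ∑ k ∈ Finset.range N, |r k| :=
        Finset.single_le_sum (fun k _ => abs_nonneg (r k)) (Finset.mem_range.mpr hn)
      have h1 : 0 ≤ (a*θ + ε) * (n:ℝ)^2 := by positivity
      have h2 : 0 ≤ (b:ℝ)*D₁ := by positivity
      linarith
    · push_neg at hn
      have hS := hstep a D₁ ha0 hD₁0 n (by omega)
        (fun k _ => hbound k) (hN₂ n (by omega))
      have hE := hN₁ n (by omega)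
      have hr := hrecr n (by omega)
      have h5 : |r n| ≤ a * θ * (n:ℝ)^2 + (b:ℝ)*D₁ + ε * (n:ℝ)^2 := by
        rw [hr]
        refine le_trans (abs_add_le _ _) ?_
        linarith
      have h6 : 0 ≤ ∑ k ∈ Finset.range N, |r k| :=
        Finset.sum_nonneg (fun k _ => abs_nonneg _)
      linarith
  -- iterate
  obtain ⟨C, D, hC0, hD0, hCD⟩ := hquad
  have hiter : ∀ ε : ℝ, 0 < ε → ∀ m : ℕ, ∃ a D' : ℝ, 0 ≤ a ∧ 0 ≤ D' ∧
      a ≤ θ^m * C + ε/(1-θ) ∧ ∀ n : ℕ, |r n| ≤ a * (n:ℝ)^2 + D' := by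
    intro ε hε
    intro m
    induction m with
    | zero =>
      exact ⟨C, D, hC0, hD0, by simp; positivity, hCD⟩
    | succ m ih =>
      obtain ⟨a, D', ha0, hD'0, ham, hbound⟩ := ih
      obtain ⟨D₂, hD₂0, hbound₂⟩ := himp a D' ha0 hD'0 hbound ε hε
      refine ⟨a*θ + ε, D₂, by positivity, hD₂0, ?_, hbound₂⟩
      calc a*θ + ε ≤ (θ^m * C + ε/(1-θ))*θ + ε := by nlinarith
        _ = θ^(m+1) * C + (ε*θ/(1-θ) + ε) := by ring
        _ = θ^(m+1) * C + ε/(1-θ) := by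
            congr 1
            field_simp
            ring
  -- conclude littleo
  refine ⟨c, ?_⟩
  have hre : ∀ n : ℕ, w n - (1 / μ) * (n : ℝ) ^ 2 * Real.log n - c * (n : ℝ) ^ 2 = r n := by
    intro n; simp only [hrdef, hγdef]; ring
  rw [Asymptotics.isLittleO_iff]
  intro ε hε
  have hε4 : 0 < ε * (1-θ) / 4 := by positivity
  -- choose m with θ^m * C ≤ ε/4
  have hpow : Filter.Tendsto (fun m : ℕ => θ^m * C) atTop (nhds 0) := by
    have := tendsto_pow_atTop_nhds_zero_of_lt_one hθ0 hθ1
    simpa using this.mul_const C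
  obtain ⟨m, hm⟩ := (hpow.eventually (eventually_le_nhds (show (0:ℝ) < ε/4 by positivity))).exists
  obtain ⟨a, D', ha0, hD'0, ham, hbound⟩ := hiter (ε * (1-θ) / 4) hε4 m
  have ha : a ≤ ε/2 := by
    have h2 : ε * (1-θ) / 4 / (1-θ) = ε/4 := by field_simp
    calc a ≤ θ^m * C + ε * (1-θ) / 4 / (1-θ) := ham
      _ ≤ ε/4 + ε/4 := by rw [h2]; exact add_le_add_left hm _
      _ = ε/2 := by ring
  set K := Nat.ceil (2*D'/ε) with hK
  filter_upwards [eventually_ge_atTop (max 1 K)] with n hn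
  have hn1 : 1 ≤ n := le_trans (le_max_left _ _) hn
  have hnK : K ≤ n := le_trans (le_max_right _ _) hn
  have h1 : 2*D'/ε ≤ (K:ℝ) := Nat.le_ceil _
  have h2 : (K:ℝ) ≤ (n:ℝ) := by exact_mod_cast hnK
  have hn1R : (1:ℝ) ≤ (n:ℝ) := by exact_mod_cast hn1
  have h3 : (n:ℝ) ≤ (n:ℝ)^2 := by nlinarith
  have hD' : D' ≤ ε/2 * (n:ℝ)^2 := by
    have : 2*D'/ε ≤ (n:ℝ)^2 := by linarith
    rw [div_le_iff₀ hε] at this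
    linarith
  have hfin : |r n| ≤ ε * (n:ℝ)^2 := by
    have := hbound n
    have haa : a * (n:ℝ)^2 ≤ ε/2 * (n:ℝ)^2 :=
      mul_le_mul_of_nonneg_right ha (by positivity)
    linarith
  rw [hre n, Real.norm_eq_abs, Real.norm_eq_abs, abs_of_nonneg (by positivity : (0:ℝ) ≤ (n:ℝ)^2)]
  exact hfin
end

section
/- Let X, X^(1), …, X^(b) be i.i.d. real random variables with E[X] = 0 and E[X²] < ∞, independent of (V_1, …, V_b), such that X has the same distribution as Σ_{k=1}^b V_k·X^(k) + 1 + (1/μ)·Σ_{k=1}^b V_k·log V_k. Then E[X²] = ((1/μ²)·E[(Σ_{k=1}^b V_k·log V_k)²] − 1)·(1 − Σ_{k=1}^b E[V_k²])^{−1}. -/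
open MeasureTheory Filter Topology Asymptotics

lemma aux_pi_map_eval {b : ℕ} (ν : Measure ℝ) [IsProbabilityMeasure ν] (j : Fin b) :
    (Measure.pi fun _ : Fin b => ν).map (Function.eval j) = ν := by
  ext s hs
  rw [Measure.map_apply (measurable_pi_apply j) hs, Set.eval_preimage, Measure.pi_pi]
  rw [Finset.prod_eq_single_of_mem j (Finset.mem_univ j)]
  · simp
  · intro i _ hij
    simp [Function.update_of_ne hij]

lemma aux_pi_integral_single {b : ℕ} (ν : Measure ℝ) [IsProbabilityMeasure ν]
    (g : ℝ → ℝ) (hg : Measurable g) (j : Fin b) :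
    ∫ x : Fin b → ℝ, g (x j) ∂(Measure.pi fun _ : Fin b => ν) = ∫ t, g t ∂ν := by
  have hmap := aux_pi_map_eval (b := b) ν j
  rw [show (∫ x : Fin b → ℝ, g (x j) ∂(Measure.pi fun _ : Fin b => ν))
      = ∫ t, g t ∂((Measure.pi fun _ : Fin b => ν).map (Function.eval j)) from
      (integral_map (φ := Function.eval j) (f := g) (measurable_pi_apply j).aemeasurable
        (by rw [hmap]; exact hg.aestronglyMeasurable)).symm, hmap]

lemma aux_pi_integrable_single {b : ℕ} (ν : Measure ℝ) [IsProbabilityMeasure ν]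
    (g : ℝ → ℝ) (hg : Measurable g) (hgi : Integrable g ν) (j : Fin b) :
    Integrable (fun x : Fin b → ℝ => g (x j)) (Measure.pi fun _ : Fin b => ν) := by
  have hmap := aux_pi_map_eval (b := b) ν j
  have h := integrable_map_measure (f := Function.eval j) (g := g)
      (μ := Measure.pi fun _ : Fin b => ν)
      (by rw [hmap]; exact hg.aestronglyMeasurable)
      (measurable_pi_apply j).aemeasurable
  rw [hmap] at h
  exact h.mp hgi

lemma aux_pi_integral_mul {b : ℕ} (ν : Measure ℝ) [IsProbabilityMeasure ν]
    (g h : ℝ → ℝ) {j k : Fin b} (hjk : j ≠ k) :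
    ∫ x : Fin b → ℝ, g (x j) * h (x k) ∂(Measure.pi fun _ : Fin b => ν)
      = (∫ t, g t ∂ν) * (∫ t, h t ∂ν) := by
  letI : MeasureSpace ℝ := ⟨ν⟩
  have hvol : (volume : Measure (Fin b → ℝ)) = Measure.pi fun _ : Fin b => ν := by
    rw [volume_pi]; rfl
  rw [← hvol]
  haveI : ∀ i : Fin b, SigmaFinite (volume : Measure ℝ) := fun _ => inferInstance
  classical
  have key : ∀ x : Fin b → ℝ,
      g (x j) * h (x k) = ∏ i, (fun i t => if i = j then g t else if i = k then h t else 1) i (x i) := by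
    intro x
    rw [Finset.prod_eq_mul_of_mem j k (Finset.mem_univ j) (Finset.mem_univ k) hjk]
    · simp [hjk.symm]
    · intro c _ hc
      simp [hc.1, hc.2]
  calc ∫ x : Fin b → ℝ, g (x j) * h (x k)
      = ∫ x : Fin b → ℝ, ∏ i, (fun i t => if i = j then g t else if i = k then h t else 1) i (x i) := by
        simp_rw [key]
    _ = ∏ i, ∫ t, (fun i t => if i = j then g t else if i = k then h t else 1) i t := by
        exact MeasureTheory.integral_fintype_prod_eq_prod (ι := Fin b) (E := fun _ => ℝ)
          (f := fun i t => if i = j then g t else if i = k then h t else 1)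
    _ = (∫ t, g t ∂ν) * (∫ t, h t ∂ν) := by
        rw [Finset.prod_eq_mul_of_mem j k (Finset.mem_univ j) (Finset.mem_univ k) hjk]
        · simp [hjk.symm]; rfl
        · intro c _ hc
          simp [hc.1, hc.2]

lemma aux_mul_log_bound {t : ℝ} (h0 : 0 ≤ t) (h1 : t ≤ 1) : |t * Real.log t| ≤ 1 := by
  rcases eq_or_lt_of_le h0 with h | h
  · simp [← h]
  · have hlog : Real.log t ≤ 0 := Real.log_nonpos (le_of_lt h) h1
    rw [abs_of_nonpos (mul_nonpos_of_nonneg_of_nonpos h0 hlog)]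
    have hle : Real.log t⁻¹ ≤ t⁻¹ - 1 := Real.log_le_sub_one_of_pos (by positivity)
    have h2 := mul_le_mul_of_nonneg_left hle h0
    have ht : t * t⁻¹ = 1 := mul_inv_cancel₀ (ne_of_gt h)
    have h3 : Real.log t⁻¹ = -Real.log t := Real.log_inv t
    nlinarith

set_option maxHeartbeats 1000000 in
/-- If `X, X⁽¹⁾, …, X⁽ᵇ⁾` are i.i.d. centered square-integrable random
variables, independent of `(V_1, …, V_b)` (expressed by the joint law of
`((X⁽¹⁾, …, X⁽ᵇ⁾), V)` being the product `law(X)^⊗b ⊗ law(V)`), such that `X` has the same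
distribution as `Σ_k V_k·X⁽ᵏ⁾ + 1 + (1/μ)·Σ_k V_k·log V_k`, then
`E[X²] = ((1/μ²)·E[(Σ_k V_k·log V_k)²] − 1)·(1 − Σ_k E[V_k²])⁻¹`. -/
theorem stmt3
    (b : ℕ) (hb : 2 ≤ b)
    {Ω : Type*} [MeasurableSpace Ω] (ℙ : Measure Ω) [IsProbabilityMeasure ℙ]
    (V : Ω → Fin b → ℝ) (hVmeas : Measurable V)
    (hV01 : ∀ ω i, V ω i ∈ Set.Icc (0:ℝ) 1)
    (hVsum : ∀ ω, ∑ i, V ω i = 1)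
    (hVid : ∀ i : Fin b, ℙ.map (fun ω => V ω i) = ℙ.map (fun ω => V ω ⟨0, by omega⟩))
    (hVdens : ℙ.map (fun ω => V ω ⟨0, by omega⟩) ≪ (volume : Measure ℝ))
    (hVtail : ∀ x : ℝ, x < 1 → ℙ {ω | V ω ⟨0, by omega⟩ ≤ x} < 1)
    (μ : ℝ) (hμ : μ = -(b : ℝ) * ∫ ω, V ω ⟨0, by omega⟩ * Real.log (V ω ⟨0, by omega⟩) ∂ℙ)
    (hμpos : 0 < μ)
    (X : Ω → ℝ) (hXmeas : Measurable X)
    (Xs : Fin b → Ω → ℝ) (hXsmeas : ∀ i, Measurable (Xs i))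
    (hXmean : (∫ ω, X ω ∂ℙ) = 0)
    (hXsq : Integrable (fun ω => X ω ^ 2) ℙ)
    (hjoint : ℙ.map (fun ω => ((fun i => Xs i ω), V ω))
        = (Measure.pi fun _ : Fin b => ℙ.map X).prod (ℙ.map V))
    (hfix : ℙ.map (fun ω =>
        (∑ k, V ω k * Xs k ω) + 1 + (1 / μ) * ∑ k, V ω k * Real.log (V ω k))
      = ℙ.map X) :
    (∫ ω, X ω ^ 2 ∂ℙ)
      = ((1 / μ ^ 2) * (∫ ω, (∑ k, V ω k * Real.log (V ω k)) ^ 2 ∂ℙ) - 1)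
          * (1 - ∑ k, ∫ ω, V ω k ^ 2 ∂ℙ)⁻¹ := by
  classical
  have hμne : μ ≠ 0 := ne_of_gt hμpos
  set ν : Measure ℝ := ℙ.map X with hν
  set ρ : Measure (Fin b → ℝ) := ℙ.map V with hρ
  set π : Measure (Fin b → ℝ) := Measure.pi fun _ : Fin b => ν with hπ
  haveI : IsProbabilityMeasure ν := Measure.isProbabilityMeasure_map hXmeas.aemeasurable
  haveI : IsProbabilityMeasure ρ := Measure.isProbabilityMeasure_map hVmeas.aemeasurable
  haveI : IsProbabilityMeasure π := by rw [hπ]; infer_instance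
  set i0 : Fin b := ⟨0, by omega⟩ with hi0
  have hVk : ∀ k : Fin b, Measurable fun ω => V ω k :=
    fun k => (measurable_pi_apply k).comp hVmeas
  set σ2 := ∫ ω, X ω ^ 2 ∂ℙ with hσ2
  -- basic integrals over ν
  have ht2meas : Measurable fun t : ℝ => t ^ 2 := measurable_id.pow_const 2
  have hIt2 : Integrable (fun t : ℝ => t ^ 2) ν := by
    rw [hν]
    exact (integrable_map_measure ht2meas.aestronglyMeasurable hXmeas.aemeasurable).mpr hXsq
  have hνt2 : ∫ t, t ^ 2 ∂ν = σ2 := by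
    rw [hν, integral_map hXmeas.aemeasurable ht2meas.aestronglyMeasurable]
  have hIt1 : Integrable (fun t : ℝ => t) ν := by
    refine (hIt2.add (integrable_const 1)).mono' measurable_id.aestronglyMeasurable ?_
    refine ae_of_all _ fun t => ?_
    simp only [Pi.add_apply, Real.norm_eq_abs]
    nlinarith [sq_abs t, abs_nonneg t, sq_nonneg (|t| - 1)]
  have hνt1 : ∫ t, t ∂ν = 0 := by
    rw [hν, integral_map (f := fun t : ℝ => t) hXmeas.aemeasurable
      measurable_id.aestronglyMeasurable]
    exact hXmean
  -- integrals over π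
  have hIxsq : ∀ j : Fin b, Integrable (fun x : Fin b → ℝ => x j ^ 2) π := by
    intro j; rw [hπ]; exact aux_pi_integrable_single ν _ ht2meas hIt2 j
  have hIx1 : ∀ j : Fin b, Integrable (fun x : Fin b → ℝ => x j) π := by
    intro j; rw [hπ]; exact aux_pi_integrable_single ν (fun t => t) measurable_id hIt1 j
  have hIxmul : ∀ j k : Fin b, Integrable (fun x : Fin b → ℝ => x j * x k) π := by
    intro j k
    refine ((hIxsq j).add (hIxsq k)).mono'
      ((measurable_pi_apply j).mul (measurable_pi_apply k)).aestronglyMeasurable ?_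
    refine ae_of_all _ fun x => ?_
    simp only [Pi.add_apply, Real.norm_eq_abs, abs_mul]
    nlinarith [sq_nonneg (|x j| - |x k|), abs_nonneg (x j), abs_nonneg (x k),
      sq_abs (x j), sq_abs (x k)]
  have hπmul : ∀ j k : Fin b, ∫ x, x j * x k ∂π = if j = k then σ2 else 0 := by
    intro j k
    by_cases h : j = k
    · subst h
      simp only [if_true]
      calc ∫ x, x j * x j ∂π = ∫ x : Fin b → ℝ, (x j) ^ 2 ∂π := by
            congr 1; funext x; ring
        _ = ∫ t, t ^ 2 ∂ν := by rw [hπ]; exact aux_pi_integral_single ν _ ht2meas j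
        _ = σ2 := hνt2
    · simp only [if_neg h]
      calc ∫ x, x j * x k ∂π
          = (∫ t, (fun s : ℝ => s) t ∂ν) * (∫ t, (fun s : ℝ => s) t ∂ν) := by
            rw [hπ]; exact aux_pi_integral_mul ν (fun s => s) (fun s => s) h
        _ = 0 := by rw [hνt1]; ring
  have hπ1 : ∀ j : Fin b, ∫ x, x j ∂π = 0 := by
    intro j
    rw [hπ]
    exact (aux_pi_integral_single ν (fun t => t) measurable_id j).trans hνt1
  -- a.e. bounds on ρ
  have hmeasS : MeasurableSet {v : Fin b → ℝ | ∀ k, v k ∈ Set.Icc (0:ℝ) 1} := by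
    rw [show {v : Fin b → ℝ | ∀ k, v k ∈ Set.Icc (0:ℝ) 1}
        = Set.pi Set.univ (fun _ => Set.Icc (0:ℝ) 1) by ext v; simp [Set.mem_pi, Pi.le_def, forall_and]]
    exact MeasurableSet.univ_pi fun _ => measurableSet_Icc
  have hρsupp : ∀ᵐ v ∂ρ, ∀ k, v k ∈ Set.Icc (0:ℝ) 1 := by
    rw [hρ, ae_map_iff hVmeas.aemeasurable hmeasS]
    exact ae_of_all _ fun ω k => hV01 ω k
  set Lv : (Fin b → ℝ) → ℝ := fun v => ∑ k, v k * Real.log (v k) with hLv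
  set Cv : (Fin b → ℝ) → ℝ := fun v => 1 + (1 / μ) * Lv v with hCv
  have hLmeas : Measurable Lv := Finset.measurable_sum _ fun k _ =>
    (measurable_pi_apply k).mul (Real.measurable_log.comp (measurable_pi_apply k))
  have hCmeas : Measurable Cv := measurable_const.add (measurable_const.mul hLmeas)
  have hLbound : ∀ v : Fin b → ℝ, (∀ k, v k ∈ Set.Icc (0:ℝ) 1) → |Lv v| ≤ b := by
    intro v hv
    calc |Lv v| ≤ ∑ k, |v k * Real.log (v k)| := Finset.abs_sum_le_sum_abs _ _
      _ ≤ ∑ _k : Fin b, (1:ℝ) :=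
          Finset.sum_le_sum fun k _ => aux_mul_log_bound (hv k).1 (hv k).2
      _ = b := by simp
  have hCbound : ∀ v : Fin b → ℝ, (∀ k, v k ∈ Set.Icc (0:ℝ) 1) →
      |Cv v| ≤ 1 + (1 / μ) * b := by
    intro v hv
    have h1μ : (0:ℝ) ≤ 1 / μ := by positivity
    calc |Cv v| ≤ |1| + |(1 / μ) * Lv v| := abs_add_le _ _
      _ = 1 + (1 / μ) * |Lv v| := by rw [abs_one, abs_mul, abs_of_nonneg h1μ]
      _ ≤ 1 + (1 / μ) * b := by
          have := hLbound v hv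
          nlinarith
  -- integrability over ρ
  have hIvmul : ∀ j k : Fin b, Integrable (fun v : Fin b → ℝ => v j * v k) ρ := by
    intro j k
    refine (integrable_const (1:ℝ)).mono'
      ((measurable_pi_apply j).mul (measurable_pi_apply k)).aestronglyMeasurable ?_
    filter_upwards [hρsupp] with v hv
    simp only [Real.norm_eq_abs, abs_mul]
    nlinarith [(hv j).1, (hv j).2, (hv k).1, (hv k).2, abs_of_nonneg (hv j).1,
      abs_of_nonneg (hv k).1]
  have hIvC : ∀ k : Fin b, Integrable (fun v : Fin b → ℝ => v k * Cv v) ρ := by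
    intro k
    refine (integrable_const (1 + (1 / μ) * b)).mono'
      ((measurable_pi_apply k).mul hCmeas).aestronglyMeasurable ?_
    filter_upwards [hρsupp] with v hv
    simp only [Real.norm_eq_abs, abs_mul]
    have h1 := hCbound v hv
    have h2 := (hv k).1
    have h3 := (hv k).2
    have h4 : |v k| ≤ 1 := by rw [abs_of_nonneg h2]; exact h3
    have h5 : (0:ℝ) ≤ |Cv v| := abs_nonneg _
    nlinarith
  have hIC2 : Integrable (fun v : Fin b → ℝ => Cv v ^ 2) ρ := by
    refine (integrable_const ((1 + (1 / μ) * b) ^ 2)).mono'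
      (hCmeas.pow_const 2).aestronglyMeasurable ?_
    filter_upwards [hρsupp] with v hv
    have h1 := hCbound v hv
    have h5 : (0:ℝ) ≤ |Cv v| := abs_nonneg _
    simp only [Real.norm_eq_abs, abs_pow]
    nlinarith
  -- transfer via joint law
  have hpairm : Measurable fun ω => ((fun i => Xs i ω), V ω) :=
    (measurable_pi_lambda _ fun i => hXsmeas i).prodMk hVmeas
  have htrans : ∀ F : (Fin b → ℝ) × (Fin b → ℝ) → ℝ, Measurable F →
      ∫ z, F z ∂(π.prod ρ) = ∫ ω, F ((fun i => Xs i ω), V ω) ∂ℙ := by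
    intro F hF
    rw [← hjoint, integral_map hpairm.aemeasurable hF.aestronglyMeasurable]
  -- integrabilities over the product measure
  have hIA2 : Integrable (fun z : (Fin b → ℝ) × (Fin b → ℝ) =>
      (∑ k, z.2 k * z.1 k) ^ 2) (π.prod ρ) := by
    have hrw : ∀ z : (Fin b → ℝ) × (Fin b → ℝ), (∑ k, z.2 k * z.1 k) ^ 2
        = ∑ j, ∑ k, (z.1 j * z.1 k) * (z.2 j * z.2 k) := by
      intro z
      rw [sq, Finset.sum_mul_sum]
      exact Finset.sum_congr rfl fun j _ => Finset.sum_congr rfl fun k _ => by ring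
    simp_rw [hrw]
    exact integrable_finset_sum _ fun j _ => integrable_finset_sum _ fun k _ =>
      (hIxmul j k).mul_prod (hIvmul j k)
  have hIAC : Integrable (fun z : (Fin b → ℝ) × (Fin b → ℝ) =>
      (∑ k, z.2 k * z.1 k) * Cv z.2) (π.prod ρ) := by
    have hrw : ∀ z : (Fin b → ℝ) × (Fin b → ℝ),
        (∑ k, z.2 k * z.1 k) * Cv z.2 = ∑ k, (z.1 k) * (z.2 k * Cv z.2) := by
      intro z
      rw [Finset.sum_mul]
      exact Finset.sum_congr rfl fun k _ => by ring
    simp_rw [hrw]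
    exact integrable_finset_sum _ fun k _ => (hIx1 k).mul_prod (hIvC k)
  have hICC : Integrable (fun z : (Fin b → ℝ) × (Fin b → ℝ) => Cv z.2 ^ 2) (π.prod ρ) := by
    have := (integrable_const (1:ℝ) (μ := π)).mul_prod hIC2
    simpa using this
  -- ℙ-side integrability of bounded V-functionals
  have hIVsq : ∀ k : Fin b, Integrable (fun ω => V ω k ^ 2) ℙ := by
    intro k
    refine (integrable_const (1:ℝ)).mono' ((hVk k).pow_const 2).aestronglyMeasurable ?_
    refine ae_of_all _ fun ω => ?_
    have h1 := (hV01 ω k).1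
    have h2 := (hV01 ω k).2
    simp only [Real.norm_eq_abs, abs_pow]
    rw [abs_of_nonneg h1]
    nlinarith
  have hIVlog : ∀ k : Fin b, Integrable (fun ω => V ω k * Real.log (V ω k)) ℙ := by
    intro k
    refine (integrable_const (1:ℝ)).mono'
      ((hVk k).mul (Real.measurable_log.comp (hVk k))).aestronglyMeasurable ?_
    refine ae_of_all _ fun ω => ?_
    simp only [Real.norm_eq_abs]
    exact aux_mul_log_bound (hV01 ω k).1 (hV01 ω k).2
  have hILΩ : Integrable (fun ω => Lv (V ω)) ℙ :=
    integrable_finset_sum _ fun k _ => hIVlog k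
  have hIL2Ω : Integrable (fun ω => Lv (V ω) ^ 2) ℙ := by
    refine (integrable_const ((b:ℝ) ^ 2)).mono'
      ((hLmeas.comp hVmeas).pow_const 2).aestronglyMeasurable ?_
    refine ae_of_all _ fun ω => ?_
    have h1 := hLbound (V ω) (hV01 ω)
    have h5 : (0:ℝ) ≤ |Lv (V ω)| := abs_nonneg _
    simp only [Real.norm_eq_abs, abs_pow]
    nlinarith
  -- the mean of L is -μ
  have hglog : Measurable fun t : ℝ => t * Real.log t := measurable_id.mul Real.measurable_log
  have hterm : ∀ k : Fin b, ∫ ω, V ω k * Real.log (V ω k) ∂ℙ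
      = ∫ ω, V ω i0 * Real.log (V ω i0) ∂ℙ := by
    intro k
    have h1 : ∫ ω, V ω k * Real.log (V ω k) ∂ℙ
        = ∫ t, t * Real.log t ∂(ℙ.map fun ω => V ω k) :=
      (integral_map (hVk k).aemeasurable hglog.aestronglyMeasurable).symm
    rw [h1, hVid k, integral_map (hVk i0).aemeasurable hglog.aestronglyMeasurable]
  have hEL : ∫ ω, Lv (V ω) ∂ℙ = -μ := by
    rw [hLv]
    simp only
    rw [integral_finset_sum _ fun k _ => hIVlog k,
      Finset.sum_congr rfl fun k _ => hterm k, Finset.sum_const, Finset.card_univ,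
      Fintype.card_fin, nsmul_eq_mul, hμ]
    ring
  -- the fixed-point equation transported to the product measure
  have hSmeas : Measurable fun ω =>
      (∑ k, V ω k * Xs k ω) + 1 + (1 / μ) * ∑ k, V ω k * Real.log (V ω k) := by
    apply Measurable.add
    · apply Measurable.add
      · exact Finset.measurable_sum _ fun k _ => (hVk k).mul (hXsmeas k)
      · exact measurable_const
    · exact measurable_const.mul (hLmeas.comp hVmeas)
  have hfix2 : ∫ ω, ((∑ k, V ω k * Xs k ω) + 1
      + (1 / μ) * ∑ k, V ω k * Real.log (V ω k)) ^ 2 ∂ℙ = σ2 := by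
    have h1 := integral_map (φ := fun ω =>
        (∑ k, V ω k * Xs k ω) + 1 + (1 / μ) * ∑ k, V ω k * Real.log (V ω k))
      (f := fun t : ℝ => t ^ 2) (μ := ℙ) hSmeas.aemeasurable ht2meas.aestronglyMeasurable
    rw [← h1, hfix, hνt2]
  have hFmeas : Measurable fun z : (Fin b → ℝ) × (Fin b → ℝ) =>
      ((∑ k, z.2 k * z.1 k) + Cv z.2) ^ 2 := by
    apply Measurable.pow_const
    apply Measurable.add
    · exact Finset.measurable_sum _ fun k _ =>
        ((measurable_pi_apply k).comp measurable_snd).mul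
          ((measurable_pi_apply k).comp measurable_fst)
    · exact hCmeas.comp measurable_snd
  have ha : ∫ z, ((∑ k, z.2 k * z.1 k) + Cv z.2) ^ 2 ∂(π.prod ρ) = σ2 := by
    rw [htrans _ hFmeas, ← hfix2]
    congr 1
    funext ω
    rw [hCv, hLv]
    ring
  -- expansion of the square
  have hexp : ∫ z, ((∑ k, z.2 k * z.1 k) + Cv z.2) ^ 2 ∂(π.prod ρ)
      = ∫ z, (∑ k, z.2 k * z.1 k) ^ 2 ∂(π.prod ρ)
        + (2 * ∫ z, (∑ k, z.2 k * z.1 k) * Cv z.2 ∂(π.prod ρ)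
          + ∫ z, Cv z.2 ^ 2 ∂(π.prod ρ)) := by
    have hrw : (fun z : (Fin b → ℝ) × (Fin b → ℝ) => ((∑ k, z.2 k * z.1 k) + Cv z.2) ^ 2)
        = fun z => (∑ k, z.2 k * z.1 k) ^ 2
          + (2 * ((∑ k, z.2 k * z.1 k) * Cv z.2) + Cv z.2 ^ 2) := by
      funext z; ring
    have hI2AC : Integrable (fun z : (Fin b → ℝ) × (Fin b → ℝ) =>
        2 * ((∑ k, z.2 k * z.1 k) * Cv z.2)) (π.prod ρ) := hIAC.const_mul 2
    have hIsum : Integrable (fun z : (Fin b → ℝ) × (Fin b → ℝ) =>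
        2 * ((∑ k, z.2 k * z.1 k) * Cv z.2) + Cv z.2 ^ 2) (π.prod ρ) := hI2AC.add hICC
    rw [hrw, integral_add hIA2 hIsum, integral_add hI2AC hICC, MeasureTheory.integral_const_mul _ _]
  -- the three pieces
  have hA2 : ∫ z, (∑ k, z.2 k * z.1 k) ^ 2 ∂(π.prod ρ)
      = σ2 * ∑ k, ∫ ω, V ω k ^ 2 ∂ℙ := by
    have hrw : (fun z : (Fin b → ℝ) × (Fin b → ℝ) => (∑ k, z.2 k * z.1 k) ^ 2)
        = fun z => ∑ j, ∑ k, z.1 j * z.1 k * (z.2 j * z.2 k) := by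
      funext z
      rw [sq, Finset.sum_mul_sum]
      exact Finset.sum_congr rfl fun j _ => Finset.sum_congr rfl fun k _ => by ring
    rw [hrw, integral_finset_sum _ fun j _ => integrable_finset_sum _ fun k _ =>
      (hIxmul j k).mul_prod (hIvmul j k)]
    rw [Finset.sum_congr rfl fun j _ =>
      integral_finset_sum Finset.univ fun k (_ : k ∈ Finset.univ) =>
        (hIxmul j k).mul_prod (hIvmul j k)]
    have heach : ∀ j k : Fin b,
        ∫ z : (Fin b → ℝ) × (Fin b → ℝ), z.1 j * z.1 k * (z.2 j * z.2 k) ∂(π.prod ρ)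
        = (if j = k then σ2 else 0) * ∫ v, v j * v k ∂ρ := by
      intro j k
      have h := integral_prod_mul (μ := π) (ν := ρ) (f := fun x : Fin b → ℝ => x j * x k)
        (g := fun v : Fin b → ℝ => v j * v k)
      rw [hπmul j k] at h
      exact h
    rw [Finset.sum_congr rfl fun j _ => Finset.sum_congr rfl fun k _ => heach j k]
    have hdiag : ∀ j : Fin b,
        ∑ k, (if j = k then σ2 else 0) * ∫ v, v j * v k ∂ρ
          = σ2 * ∫ v, v j * v j ∂ρ := by
      intro j
      rw [Finset.sum_eq_single j]
      · simp
      · intro k _ hk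
        simp [Ne.symm hk]
      · intro h
        exact absurd (Finset.mem_univ j) h
    rw [Finset.sum_congr rfl fun j _ => hdiag j]
    have hVsq : ∀ j : Fin b, ∫ v, v j * v j ∂ρ = ∫ ω, V ω j ^ 2 ∂ℙ := by
      intro j
      rw [hρ, integral_map (f := fun v : Fin b → ℝ => v j * v j) hVmeas.aemeasurable
        ((measurable_pi_apply j).mul (measurable_pi_apply j)).aestronglyMeasurable]
      congr 1; funext ω; ring
    rw [Finset.sum_congr rfl fun j _ => by rw [hVsq j], ← Finset.mul_sum]
  have hAC : ∫ z, (∑ k, z.2 k * z.1 k) * Cv z.2 ∂(π.prod ρ) = 0 := by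
    have hrw : (fun z : (Fin b → ℝ) × (Fin b → ℝ) => (∑ k, z.2 k * z.1 k) * Cv z.2)
        = fun z => ∑ k, z.1 k * (z.2 k * Cv z.2) := by
      funext z
      rw [Finset.sum_mul]
      exact Finset.sum_congr rfl fun k _ => by ring
    rw [hrw, integral_finset_sum _ fun k _ => (hIx1 k).mul_prod (hIvC k)]
    refine Finset.sum_eq_zero fun k _ => ?_
    have h := integral_prod_mul (μ := π) (ν := ρ) (f := fun x : Fin b → ℝ => x k)
      (g := fun v : Fin b → ℝ => v k * Cv v)
    rw [hπ1 k, zero_mul] at h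
    exact h
  have hC2 : ∫ z, Cv z.2 ^ 2 ∂(π.prod ρ)
      = (1 / μ ^ 2) * (∫ ω, (∑ k, V ω k * Real.log (V ω k)) ^ 2 ∂ℙ) - 1 := by
    have h1 : ∫ z, Cv z.2 ^ 2 ∂(π.prod ρ) = ∫ v, Cv v ^ 2 ∂ρ := by
      have h := integral_prod_mul (μ := π) (ν := ρ) (f := fun _ : Fin b → ℝ => (1:ℝ))
        (g := fun v : Fin b → ℝ => Cv v ^ 2)
      simpa using h
    rw [h1, hρ, integral_map hVmeas.aemeasurable
      (hCmeas.pow_const 2).aestronglyMeasurable]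
    have hrw2 : (fun ω => Cv (V ω) ^ 2)
        = fun ω => 1 + (2 * (1 / μ) * Lv (V ω) + (1 / μ) ^ 2 * Lv (V ω) ^ 2) := by
      funext ω; rw [hCv]; ring
    have hIa : Integrable (fun ω => 2 * (1 / μ) * Lv (V ω)) ℙ := hILΩ.const_mul _
    have hIb : Integrable (fun ω => (1 / μ) ^ 2 * Lv (V ω) ^ 2) ℙ := hIL2Ω.const_mul _
    have hIab : Integrable (fun ω => 2 * (1 / μ) * Lv (V ω)
        + (1 / μ) ^ 2 * Lv (V ω) ^ 2) ℙ := hIa.add hIb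
    rw [hrw2, integral_add (integrable_const 1) hIab, integral_add hIa hIb,
      MeasureTheory.integral_const_mul _ _, MeasureTheory.integral_const_mul _ _, integral_const, hEL]
    have hL2eq : ∫ ω, Lv (V ω) ^ 2 ∂ℙ
        = ∫ ω, (∑ k, V ω k * Real.log (V ω k)) ^ 2 ∂ℙ := rfl
    rw [hL2eq]
    simp only [measure_univ, probReal_univ, ENNReal.toReal_one, smul_eq_mul, one_mul]
    field_simp
    ring
  -- the key identity
  have hstep : σ2 = σ2 * (∑ k, ∫ ω, V ω k ^ 2 ∂ℙ)
      + ((1 / μ ^ 2) * (∫ ω, (∑ k, V ω k * Real.log (V ω k)) ^ 2 ∂ℙ) - 1) := by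
    rw [← hA2, ← hC2]
    have := ha
    rw [hexp, hAC] at this
    linarith [this]
  -- strict bound on the sum of second moments
  have hD : 0 < ∫ ω, V ω i0 * (1 - V ω i0) ∂ℙ := by
    have hfm : Measurable fun ω => V ω i0 * (1 - V ω i0) :=
      (hVk i0).mul (measurable_const.sub (hVk i0))
    have hfnn : 0 ≤ fun ω => V ω i0 * (1 - V ω i0) := by
      intro ω
      have h1 := (hV01 ω i0).1
      have h2 := (hV01 ω i0).2
      simp only [Pi.zero_apply]
      nlinarith
    have hfint : Integrable (fun ω => V ω i0 * (1 - V ω i0)) ℙ := by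
      refine (integrable_const (1:ℝ)).mono' hfm.aestronglyMeasurable ?_
      refine ae_of_all _ fun ω => ?_
      have h1 := (hV01 ω i0).1
      have h2 := (hV01 ω i0).2
      simp only [Real.norm_eq_abs]
      rw [abs_of_nonneg (by nlinarith)]
      nlinarith
    have hnull : ℙ {ω | V ω i0 ∈ ({0, 1} : Set ℝ)} = 0 := by
      have hms : MeasurableSet ({0, 1} : Set ℝ) := by
        exact ((Set.finite_singleton (1:ℝ)).insert 0).measurableSet
      have h1 : ℙ {ω | V ω i0 ∈ ({0, 1} : Set ℝ)}
          = (ℙ.map fun ω => V ω i0) ({0, 1} : Set ℝ) := by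
        rw [Measure.map_apply (hVk i0) hms]
        rfl
      rw [h1]
      exact hVdens (((Set.finite_singleton (1:ℝ)).insert 0).measure_zero volume)
    have hne : ∀ᵐ ω ∂ℙ, V ω i0 * (1 - V ω i0) ≠ 0 := by
      rw [ae_iff]
      refine measure_mono_null ?_ hnull
      intro ω hω
      simp only [Set.mem_setOf_eq, not_not] at hω
      simp only [Set.mem_setOf_eq, Set.mem_insert_iff, Set.mem_singleton_iff]
      rcases mul_eq_zero.mp hω with h | h
      · left; exact h
      · right; linarith
    by_contra hcon
    push_neg at hcon
    have hz : ∫ ω, V ω i0 * (1 - V ω i0) ∂ℙ = 0 :=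
      le_antisymm hcon (integral_nonneg hfnn)
    have hae0 : (fun ω => V ω i0 * (1 - V ω i0)) =ᵐ[ℙ] 0 :=
      (integral_eq_zero_iff_of_nonneg hfnn hfint).mp hz
    haveI : (ae ℙ).NeBot := ae_neBot.mpr (IsProbabilityMeasure.ne_zero ℙ)
    obtain ⟨ω, h1, h2⟩ := (hne.and hae0).exists
    exact h1 h2
  have hQlt : (∑ k, ∫ ω, V ω k ^ 2 ∂ℙ) < 1 := by
    have hQeq : (∑ k, ∫ ω, V ω k ^ 2 ∂ℙ) = ∫ ω, ∑ k, V ω k ^ 2 ∂ℙ :=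
      (integral_finset_sum _ fun k _ => hIVsq k).symm
    have hpt : ∀ ω, ∑ k, V ω k ^ 2 ≤ 1 - V ω i0 * (1 - V ω i0) := by
      intro ω
      have h1 : V ω i0 ^ 2 + ∑ k ∈ Finset.univ.erase i0, V ω k ^ 2 = ∑ k, V ω k ^ 2 :=
        Finset.add_sum_erase Finset.univ (fun k => V ω k ^ 2) (Finset.mem_univ i0)
      have h2 : ∑ k ∈ Finset.univ.erase i0, V ω k ^ 2
          ≤ ∑ k ∈ Finset.univ.erase i0, V ω k :=
        Finset.sum_le_sum fun k _ => by nlinarith [(hV01 ω k).1, (hV01 ω k).2]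
      have h4 : V ω i0 + ∑ k ∈ Finset.univ.erase i0, V ω k = ∑ k, V ω k :=
        Finset.add_sum_erase Finset.univ (fun k => V ω k) (Finset.mem_univ i0)
      have h5 := hVsum ω
      nlinarith
    have hInt2 : Integrable (fun ω => 1 - V ω i0 * (1 - V ω i0)) ℙ := by
      have hfint : Integrable (fun ω => V ω i0 * (1 - V ω i0)) ℙ := by
        refine (integrable_const (1:ℝ)).mono'
          ((hVk i0).mul (measurable_const.sub (hVk i0))).aestronglyMeasurable ?_
        refine ae_of_all _ fun ω => ?_
        have h1 := (hV01 ω i0).1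
        have h2 := (hV01 ω i0).2
        simp only [Real.norm_eq_abs]
        rw [abs_of_nonneg (by nlinarith)]
        nlinarith
      exact (integrable_const 1).sub hfint
    have hIntS : Integrable (fun ω => ∑ k, V ω k ^ 2) ℙ :=
      integrable_finset_sum _ fun k _ => hIVsq k
    have hmono : ∫ ω, ∑ k, V ω k ^ 2 ∂ℙ ≤ ∫ ω, 1 - V ω i0 * (1 - V ω i0) ∂ℙ :=
      integral_mono hIntS hInt2 hpt
    have hval : ∫ ω, 1 - V ω i0 * (1 - V ω i0) ∂ℙ
        = 1 - ∫ ω, V ω i0 * (1 - V ω i0) ∂ℙ := by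
      rw [integral_sub (integrable_const 1) ?hint]
      · simp
      case hint =>
        refine (integrable_const (1:ℝ)).mono'
          ((hVk i0).mul (measurable_const.sub (hVk i0))).aestronglyMeasurable ?_
        refine ae_of_all _ fun ω => ?_
        have h1 := (hV01 ω i0).1
        have h2 := (hV01 ω i0).2
        simp only [Real.norm_eq_abs]
        rw [abs_of_nonneg (by nlinarith)]
        nlinarith
    rw [hQeq]
    rw [hval] at hmono
    linarith
  have h1Q : 1 - (∑ k, ∫ ω, V ω k ^ 2 ∂ℙ) ≠ 0 := by linarith
  rw [eq_mul_inv_iff_mul_eq₀ h1Q]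
  linear_combination hstep
end

section
/- Let (H_n)_{n≥0} be a sequence of real numbers and r : ℕ → ℝ a function such that H_n = Σ_{k=0}^{n−1} ν_n({k})·H_k + r(n) for all n ≥ 1. Then for every n₁ ∈ ℕ and every n ∈ ℕ, H_n = E_{−log n}[h(S_{σ(n₁)})] + E_{−log n}[Σ_{t=0}^{σ(n₁)−1} r(exp(−S_t))], where h : E → ℝ is given by h(−log m) = H_m for m ≥ 1 and h(1) = H_0, and r(exp(−S_t)) is interpreted via exp(−S_t) ∈ ℕ for states S_t = −log m. -/
open MeasureTheory Filter Topology

/-- The law of the trajectory `(S_0, …, S_T)` (as a list of length `T+1`) of the Markov chain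
on `ℕ` with one-step transition kernel `K`, started at `n`.  Under the reindexing
`n ↔ -log n` (for `n ≥ 1`) and `0 ↔ 1` (the absorbing state), this is exactly the Markov
chain of Bruhn with transition probabilities `P(S_1 = -log k | S_0 = -log n) = ν_n({k})`. -/
noncomputable def traj (K : ℕ → PMF ℕ) : ℕ → ℕ → PMF (List ℕ)
  | 0, n => PMF.pure [n]
  | T + 1, n => (K n).bind fun m => (traj K T m).map fun L => n :: L

namespace Stmt5Aux

lemma map_cons_apply (p : PMF (List ℕ)) (m : ℕ) (L : List ℕ) :
    (p.map (m :: ·)) (m :: L) = p L := by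
  rw [PMF.map_apply, tsum_eq_single L]
  · simp
  · intro a ha
    rw [if_neg]
    simp only [List.cons.injEq, true_and]
    exact fun h => ha h.symm

lemma Ksupp_finite (K : ℕ → PMF ℕ) (hK0 : K 0 = PMF.pure 0)
    (hKsupp : ∀ n : ℕ, 1 ≤ n → ∀ k ∈ (K n).support, k < n) (n : ℕ) :
    (K n).support.Finite := by
  rcases Nat.eq_zero_or_pos n with h | h
  · subst h; rw [hK0, PMF.support_pure]; exact Set.finite_singleton 0
  · exact (Set.finite_Iio n).subset fun k hk => hKsupp n h k hk

lemma traj_support_finite (K : ℕ → PMF ℕ) (hK0 : K 0 = PMF.pure 0)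
    (hKsupp : ∀ n : ℕ, 1 ≤ n → ∀ k ∈ (K n).support, k < n) :
    ∀ T n, (traj K T n).support.Finite := by
  intro T
  induction T with
  | zero => intro n; rw [show traj K 0 n = PMF.pure [n] from rfl, PMF.support_pure]
            exact Set.finite_singleton _
  | succ T ih =>
    intro n
    rw [show traj K (T+1) n = (K n).bind fun m => (traj K T m).map (n :: ·) from rfl,
      PMF.support_bind]
    exact (Ksupp_finite K hK0 hKsupp n).biUnion fun k _ => by
      rw [PMF.support_map]; exact (ih k).image _

lemma traj_head (K : ℕ → PMF ℕ) :
    ∀ T n L, L ∈ (traj K T n).support → ∃ L', L = n :: L' := by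
  intro T n L hL
  cases T with
  | zero =>
    rw [show traj K 0 n = PMF.pure [n] from rfl, PMF.support_pure] at hL
    exact ⟨[], hL⟩
  | succ T =>
    rw [show traj K (T+1) n = (K n).bind fun m => (traj K T m).map (n :: ·) from rfl,
      PMF.support_bind] at hL
    simp only [Set.mem_iUnion, PMF.support_map, Set.mem_image] at hL
    obtain ⟨k, _, L', _, rfl⟩ := hL
    exact ⟨L', rfl⟩

/-- The functional appearing in the statement. -/
noncomputable def Fex (H r : ℕ → ℝ) (n₁ : ℕ) (L : List ℕ) : ℝ :=
  H (L.getD (L.findIdx fun j => decide (j < n₁)) 0)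
    + ((L.take (L.findIdx fun j => decide (j < n₁))).map r).sum

lemma Fex_head (H r : ℕ → ℝ) (n₁ m : ℕ) (hm : m < n₁) (L : List ℕ) :
    Fex H r n₁ (m :: L) = H m := by
  have hd : decide (m < n₁) = true := decide_eq_true hm
  simp [Fex, List.findIdx_cons, hd]

lemma Fex_cons (H r : ℕ → ℝ) (n₁ m : ℕ) (hm : ¬ m < n₁) (L : List ℕ) :
    Fex H r n₁ (m :: L) = Fex H r n₁ L + r m := by
  have hd : decide (m < n₁) = false := decide_eq_false hm
  simp only [Fex, List.findIdx_cons, hd, cond_false, List.getD_cons_succ,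
    List.take_succ_cons, List.map_cons, List.sum_cons]
  ring

lemma tsum_toReal_one {α : Type*} (p : PMF α) : ∑' a, (p a).toReal = 1 := by
  rw [← ENNReal.tsum_toReal_eq (fun a => PMF.apply_ne_top p a), PMF.tsum_coe,
    ENNReal.toReal_one]

lemma base (K : ℕ → PMF ℕ) (H r : ℕ → ℝ) (n₁ : ℕ) (T m : ℕ) (hm : m < n₁) :
    H m = ∑' L : List ℕ, ((traj K T m) L).toReal * Fex H r n₁ L := by
  have h1 : ∀ L, ((traj K T m) L).toReal * Fex H r n₁ L
      = ((traj K T m) L).toReal * H m := by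
    intro L
    by_cases hL : L ∈ (traj K T m).support
    · obtain ⟨L', rfl⟩ := traj_head K T m L hL
      rw [Fex_head H r n₁ m hm]
    · rw [PMF.mem_support_iff, not_not] at hL
      simp [hL]
  rw [tsum_congr h1, tsum_mul_right, tsum_toReal_one, one_mul]

lemma main (K : ℕ → PMF ℕ)
    (hK0 : K 0 = PMF.pure 0)
    (hKsupp : ∀ n : ℕ, 1 ≤ n → ∀ k ∈ (K n).support, k < n)
    (H : ℕ → ℝ) (r : ℕ → ℝ)
    (hrec : ∀ n : ℕ, 1 ≤ n →
      H n = (∑ k ∈ Finset.range n, ((K n) k).toReal * H k) + r n)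
    (n₁ : ℕ) (hn₁ : 1 ≤ n₁) :
    ∀ T m, m ≤ T → H m = ∑' L : List ℕ, ((traj K T m) L).toReal * Fex H r n₁ L := by
  classical
  intro T
  induction T with
  | zero =>
    intro m hm
    interval_cases m
    exact base K H r n₁ 0 0 hn₁
  | succ T ih =>
    intro m hmT
    by_cases hm : m < n₁
    · exact base K H r n₁ (T+1) m hm
    have hm1 : 1 ≤ m := le_trans hn₁ (Nat.not_lt.mp hm)
    -- Step A : reindex the sum through the injection `L' ↦ m :: L'`
    have hinj : Function.Injective (fun L : List ℕ => m :: L) := fun a b h => by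
      simpa using h
    have hsub : Function.support (fun L => ((traj K (T+1) m) L).toReal * Fex H r n₁ L)
        ⊆ Set.range (fun L : List ℕ => m :: L) := by
      intro L hL
      have hL' : L ∈ (traj K (T+1) m).support := by
        by_contra h
        rw [PMF.mem_support_iff, not_not] at h
        simp [Function.mem_support, h] at hL
      obtain ⟨L', rfl⟩ := traj_head K (T+1) m L hL'
      exact ⟨L', rfl⟩
    rw [← hinj.tsum_eq hsub]
    -- Step B : compute the probability of a trajectory `m :: L'`
    have happ : ∀ L' : List ℕ, (traj K (T+1) m) (m :: L')
        = ∑' k, K m k * (traj K T k) L' := by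
      intro L'
      rw [show traj K (T+1) m = (K m).bind fun k => (traj K T k).map (m :: ·) from rfl,
        PMF.bind_apply]
      exact tsum_congr fun k => by rw [map_cons_apply]
    have htoReal : ∀ L' : List ℕ, ((traj K (T+1) m) (m :: L')).toReal
        = ∑' k, (K m k).toReal * ((traj K T k) L').toReal := by
      intro L'
      rw [happ L', ENNReal.tsum_toReal_eq
        (fun k => ENNReal.mul_ne_top (PMF.apply_ne_top _ _) (PMF.apply_ne_top _ _))]
      exact tsum_congr fun k => ENNReal.toReal_mul
    have hstep1 : ∀ L' : List ℕ,
        ((traj K (T+1) m) (m :: L')).toReal * Fex H r n₁ (m :: L')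
        = ∑' k, (K m k).toReal * ((traj K T k) L').toReal * (Fex H r n₁ L' + r m) := by
      intro L'
      rw [htoReal L', Fex_cons H r n₁ m hm, ← tsum_mul_right]
    rw [tsum_congr hstep1]
    -- Step C : swap the order of summation (finitely supported double sum)
    have hKfin := Ksupp_finite K hK0 hKsupp m
    have hTfin : ∀ k, ((traj K T k).support).Finite :=
      fun k => traj_support_finite K hK0 hKsupp T k
    have hBfin : (⋃ k ∈ (K m).support, (traj K T k).support).Finite :=
      hKfin.biUnion fun k _ => hTfin k
    have hswap : (∑' (L' : List ℕ) (k : ℕ),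
          (K m k).toReal * ((traj K T k) L').toReal * (Fex H r n₁ L' + r m))
        = ∑' (k : ℕ) (L' : List ℕ),
          (K m k).toReal * ((traj K T k) L').toReal * (Fex H r n₁ L' + r m) := by
      refine Summable.tsum_comm ?_
      refine summable_of_ne_finset_zero (s := hKfin.toFinset ×ˢ hBfin.toFinset) ?_
      rintro ⟨k, L'⟩ hmem
      simp only [Finset.mem_product, Set.Finite.mem_toFinset, not_and_or] at hmem
      rcases hmem with hk | hL'
      · rw [PMF.mem_support_iff, not_not] at hk
        simp [Function.uncurry, hk]
      · by_cases hk : k ∈ (K m).support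
        · have h0 : (traj K T k) L' = 0 := by
            by_contra h
            exact hL' (Set.mem_biUnion hk h)
          simp [Function.uncurry, h0]
        · rw [PMF.mem_support_iff, not_not] at hk
          simp [Function.uncurry, hk]
    rw [hswap]
    -- Step D : compute the inner sum using the induction hypothesis
    have hinner : ∀ k : ℕ,
        (∑' L' : List ℕ, (K m k).toReal * ((traj K T k) L').toReal * (Fex H r n₁ L' + r m))
        = (K m k).toReal * (H k + r m) := by
      intro k
      by_cases hk : k ∈ (K m).support
      · have hkm : k < m := hKsupp m hm1 k hk
        have hkT : k ≤ T := Nat.lt_succ_iff.mp (lt_of_lt_of_le hkm hmT)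
        have hs1 : Summable fun L' : List ℕ =>
            ((traj K T k) L').toReal * Fex H r n₁ L' := by
          refine summable_of_ne_finset_zero (s := (hTfin k).toFinset) ?_
          intro L' hL'
          rw [Set.Finite.mem_toFinset, PMF.mem_support_iff, not_not] at hL'
          simp [hL']
        have hs2 : Summable fun L' : List ℕ => ((traj K T k) L').toReal * r m := by
          refine summable_of_ne_finset_zero (s := (hTfin k).toFinset) ?_
          intro L' hL'
          rw [Set.Finite.mem_toFinset, PMF.mem_support_iff, not_not] at hL'
          simp [hL']
        calc (∑' L' : List ℕ,
              (K m k).toReal * ((traj K T k) L').toReal * (Fex H r n₁ L' + r m))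
            = (K m k).toReal * ∑' L' : List ℕ,
              (((traj K T k) L').toReal * Fex H r n₁ L'
                + ((traj K T k) L').toReal * r m) := by
              rw [← tsum_mul_left]; exact tsum_congr fun L' => by ring
          _ = (K m k).toReal * (H k + r m) := by
              rw [Summable.tsum_add hs1 hs2, ← ih k hkT, tsum_mul_right, tsum_toReal_one, one_mul]
      · rw [PMF.mem_support_iff, not_not] at hk
        simp [hk]
    rw [tsum_congr hinner]
    -- Step E : conclude using the recursion hypothesis
    have hout : (∑' k : ℕ, (K m k).toReal * (H k + r m))
        = ∑ k ∈ Finset.range m, (K m k).toReal * (H k + r m) := by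
      refine tsum_eq_sum ?_
      intro k hk
      have : K m k = 0 := by
        by_contra h
        exact hk (Finset.mem_range.mpr (hKsupp m hm1 k h))
      simp [this]
    have hone : (∑ k ∈ Finset.range m, (K m k).toReal) = 1 := by
      rw [show (∑ k ∈ Finset.range m, (K m k).toReal) = ∑' k : ℕ, (K m k).toReal from ?_,
        tsum_toReal_one]
      refine (tsum_eq_sum ?_).symm
      intro k hk
      have : K m k = 0 := by
        by_contra h
        exact hk (Finset.mem_range.mpr (hKsupp m hm1 k h))
      simp [this]
    rw [hout]
    have : (∑ k ∈ Finset.range m, (K m k).toReal * (H k + r m))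
        = (∑ k ∈ Finset.range m, (K m k).toReal * H k)
          + (∑ k ∈ Finset.range m, (K m k).toReal) * r m := by
      rw [Finset.sum_mul, ← Finset.sum_add_distrib]
      exact Finset.sum_congr rfl fun k _ => by ring
    rw [this, hone, one_mul, ← hrec m hm1]

end Stmt5Aux

/-- (Representation lemma of Bruhn.)  Let `ν_n` (`n ≥ 1`) be probability
measures on `{0, …, n-1}`, realized as the transition kernel `K` of a Markov chain on `ℕ`
(state `n ≥ 1` corresponds to the state `-log n` of Bruhn's chain and state `0` to the
absorbing state `1`, so that `h(S_t) = H_{exp(-S_t)}` corresponds to `H` at the current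
state, and `σ(n₁) = inf{t : S_t > -log n₁}` corresponds to the first `t` with state `< n₁`).
If `H_n = Σ_{k=0}^{n-1} ν_n({k})·H_k + r(n)` for all `n ≥ 1`, then for every `n₁ ≥ 1` and
every `n`,
`H_n = E_{-log n}[H_{exp(-S_{σ(n₁)})}] + E_{-log n}[Σ_{t=0}^{σ(n₁)-1} r(exp(-S_t))]`;
here the trajectory up to time `n` suffices since the chain strictly decreases until
absorption, so `σ(n₁) ≤ n` almost surely. -/
theorem stmt5
    (K : ℕ → PMF ℕ)
    (hK0 : K 0 = PMF.pure 0)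
    (hKsupp : ∀ n : ℕ, 1 ≤ n → ∀ k ∈ (K n).support, k < n)
    (H : ℕ → ℝ) (r : ℕ → ℝ)
    (hrec : ∀ n : ℕ, 1 ≤ n →
      H n = (∑ k ∈ Finset.range n, ((K n) k).toReal * H k) + r n) :
    ∀ n₁ : ℕ, 1 ≤ n₁ → ∀ n : ℕ,
      H n = ∑' L : List ℕ, ((traj K n n) L).toReal *
        (H (L.getD (L.findIdx fun m => decide (m < n₁)) 0)
          + ((L.take (L.findIdx fun m => decide (m < n₁))).map r).sum) := by
  intro n₁ hn₁ n
  exact Stmt5Aux.main K hK0 hKsupp H r hrec n₁ hn₁ n n le_rfl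
end

section
/- Let (S_t) be an AR-process. Then there exist a real number a* and a positive real number û such that for every measurable function l : ℝ → [0,∞), all real numbers y, z and every x ∈ E with x < y < z < a*, one has E_x[Σ_{t=τ(y)}^{τ(z)−1} l(S_t)] ≤ û · Σ_{n=⌊y⌋}^{⌈z⌉} sup_{t ∈ (n−1, n]} l(t). -/
open MeasureTheory Filter Topology

attribute [local instance] Classical.propDecidable

/-- An AR-process (approximate renewal process) in the sense of Bruhn: a time-homogeneous
Markov chain `(S_t)` on a countable state space `E ⊆ ℝ` without lower bound, given by a
family of path measures `P x` (the chain started at `x`, realized as coordinate process on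
`ℕ → E`) with transition probabilities `κ`, whose increments are strictly positive a.s., and
whose one-step distribution functions `F_x(y) = P_x(S_1 - x ≤ y)` converge weakly, as
`x → -∞`, to a distribution function `F` with `0 < ∫ t dF(t) < ∞` (the mean is expressed as
`∫_0^∞ (1 - F(t)) dt`, `F` being supported on `[0,∞)` since the increments are positive). -/
structure ARProcess where
  E : Set ℝ
  countable : E.Countable
  nobound : ¬ BddBelow E
  P : ↥E → Measure (ℕ → ↥E)
  prob : ∀ x, IsProbabilityMeasure (P x)
  κ : ↥E → ↥E → ENNReal
  κprob : ∀ x, ∑' y, κ x y = 1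
  init : ∀ x : ↥E, P x {ω | ω 0 = x} = 1
  markov : ∀ (x : ↥E) (t : ℕ) (path : ℕ → ↥E),
    P x {ω | ∀ i ≤ t + 1, ω i = path i}
      = P x {ω | ∀ i ≤ t, ω i = path i} * κ (path t) (path (t + 1))
  inc_pos : ∀ (x : ↥E) (t : ℕ), P x {ω | ((ω (t + 1) : ℝ)) ≤ ((ω t : ℝ))} = 0
  F : ℝ → ℝ
  F_mono : Monotone F
  F_bot : Tendsto F atBot (nhds 0)
  F_top : Tendsto F atTop (nhds 1)
  F_conv : ∀ y : ℝ, ContinuousAt F y →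
    Tendsto (fun x : ↥E => ((P x) {ω | ((ω 1 : ℝ)) - ((x : ℝ)) ≤ y}).toReal)
      (comap (fun x : ↥E => (x : ℝ)) atBot) (nhds (F y))
  mean_int : IntegrableOn (fun t => 1 - F t) (Set.Ioi (0 : ℝ))
  mean_pos : 0 < ∫ t in Set.Ioi (0 : ℝ), (1 - F t)

/-- `F̄_a(t) = inf_{x ≤ a} F_x(t)`, where `F_x(y) = P_x(S_1 - x ≤ y)`. -/
noncomputable def Fbar (C : ARProcess) (a t : ℝ) : ℝ :=
  ⨅ x : {x : ↥C.E // (x : ℝ) ≤ a},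
    ((C.P x.1) {ω | ((ω 1 : ℝ)) - ((x.1 : ℝ)) ≤ t}).toReal

/-- `F̲_a(t) = sup_{x ≤ a} F_x(t)`, where `F_x(y) = P_x(S_1 - x ≤ y)`. -/
noncomputable def Funder (C : ARProcess) (a t : ℝ) : ℝ :=
  ⨆ x : {x : ↥C.E // (x : ℝ) ≤ a},
    ((C.P x.1) {ω | ((ω 1 : ℝ)) - ((x.1 : ℝ)) ≤ t}).toReal

/-- The integrability condition: `∫ t dF̄_a(t) < ∞` for some `a`, expressed (via Fubini, `F̄_a`
vanishing on the negative half-line) as integrability of `1 - F̄_a` on `(0, ∞)`. -/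
def IntegrabilityCondition (C : ARProcess) : Prop :=
  ∃ a : ℝ, IntegrableOn (fun t => 1 - Fbar C a t) (Set.Ioi (0 : ℝ))

/-- The hitting time `τ(d) = inf{t : S_t ≥ d}` of `[d, ∞)` (junk value `0` if the path never
reaches `[d, ∞)`). -/
noncomputable def hitTime {E : Set ℝ} (d : ℝ) (ω : ℕ → ↥E) : ℕ :=
  sInf {t : ℕ | d ≤ ((ω t : ℝ))}

/-- Total variation distance `Σ_z |P({z}) - Q({z})|` between two measures on a countable
(state) space. -/
noncomputable def dTV {α : Type*} [MeasurableSpace α] (μ ν : Measure α) : ℝ :=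
  ∑' z : α, |(μ {z}).toReal - (ν {z}).toReal|

open scoped ENNReal NNReal

namespace ARaux

variable (C : ARProcess)

instance : Countable ↥C.E := C.countable.to_subtype

lemma measAll (s : Set ↥C.E) : MeasurableSet s := by
  have h : s = ⋃ x : s, {(x : ↥C.E)} := by ext v; simp
  rw [h]
  exact MeasurableSet.iUnion fun x => measurableSet_singleton _

/-- weight of a cylinder -/
noncomputable def W (x : ↥C.E) (p : ℕ → ↥C.E) (t : ℕ) : ℝ≥0∞ :=
  (if p 0 = x then 1 else 0) * ∏ i ∈ Finset.range t, C.κ (p i) (p (i+1))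

lemma measCyl (p : ℕ → ↥C.E) (t : ℕ) :
    MeasurableSet {ω : ℕ → ↥C.E | ∀ i ≤ t, ω i = p i} := by
  have h : {ω : ℕ → ↥C.E | ∀ i ≤ t, ω i = p i}
      = ⋂ i ∈ Set.Iic t, (fun ω : ℕ → ↥C.E => ω i) ⁻¹' {p i} := by
    ext ω; simp [Set.mem_iInter]
  rw [h]
  exact MeasurableSet.biInter (Set.to_countable _)
    fun i _ => (measurable_pi_apply i) (measAll C _)

lemma cylP (x : ↥C.E) (p : ℕ → ↥C.E) (t : ℕ) :
    C.P x {ω | ∀ i ≤ t, ω i = p i} = W C x p t := by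
  have := C.prob x
  induction t with
  | zero =>
    have hs : {ω : ℕ → ↥C.E | ∀ i ≤ 0, ω i = p i} = {ω | ω 0 = p 0} := by
      ext ω; simp [Nat.le_zero]
    rw [hs]
    by_cases h : p 0 = x
    · have : ({ω | ω 0 = p 0} : Set (ℕ → ↥C.E)) = {ω | ω 0 = x} := by rw [h]
      rw [this, C.init x, W, h]; simp
    · have hsub : ({ω | ω 0 = p 0} : Set (ℕ → ↥C.E)) ⊆ {ω | ω 0 = x}ᶜ := by
        intro ω hω hx
        exact h (by rw [← hω, hx])
      have hm : MeasurableSet {ω : ℕ → ↥C.E | ω 0 = x} := by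
        have : {ω : ℕ → ↥C.E | ω 0 = x} = (fun ω : ℕ → ↥C.E => ω 0) ⁻¹' {x} := rfl
        rw [this]; exact (measurable_pi_apply 0) (measAll C _)
      have hc : C.P x ({ω | ω 0 = x}ᶜ) = 0 := by
        rw [measure_compl hm (measure_ne_top _ _), C.init x, measure_univ, tsub_self]
      rw [measure_mono_null hsub hc, W, if_neg h, zero_mul]
  | succ t ih =>
    rw [C.markov x t p, ih, W, W, Finset.prod_range_succ, mul_assoc]

/-- extension of a finite path to an infinite one -/
def extend {α : Type*} (T : ℕ) (q : Fin (T+1) → α) : ℕ → α :=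
  fun i => q ⟨min i T, by omega⟩

lemma extend_le {α : Type*} (T : ℕ) (q : Fin (T+1) → α) {i : ℕ} (h : i ≤ T) :
    extend T q i = q ⟨i, by omega⟩ := by
  simp [extend, Nat.min_eq_left h]

/-- finite-dimensional distribution: measure of an event depending on coordinates `≤ T` -/
lemma findim (x : ↥C.E) (T : ℕ) (Q : (ℕ → ↥C.E) → Prop)
    (hQ : ∀ ω ω', (∀ i ≤ T, ω i = ω' i) → Q ω → Q ω') :
    C.P x {ω | Q ω}
      = ∑' q : Fin (T+1) → ↥C.E,
          if Q (extend T q) then W C x (extend T q) T else 0 := by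
  have hset : {ω | Q ω} =
      ⋃ q : {q : Fin (T+1) → ↥C.E // Q (extend T q)},
        {ω : ℕ → ↥C.E | ∀ i ≤ T, ω i = extend T (q : Fin (T+1) → ↥C.E) i} := by
    ext ω
    simp only [Set.mem_iUnion, Set.mem_setOf_eq]
    constructor
    · intro hω
      exact ⟨⟨fun i => ω i, hQ ω _ (fun i hi => by rw [extend_le T _ hi]) hω⟩,
        fun i hi => by rw [extend_le T _ hi]⟩
    · rintro ⟨q, hq⟩
      exact hQ _ ω (fun i hi => (hq i hi).symm) q.2
  have hdisj : Pairwise (Function.onFun Disjoint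
      (fun q : {q : Fin (T+1) → ↥C.E // Q (extend T q)} =>
        {ω : ℕ → ↥C.E | ∀ i ≤ T, ω i = extend T (q : Fin (T+1) → ↥C.E) i})) := by
    intro q q' hne
    refine Set.disjoint_left.mpr fun ω hω hω' => hne ?_
    refine Subtype.ext (funext fun i => ?_)
    have h1 := hω i.val (Nat.lt_succ_iff.mp i.isLt)
    have h2 := hω' i.val (Nat.lt_succ_iff.mp i.isLt)
    rw [extend_le T _ (Nat.lt_succ_iff.mp i.isLt)] at h1 h2
    simp only [Fin.eta] at h1 h2
    rw [← h1, ← h2]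
  rw [hset, measure_iUnion hdisj fun q => measCyl C _ T]
  have h1 : ∀ q : {q : Fin (T+1) → ↥C.E // Q (extend T q)},
      C.P x {ω : ℕ → ↥C.E | ∀ i ≤ T, ω i = extend T (q : Fin (T+1) → ↥C.E) i}
        = W C x (extend T (q : Fin (T+1) → ↥C.E)) T := fun q => cylP C x _ T
  rw [tsum_congr h1]
  have h2 : ∑' (b : { q : Fin (T+1) → ↥C.E // Q (extend T q) }), W C x (extend T (b : Fin (T+1) → ↥C.E)) T
      = ∑' (q : Fin (T+1) → ↥C.E),
          Set.indicator {q : Fin (T+1) → ↥C.E | Q (extend T q)} (fun q => W C x (extend T q) T) q :=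
    tsum_subtype {q : Fin (T+1) → ↥C.E | Q (extend T q)} (fun q => W C x (extend T q) T)
  rw [h2]
  exact tsum_congr fun q => by rw [Set.indicator_apply]; rfl

end ARaux

namespace ARaux

variable (C : ARProcess)

lemma measAllPi (n : ℕ) (A : Set (Fin n → ↥C.E)) : MeasurableSet A := by
  have h : A = ⋃ f : A, {(f : Fin n → ↥C.E)} := by ext v; simp
  rw [h]
  refine MeasurableSet.iUnion fun f => ?_
  have h2 : ({(f : Fin n → ↥C.E)} : Set (Fin n → ↥C.E))
      = ⋂ i : Fin n, (fun g : Fin n → ↥C.E => g i) ⁻¹' {(f : Fin n → ↥C.E) i} := by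
    ext g; simp [funext_iff]
  rw [h2]
  exact MeasurableSet.iInter fun i => (measurable_pi_apply i) (measAll C _)

/-- measurability of an event depending on finitely many coordinates -/
lemma measFD (T : ℕ) (Q : (ℕ → ↥C.E) → Prop)
    (hQ : ∀ ω ω', (∀ i ≤ T, ω i = ω' i) → Q ω → Q ω') :
    MeasurableSet {ω : ℕ → ↥C.E | Q ω} := by
  have h : {ω : ℕ → ↥C.E | Q ω}
      = (fun ω : ℕ → ↥C.E => fun i : Fin (T+1) => ω i) ⁻¹'
          {q : Fin (T+1) → ↥C.E | Q (extend T q)} := by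
    ext ω
    simp only [Set.mem_setOf_eq, Set.mem_preimage]
    constructor
    · intro hω
      exact hQ ω _ (fun i hi => by rw [extend_le T _ hi]) hω
    · intro hω
      exact hQ _ ω (fun i hi => by rw [extend_le T _ hi]) hω
  rw [h]
  exact (measurable_pi_lambda _ fun i => measurable_pi_apply _) (measAllPi C _ _)

/-- the one-step marginal in terms of the kernel -/
lemma step_marginal (w : ↥C.E) (c : ℝ) :
    C.P w {ω | ((ω 1 : ℝ)) - ((w : ℝ)) ≤ c}
      = ∑' v : ↥C.E, if ((v : ℝ) - (w : ℝ) ≤ c) then C.κ w v else 0 := by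
  have hQ : ∀ ω ω' : ℕ → ↥C.E, (∀ i ≤ 1, ω i = ω' i) →
      (((ω 1 : ℝ)) - ((w : ℝ)) ≤ c) → (((ω' 1 : ℝ)) - ((w : ℝ)) ≤ c) := by
    intro ω ω' h h1; rwa [← h 1 le_rfl]
  rw [findim C w 1 _ hQ]
  rw [← Equiv.tsum_eq (finTwoArrowEquiv ↥C.E).symm]
  rw [ENNReal.tsum_prod']
  have hpt : ∀ a b : ↥C.E,
      (if (((extend 1 ((finTwoArrowEquiv ↥C.E).symm ((a, b) : ↥C.E × ↥C.E)) 1 : ↥C.E) : ℝ) - (w : ℝ) ≤ c)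
        then W C w (extend 1 ((finTwoArrowEquiv ↥C.E).symm (a, b))) 1 else 0)
      = if ((b : ℝ) - (w : ℝ) ≤ c) then (if a = w then 1 else 0) * C.κ a b else 0 := by
    intro a b
    have e0 : extend 1 ((finTwoArrowEquiv ↥C.E).symm (a, b)) 0 = a := by
      rw [extend_le 1 _ (by norm_num)]; rfl
    have e1 : extend 1 ((finTwoArrowEquiv ↥C.E).symm (a, b)) 1 = b := by
      rw [extend_le 1 _ le_rfl]; rfl
    rw [W, Finset.prod_range_one, e0, e1]
  calc ∑' (a : ↥C.E) (b : ↥C.E),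
        (if (((extend 1 ((finTwoArrowEquiv ↥C.E).symm ((a, b) : ↥C.E × ↥C.E)) 1 : ↥C.E) : ℝ) - (w : ℝ) ≤ c)
          then W C w (extend 1 ((finTwoArrowEquiv ↥C.E).symm (a, b))) 1 else 0)
      = ∑' (a : ↥C.E) (b : ↥C.E), (if ((b : ℝ) - (w : ℝ) ≤ c) then (if a = w then 1 else 0) * C.κ a b else 0) := by
        exact tsum_congr fun a => tsum_congr fun b => hpt a b
    _ = ∑' v : ↥C.E, if ((v : ℝ) - (w : ℝ) ≤ c) then C.κ w v else 0 := by
        rw [ENNReal.tsum_comm]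
        refine tsum_congr fun b => ?_
        rw [tsum_eq_single w ?_]
        · by_cases hbc : ((b : ℝ) - (w : ℝ) ≤ c) <;> simp [hbc]
        · intro a ha
          by_cases hbc : ((b : ℝ) - (w : ℝ) ≤ c) <;> simp [hbc, ha]

/-- the recursion majorising staying probabilities -/
noncomputable def Hfun (ρ : ℝ≥0∞) : ℕ → ℕ → ℝ≥0∞
  | 0, _ => 1
  | (k+1), 0 => ρ * Hfun ρ k 0
  | (k+1), (j+1) => ρ * Hfun ρ k (j+1) + Hfun ρ k j

lemma Hfun_ne_top {ρ : ℝ≥0∞} (hρ : ρ ≠ ⊤) : ∀ k j, Hfun ρ k j ≠ ⊤ := by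
  intro k
  induction k with
  | zero => intro j; simp [Hfun]
  | succ k ih =>
    intro j
    cases j with
    | zero => rw [Hfun]; exact ENNReal.mul_ne_top hρ (ih 0)
    | succ j => rw [Hfun]; exact ENNReal.add_ne_top.mpr ⟨ENNReal.mul_ne_top hρ (ih (j+1)), ih j⟩

lemma Hfun_mono_j (ρ : ℝ≥0∞) : ∀ k j j', j ≤ j' → Hfun ρ k j ≤ Hfun ρ k j' := by
  have step : ∀ k j, Hfun ρ k j ≤ Hfun ρ k (j+1) := by
    intro k
    induction k with
    | zero => intro j; simp [Hfun]
    | succ k ih =>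
      intro j
      cases j with
      | zero =>
        rw [Hfun, Hfun]
        exact le_add_right (mul_le_mul_right (ih 0) ρ)
      | succ j =>
        rw [Hfun, Hfun]
        exact add_le_add (mul_le_mul_right (ih (j+1)) ρ) (ih j)
  intro k j j' h
  induction h with
  | refl => exact le_refl _
  | step h ih => exact le_trans ih (step k _)
  
lemma Hfun_zero_eq (ρ : ℝ≥0∞) : ∀ k, Hfun ρ k 0 = ρ ^ k := by
  intro k
  induction k with
  | zero => simp [Hfun]
  | succ k ih => rw [Hfun, ih, pow_succ, mul_comm]

lemma Hfun_tsum_ne_top {ρ : ℝ≥0∞} (hρ : ρ < 1) : ∀ m, ∑' k, Hfun ρ k m ≠ ⊤ := by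
  intro m
  induction m with
  | zero =>
    have h : ∑' k, Hfun ρ k 0 = (1 - ρ)⁻¹ := by
      rw [tsum_congr (fun k => Hfun_zero_eq ρ k)]
      exact ENNReal.tsum_geometric ρ
    rw [h]
    refine ENNReal.inv_ne_top.mpr ?_
    simp only [ne_eq, tsub_eq_zero_iff_le, not_le]
    exact hρ
  | succ m ih =>
    set Sm := ∑' k, Hfun ρ k m with hSm
    have h1ρ : (1 : ℝ≥0∞) - ρ ≠ 0 := by
      simp only [ne_eq, tsub_eq_zero_iff_le, not_le]; exact hρ
    set Tb := (1 + Sm) * (1 - ρ)⁻¹ with hTb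
    have hTbne : Tb ≠ ⊤ :=
      ENNReal.mul_ne_top (ENNReal.add_ne_top.mpr ⟨ENNReal.one_ne_top, ih⟩)
        (ENNReal.inv_ne_top.mpr h1ρ)
    have key : ∀ K, ∑ k ∈ Finset.range K, Hfun ρ k (m+1) ≤ Tb := by
      intro K
      induction K with
      | zero => simp
      | succ K ihK =>
        rw [Finset.sum_range_succ']
        have h2 : ∀ k, Hfun ρ (k+1) (m+1) = ρ * Hfun ρ k (m+1) + Hfun ρ k m := fun k => by rw [Hfun]
        rw [Finset.sum_congr rfl (fun k _ => h2 k)]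
        rw [Finset.sum_add_distrib, ← Finset.mul_sum]
        have hb1 : ∑ k ∈ Finset.range K, Hfun ρ k m ≤ Sm :=
          ENNReal.sum_le_tsum _
        have hb2 : ρ * ∑ k ∈ Finset.range K, Hfun ρ k (m+1) ≤ ρ * Tb :=
          mul_le_mul_right ihK ρ
        have hH0 : Hfun ρ 0 (m+1) = 1 := by rw [Hfun]
        calc ρ * ∑ k ∈ Finset.range K, Hfun ρ k (m+1) + ∑ k ∈ Finset.range K, Hfun ρ k m
              + Hfun ρ 0 (m+1)
            ≤ ρ * Tb + Sm + 1 := add_le_add (add_le_add hb2 hb1) (le_of_eq hH0)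
          _ = (1 + Sm) + ρ * Tb := by ring
          _ = (1 - ρ) * Tb + ρ * Tb := by
              have hTmul : (1 - ρ) * Tb = 1 + Sm := by
                rw [hTb, mul_comm (1 + Sm) (1 - ρ)⁻¹, ← mul_assoc,
                  ENNReal.mul_inv_cancel h1ρ (ENNReal.sub_ne_top ENNReal.one_ne_top), one_mul]
              rw [hTmul]
          _ = ((1 - ρ) + ρ) * Tb := by rw [add_mul]
          _ = Tb := by rw [tsub_add_cancel_of_le hρ.le, one_mul]
    have hle : ∑' k, Hfun ρ k (m+1) ≤ Tb := by
      rw [ENNReal.tsum_eq_iSup_sum]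
      refine iSup_le fun s => ?_
      refine le_trans (Finset.sum_le_sum_of_subset (fun k hk => Finset.mem_range.mpr ?_)) (key ((s.sup id) + 1))
      exact Nat.lt_succ_of_le (Finset.le_sup (f := id) hk)
    exact ne_top_of_le_ne_top hTbne hle
end ARaux

namespace ARaux

variable (C : ARProcess)

/-- prepend `w` to a finite path -/
def cha {α : Type*} (w : α) {k : ℕ} (u : Fin k → α) : ℕ → α :=
  fun i => if h : 0 < i ∧ i ≤ k then u ⟨i-1, by omega⟩ else w

lemma cha_zero {α : Type*} (w : α) {k : ℕ} (u : Fin k → α) : cha w u 0 = w := by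
  simp [cha]

lemma cha_cons {α : Type*} (w v : α) {k : ℕ} (u : Fin k → α) :
    ∀ i ≤ k, cha w (Fin.cons v u) (i+1) = cha v u i := by
  intro i hi
  unfold cha
  rw [dif_pos ⟨Nat.succ_pos i, Nat.succ_le_succ hi⟩]
  cases i with
  | zero => simp
  | succ j =>
    rw [dif_pos ⟨Nat.succ_pos j, hi⟩]
    exact Fin.cons_succ (α := fun _ : Fin (k+1) => α) v u (⟨j, by omega⟩ : Fin k)

/-- staying inside `(b-1, b]` with strictly increasing steps -/
def stay (b : ℝ) (w : ↥C.E) {k : ℕ} (u : Fin k → ↥C.E) : Prop :=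
  (∀ i < k, (((cha w u i : ↥C.E) : ℝ) < (((cha w u (i+1) : ↥C.E) : ℝ)))) ∧
  (∀ j ≤ k, (((cha w u j : ↥C.E) : ℝ) ∈ Set.Ioc (b-1) b))

/-- total weight of staying paths -/
noncomputable def TS (b : ℝ) (w : ↥C.E) (k : ℕ) : ℝ≥0∞ :=
  ∑' u : Fin k → ↥C.E,
    if stay C b w u then ∏ i ∈ Finset.range k, C.κ (cha w u i) (cha w u (i+1)) else 0

lemma stay_cons (b : ℝ) (w v : ↥C.E) {k : ℕ} (u : Fin k → ↥C.E) :
    stay C b w (Fin.cons v u) ↔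
      ((((w : ℝ)) ∈ Set.Ioc (b-1) b) ∧ ((w : ℝ) < (v : ℝ))) ∧ stay C b v u := by
  constructor
  · rintro ⟨h1, h2⟩
    have hw : ((w : ℝ)) ∈ Set.Ioc (b-1) b := by
      have := h2 0 (Nat.zero_le _); rwa [cha_zero] at this
    have hwv : (w : ℝ) < (v : ℝ) := by
      have := h1 0 (Nat.succ_pos k)
      rwa [cha_zero, cha_cons w v u 0 (Nat.zero_le _), cha_zero] at this
    refine ⟨⟨hw, hwv⟩, ⟨fun i hik => ?_, fun j hjk => ?_⟩⟩
    · have := h1 (i+1) (Nat.succ_lt_succ hik)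
      rwa [cha_cons w v u i (le_of_lt hik), cha_cons w v u (i+1) hik] at this
    · have := h2 (j+1) (Nat.succ_le_succ hjk)
      rwa [cha_cons w v u j hjk] at this
  · rintro ⟨⟨hw, hwv⟩, hs1, hs2⟩
    constructor
    · intro i hik
      cases i with
      | zero =>
        rw [cha_zero, cha_cons w v u 0 (Nat.zero_le _), cha_zero]; exact hwv
      | succ j =>
        have hjk : j + 1 ≤ k := by omega
        rw [cha_cons w v u j (by omega), cha_cons w v u (j+1) hjk]
        exact hs1 j (by omega)
    · intro j hjk
      cases j with
      | zero => rw [cha_zero]; exact hw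
      | succ j =>
        rw [cha_cons w v u j (by omega)]
        exact hs2 j (by omega)

lemma prod_cons (w v : ↥C.E) {k : ℕ} (u : Fin k → ↥C.E) :
    ∏ i ∈ Finset.range (k+1), C.κ (cha w (Fin.cons v u) i) (cha w (Fin.cons v u) (i+1))
      = C.κ w v * ∏ i ∈ Finset.range k, C.κ (cha v u i) (cha v u (i+1)) := by
  rw [Finset.prod_range_succ']
  rw [cha_zero, cha_cons w v u 0 (Nat.zero_le _), cha_zero, mul_comm]
  congr 1
  refine Finset.prod_congr rfl fun i hi => ?_
  rw [cha_cons w v u i (le_of_lt (Finset.mem_range.mp hi)),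
    cha_cons w v u (i+1) (Finset.mem_range.mp hi)]

lemma TS_zero_of_notmem (b : ℝ) (w : ↥C.E) (hw : ((w : ℝ)) ∉ Set.Ioc (b-1) b) (k : ℕ) :
    TS C b w k = 0 := by
  rw [TS]
  convert tsum_zero with u
  rw [if_neg]
  rintro ⟨h1, h2⟩
  have := h2 0 (Nat.zero_le _)
  rw [cha_zero] at this
  exact hw this

lemma TS_succ (b : ℝ) (w : ↥C.E) (k : ℕ) :
    TS C b w (k+1)
      = ∑' v : ↥C.E, if ((((w : ℝ)) ∈ Set.Ioc (b-1) b) ∧ (w : ℝ) < (v : ℝ))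
          then C.κ w v * TS C b v k else 0 := by
  rw [TS]
  rw [← Equiv.tsum_eq (Fin.consEquiv (fun _ : Fin (k+1) => ↥C.E))]
  rw [ENNReal.tsum_prod']
  refine tsum_congr fun v => ?_
  have hinner : ∀ u : Fin k → ↥C.E,
      (if stay C b w (Fin.cons v u)
        then ∏ i ∈ Finset.range (k+1), C.κ (cha w (Fin.cons v u) i) (cha w (Fin.cons v u) (i+1)) else 0)
      = (if ((((w : ℝ)) ∈ Set.Ioc (b-1) b) ∧ (w : ℝ) < (v : ℝ)) then (1:ℝ≥0∞) else 0) *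
          (if stay C b v u then C.κ w v * ∏ i ∈ Finset.range k, C.κ (cha v u i) (cha v u (i+1)) else 0) := by
    intro u
    rw [prod_cons]
    by_cases hA : ((((w : ℝ)) ∈ Set.Ioc (b-1) b) ∧ (w : ℝ) < (v : ℝ))
    · rw [if_pos hA, one_mul]
      by_cases hs : stay C b v u
      · rw [if_pos hs, if_pos ((stay_cons C b w v u).mpr ⟨hA, hs⟩)]
      · rw [if_neg hs, if_neg (fun hc => hs ((stay_cons C b w v u).mp hc).2)]
    · rw [if_neg hA, zero_mul, if_neg (fun hc => hA ((stay_cons C b w v u).mp hc).1)]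
  calc ∑' u : Fin k → ↥C.E,
        (if stay C b w ((Fin.consEquiv (fun _ : Fin (k+1) => ↥C.E)) (v, u))
          then ∏ i ∈ Finset.range (k+1),
            C.κ (cha w ((Fin.consEquiv (fun _ : Fin (k+1) => ↥C.E)) (v, u)) i)
              (cha w ((Fin.consEquiv (fun _ : Fin (k+1) => ↥C.E)) (v, u)) (i+1)) else 0)
      = ∑' u : Fin k → ↥C.E,
        (if ((((w : ℝ)) ∈ Set.Ioc (b-1) b) ∧ (w : ℝ) < (v : ℝ)) then (1:ℝ≥0∞) else 0) *
          (if stay C b v u then C.κ w v * ∏ i ∈ Finset.range k, C.κ (cha v u i) (cha v u (i+1)) else 0) := by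
        exact tsum_congr fun u => hinner u
    _ = _ := by
        rw [ENNReal.tsum_mul_left]
        have h2 : ∑' u : Fin k → ↥C.E,
            (if stay C b v u then C.κ w v * ∏ i ∈ Finset.range k, C.κ (cha v u i) (cha v u (i+1)) else 0)
            = C.κ w v * TS C b v k := by
          rw [TS, ← ENNReal.tsum_mul_left]
          exact tsum_congr fun u => by rw [mul_ite, mul_zero]
        rw [h2, boole_mul]
end ARaux

namespace ARaux

variable (C : ARProcess)

lemma TS_le (ε : ℝ) (hε : 0 < ε) (ρ : ℝ≥0∞) (a₀ : ℝ)
    (hκ : ∀ w : ↥C.E, (w : ℝ) ≤ a₀ →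
      (∑' v : ↥C.E, if ((v : ℝ) ≤ (w : ℝ) + ε) then C.κ w v else 0) ≤ ρ)
    (b : ℝ) (hb : b ≤ a₀) :
    ∀ (k : ℕ) (w : ↥C.E), TS C b w k ≤ Hfun ρ k (⌊(b - (w : ℝ))/ε⌋₊) := by
  intro k
  induction k with
  | zero =>
    intro w
    have h1 : TS C b w 0 ≤ 1 := by
      rw [TS]
      rw [tsum_eq_single (fun i : Fin 0 => i.elim0)
        (fun u hu => absurd (funext fun i => i.elim0) (Ne.symm hu))]
      split_ifs <;> simp
    simpa [Hfun] using h1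
  | succ k ih =>
    intro w
    by_cases hwI : ((w : ℝ)) ∈ Set.Ioc (b-1) b
    case neg => rw [TS_zero_of_notmem C b w hwI]; exact zero_le
    set mw := ⌊(b - (w : ℝ))/ε⌋₊ with hmw
    rw [TS_succ]
    have hwa : (w : ℝ) ≤ a₀ := le_trans hwI.2 hb
    have hpt : ∀ v : ↥C.E,
        (if ((((w : ℝ)) ∈ Set.Ioc (b-1) b) ∧ (w : ℝ) < (v : ℝ)) then C.κ w v * TS C b v k else 0)
        ≤ (if ((w : ℝ) < (v : ℝ) ∧ (v : ℝ) ≤ (w : ℝ) + ε) then C.κ w v else 0) * Hfun ρ k mw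
          + (if ((w : ℝ) + ε < (v : ℝ) ∧ ((v : ℝ)) ∈ Set.Ioc (b-1) b) then C.κ w v else 0)
              * Hfun ρ k (mw - 1) := by
      intro v
      by_cases hcond : ((((w : ℝ)) ∈ Set.Ioc (b-1) b) ∧ (w : ℝ) < (v : ℝ))
      case neg => rw [if_neg hcond]; exact zero_le
      rw [if_pos hcond]
      by_cases hsm : (v : ℝ) ≤ (w : ℝ) + ε
      · -- small jump
        have h1 : TS C b v k ≤ Hfun ρ k mw := by
          refine le_trans (ih v) (Hfun_mono_j ρ k _ _ ?_)
          exact Nat.floor_mono (div_le_div_of_nonneg_right (by linarith [hcond.2]) hε.le)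
        calc C.κ w v * TS C b v k
            ≤ C.κ w v * Hfun ρ k mw := mul_le_mul_right h1 _
          _ = (if ((w : ℝ) < (v : ℝ) ∧ (v : ℝ) ≤ (w : ℝ) + ε) then C.κ w v else 0)
                * Hfun ρ k mw := by rw [if_pos ⟨hcond.2, hsm⟩]
          _ ≤ _ := le_add_right le_rfl
      · -- big jump
        push_neg at hsm
        by_cases hvI : ((v : ℝ)) ∈ Set.Ioc (b-1) b
        · have h1 : TS C b v k ≤ Hfun ρ k (mw - 1) := by
            refine le_trans (ih v) (Hfun_mono_j ρ k _ _ ?_)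
            have hfl : (b - (v : ℝ))/ε ≤ (b - (w : ℝ))/ε - 1 := by
              rw [le_sub_iff_add_le, div_add' _ _ _ (ne_of_gt hε)]
              refine div_le_div_of_nonneg_right (by linarith) hε.le
            refine le_trans (Nat.floor_mono hfl) ?_
            rw [show ((1:ℝ)) = ((1:ℕ):ℝ) by norm_num, Nat.floor_sub_natCast]
          calc C.κ w v * TS C b v k
              ≤ C.κ w v * Hfun ρ k (mw - 1) := mul_le_mul_right h1 _
            _ = (if ((w : ℝ) + ε < (v : ℝ) ∧ ((v : ℝ)) ∈ Set.Ioc (b-1) b) then C.κ w v else 0)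
                  * Hfun ρ k (mw - 1) := by rw [if_pos ⟨hsm, hvI⟩]
            _ ≤ _ := le_add_left le_rfl
        · rw [TS_zero_of_notmem C b v hvI, mul_zero]; exact zero_le
    refine le_trans (Summable.tsum_le_tsum hpt ENNReal.summable ENNReal.summable) ?_
    rw [Summable.tsum_add ENNReal.summable ENNReal.summable,
      ENNReal.tsum_mul_right, ENNReal.tsum_mul_right]
    have hsmall : (∑' v : ↥C.E, if ((w : ℝ) < (v : ℝ) ∧ (v : ℝ) ≤ (w : ℝ) + ε)
        then C.κ w v else 0) ≤ ρ := by
      refine le_trans (Summable.tsum_le_tsum (fun v => ?_) ENNReal.summable ENNReal.summable) (hκ w hwa)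
      by_cases h : ((w : ℝ) < (v : ℝ) ∧ (v : ℝ) ≤ (w : ℝ) + ε)
      · rw [if_pos h, if_pos h.2]
      · rw [if_neg h]; exact zero_le
    rcases Nat.eq_zero_or_pos mw with hm0 | hmpos
    · have hbig0 : (∑' v : ↥C.E, if ((w : ℝ) + ε < (v : ℝ) ∧ ((v : ℝ)) ∈ Set.Ioc (b-1) b)
          then C.κ w v else 0) = 0 := by
        convert tsum_zero with v
        rw [if_neg]
        rintro ⟨hlt, hvI⟩
        have h1 : (1:ℝ) ≤ (b - (w : ℝ))/ε := by
          rw [le_div_iff₀ hε]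
          have := hvI.2
          linarith
        have : 1 ≤ mw := Nat.le_floor (by exact_mod_cast h1)
        omega
      rw [hm0, hbig0, zero_mul, add_zero]
      calc (∑' v : ↥C.E, if ((w : ℝ) < (v : ℝ) ∧ (v : ℝ) ≤ (w : ℝ) + ε)
            then C.κ w v else 0) * Hfun ρ k 0
          ≤ ρ * Hfun ρ k 0 := mul_le_mul_left hsmall _
        _ = Hfun ρ (k+1) 0 := by rw [Hfun]
    · obtain ⟨j, hj⟩ : ∃ j, mw = j + 1 := ⟨mw - 1, by omega⟩
      have hbig1 : (∑' v : ↥C.E, if ((w : ℝ) + ε < (v : ℝ) ∧ ((v : ℝ)) ∈ Set.Ioc (b-1) b)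
          then C.κ w v else 0) ≤ 1 := by
        rw [← C.κprob w]
        refine Summable.tsum_le_tsum (fun v => ?_) ENNReal.summable ENNReal.summable
        split_ifs <;> simp
      calc (∑' v : ↥C.E, if ((w : ℝ) < (v : ℝ) ∧ (v : ℝ) ≤ (w : ℝ) + ε)
              then C.κ w v else 0) * Hfun ρ k mw
            + (∑' v : ↥C.E, if ((w : ℝ) + ε < (v : ℝ) ∧ ((v : ℝ)) ∈ Set.Ioc (b-1) b)
              then C.κ w v else 0) * Hfun ρ k (mw - 1)
          ≤ ρ * Hfun ρ k mw + 1 * Hfun ρ k (mw - 1) :=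
            add_le_add (mul_le_mul_left hsmall _) (mul_le_mul_left hbig1 _)
        _ = Hfun ρ (k+1) mw := by
            rw [one_mul, hj]
            show ρ * Hfun ρ k (j+1) + Hfun ρ k (j + 1 - 1) = Hfun ρ (k+1) (j+1)
            rw [Nat.add_sub_cancel, Hfun]

end ARaux

namespace ARaux

variable (C : ARProcess)

/-- appending finite paths -/
def appE {α : Type*} (s k : ℕ) : ((Fin (s+1) → α) × (Fin k → α)) ≃ (Fin (s+k+1) → α) :=
  (Fin.appendEquiv (s+1) k).trans
    (Equiv.arrowCongr (finCongr (by omega : s+1+k = s+k+1)) (Equiv.refl α))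

lemma appE_left {α : Type*} (s k : ℕ) (r : Fin (s+1) → α) (u : Fin k → α)
    {i : ℕ} (hi : i ≤ s) :
    appE s k (r, u) ⟨i, by omega⟩ = r ⟨i, by omega⟩ := by
  show Fin.append r u _ = _
  have h : (finCongr (by omega : s+1+k = s+k+1)).symm ⟨i, by omega⟩
      = Fin.castAdd k (⟨i, by omega⟩ : Fin (s+1)) := by
    apply Fin.ext; simp
  rw [h, Fin.append_left]

lemma appE_right {α : Type*} (s k : ℕ) (r : Fin (s+1) → α) (u : Fin k → α)
    {j : ℕ} (hj : j < k) :
    appE s k (r, u) ⟨s+1+j, by omega⟩ = u ⟨j, hj⟩ := by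
  show Fin.append r u _ = _
  have h : (finCongr (by omega : s+1+k = s+k+1)).symm ⟨s+1+j, by omega⟩
      = Fin.natAdd (s+1) (⟨j, hj⟩ : Fin k) := by
    apply Fin.ext; simp
  rw [h, Fin.append_right]

lemma cha_val {α : Type*} (w : α) {k : ℕ} (u : Fin k → α) {j : ℕ} (hj : j < k) :
    cha w u (j+1) = u ⟨j, hj⟩ := by
  unfold cha
  rw [dif_pos ⟨Nat.succ_pos j, hj⟩]
  rfl

/-- path entered `(b-1,b]` at time `s` and stayed there through time `t`, increasing -/
def Dpred (b : ℝ) (s t : ℕ) (ω : ℕ → ↥C.E) : Prop :=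
  (∀ j < s, ((ω j : ℝ)) ≤ b - 1) ∧ (∀ j, s ≤ j → j ≤ t → ((ω j : ℝ)) ∈ Set.Ioc (b-1) b) ∧
  (∀ i < t, ((ω i : ℝ)) < ((ω (i+1) : ℝ)))

/-- path entered `(b-1,b]` at time `s` -/
def Gpred (b : ℝ) (s : ℕ) (ω : ℕ → ↥C.E) : Prop :=
  (∀ j < s, ((ω j : ℝ)) ≤ b - 1 ∧ ((ω j : ℝ)) < ((ω (j+1) : ℝ))) ∧
  ((ω s : ℝ)) ∈ Set.Ioc (b-1) b

lemma q_left (s k : ℕ) (r : Fin (s+1) → ↥C.E) (u : Fin k → ↥C.E) {i : ℕ} (hi : i ≤ s) :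
    extend (s+k) (appE s k (r, u)) i = r ⟨i, by omega⟩ := by
  rw [extend_le (s+k) _ (by omega)]
  exact appE_left s k r u hi

lemma q_right (s k : ℕ) (r : Fin (s+1) → ↥C.E) (u : Fin k → ↥C.E) {j : ℕ} (hj : j ≤ k) :
    extend (s+k) (appE s k (r, u)) (s+j) = cha (r ⟨s, by omega⟩) u j := by
  cases j with
  | zero => rw [cha_zero]; exact q_left C s k r u le_rfl
  | succ j =>
    rw [extend_le (s+k) _ (by omega)]
    have h1 : (⟨s + (j+1), by omega⟩ : Fin (s+k+1)) = ⟨s+1+j, by omega⟩ := by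
      apply Fin.ext; simp; omega
    rw [h1, appE_right s k r u (by omega : j < k), cha_val _ u (by omega : j < k)]

lemma D_iff (b : ℝ) (s k : ℕ) (r : Fin (s+1) → ↥C.E) (u : Fin k → ↥C.E) :
    Dpred C b s (s+k) (extend (s+k) (appE s k (r, u))) ↔
      (Gpred C b s (extend s r) ∧ stay C b (r ⟨s, by omega⟩) u) := by
  have hrr : ∀ i (hi : i ≤ s), extend s r i = r ⟨i, Nat.lt_succ_of_le hi⟩ :=
    fun i hi => extend_le s r hi
  constructor
  · rintro ⟨h1, h2, h3⟩
    refine ⟨⟨fun j hj => ?_, ?_⟩, ⟨fun i hik => ?_, fun j hjk => ?_⟩⟩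
    · constructor
      · have := h1 j hj
        rwa [q_left C s k r u (by omega), ← hrr j (by omega)] at this
      · have := h3 j (by omega)
        rwa [q_left C s k r u (by omega), q_left C s k r u (by omega : j + 1 ≤ s),
          ← hrr j (by omega), ← hrr (j+1) (by omega)] at this
    · have := h2 s le_rfl (by omega)
      rwa [q_left C s k r u le_rfl, ← hrr s le_rfl] at this
    · have := h3 (s+i) (by omega)
      rwa [show s + i + 1 = s + (i+1) by omega, q_right C s k r u (by omega),
        q_right C s k r u (by omega : i + 1 ≤ k)] at this
    · have := h2 (s+j) (by omega) (by omega)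
      rwa [q_right C s k r u hjk] at this
  · rintro ⟨⟨hg1, hg2⟩, hs1, hs2⟩
    refine ⟨fun j hj => ?_, fun j hsj hjt => ?_, fun i hit => ?_⟩
    · have := (hg1 j hj).1
      rwa [hrr j (by omega), ← q_left C s k r u (by omega)] at this
    · obtain ⟨j', rfl⟩ : ∃ j', j = s + j' := ⟨j - s, by omega⟩
      have := hs2 j' (by omega)
      rwa [← q_right C s k r u (by omega)] at this
    · rcases Nat.lt_or_ge i s with h | h
      · have := (hg1 i h).2
        rwa [hrr i (by omega), hrr (i+1) (by omega),
          ← q_left C s k r u (by omega), ← q_left C s k r u (by omega : i + 1 ≤ s)] at this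
      · obtain ⟨i', rfl⟩ : ∃ i', i = s + i' := ⟨i - s, by omega⟩
        have := hs1 i' (by omega)
        rwa [← q_right C s k r u (by omega), ← q_right C s k r u (by omega : i' + 1 ≤ k),
          show s + (i' + 1) = s + i' + 1 by omega] at this

lemma W_split (x : ↥C.E) (s k : ℕ) (r : Fin (s+1) → ↥C.E) (u : Fin k → ↥C.E) :
    W C x (extend (s+k) (appE s k (r, u))) (s+k)
      = W C x (extend s r) s *
          ∏ i ∈ Finset.range k, C.κ (cha (r ⟨s, by omega⟩) u i) (cha (r ⟨s, by omega⟩) u (i+1)) := by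
  rw [W, W]
  have h0 : extend (s+k) (appE s k (r, u)) 0 = extend s r 0 := by
    rw [q_left C s k r u (by omega), extend_le s r (by omega)]
  rw [h0, Finset.prod_range_add, mul_assoc]
  congr 1
  congr 1
  · refine Finset.prod_congr rfl fun i hi => ?_
    have hi' := Finset.mem_range.mp hi
    rw [q_left C s k r u (by omega), q_left C s k r u (by omega : i + 1 ≤ s),
      extend_le s r (by omega), extend_le s r (by omega : i + 1 ≤ s)]
  · refine Finset.prod_congr rfl fun j hj => ?_
    have hj' := Finset.mem_range.mp hj
    rw [show s + j + 1 = s + (j+1) by omega, q_right C s k r u (by omega),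
      q_right C s k r u (by omega : j + 1 ≤ k)]

lemma D_decomp (x : ↥C.E) (b : ℝ) (s k : ℕ) :
    C.P x {ω | Dpred C b s (s+k) ω}
      = ∑' r : Fin (s+1) → ↥C.E,
          if Gpred C b s (extend s r)
            then W C x (extend s r) s * TS C b (r ⟨s, by omega⟩) k else 0 := by
  have hQ : ∀ ω ω' : ℕ → ↥C.E, (∀ i ≤ s+k, ω i = ω' i) →
      Dpred C b s (s+k) ω → Dpred C b s (s+k) ω' := by
    rintro ω ω' h ⟨h1, h2, h3⟩
    refine ⟨fun j hj => by rw [← h j (by omega)]; exact h1 j hj,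
      fun j hsj hjt => by rw [← h j (by omega)]; exact h2 j hsj hjt,
      fun i hit => by rw [← h i (by omega), ← h (i+1) (by omega)]; exact h3 i hit⟩
  rw [findim C x (s+k) _ hQ]
  rw [← Equiv.tsum_eq (appE s k (α := ↥C.E))]
  rw [ENNReal.tsum_prod']
  refine tsum_congr fun r => ?_
  have hpt : ∀ u : Fin k → ↥C.E,
      (if Dpred C b s (s+k) (extend (s+k) (appE s k (r, u)))
        then W C x (extend (s+k) (appE s k (r, u))) (s+k) else 0)
      = (if Gpred C b s (extend s r) then (1:ℝ≥0∞) else 0) *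
          (if stay C b (r ⟨s, by omega⟩) u
            then W C x (extend s r) s *
              ∏ i ∈ Finset.range k, C.κ (cha (r ⟨s, by omega⟩) u i) (cha (r ⟨s, by omega⟩) u (i+1))
            else 0) := by
    intro u
    by_cases hG : Gpred C b s (extend s r)
    · rw [if_pos hG, one_mul]
      by_cases hs : stay C b (r ⟨s, by omega⟩) u
      · rw [if_pos hs, if_pos ((D_iff C b s k r u).mpr ⟨hG, hs⟩), W_split]
      · rw [if_neg hs, if_neg (fun hc => hs ((D_iff C b s k r u).mp hc).2)]
    · rw [if_neg hG, zero_mul, if_neg (fun hc => hG ((D_iff C b s k r u).mp hc).1)]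
  rw [tsum_congr hpt, ENNReal.tsum_mul_left]
  have h2 : ∑' u : Fin k → ↥C.E,
      (if stay C b (r ⟨s, by omega⟩) u
        then W C x (extend s r) s *
          ∏ i ∈ Finset.range k, C.κ (cha (r ⟨s, by omega⟩) u i) (cha (r ⟨s, by omega⟩) u (i+1))
        else 0)
      = W C x (extend s r) s * TS C b (r ⟨s, by omega⟩) k := by
    rw [TS, ← ENNReal.tsum_mul_left]
    exact tsum_congr fun u => by rw [mul_ite, mul_zero]
  rw [h2, boole_mul]

end ARaux

namespace ARaux

variable (C : ARProcess)

/-- path is in `(b-1,b]` at time `t`, having increased so far -/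
def Apred (b : ℝ) (t : ℕ) (ω : ℕ → ↥C.E) : Prop :=
  (((ω t : ℝ)) ∈ Set.Ioc (b-1) b) ∧ (∀ i < t, ((ω i : ℝ)) < ((ω (i+1) : ℝ)))

lemma Gmeas (b : ℝ) (s : ℕ) : MeasurableSet {ω : ℕ → ↥C.E | Gpred C b s ω} := by
  refine measFD C s _ ?_
  rintro ω ω' h ⟨h1, h2⟩
  refine ⟨fun j hj => ?_, ?_⟩
  · rw [← h j (by omega), ← h (j+1) (by omega)]; exact h1 j hj
  · rw [← h s le_rfl]; exact h2

lemma Gsum_le_one (x : ↥C.E) (b : ℝ) :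
    ∑' s : ℕ, C.P x {ω | Gpred C b s ω} ≤ 1 := by
  have := C.prob x
  have hdisj : Pairwise (Function.onFun Disjoint (fun s => {ω : ℕ → ↥C.E | Gpred C b s ω})) := by
    intro s s' hne
    rcases lt_or_gt_of_ne hne with h | h
    · refine Set.disjoint_left.mpr fun ω hω hω' => ?_
      exact absurd hω.2.1 (not_lt.mpr (hω'.1 s h).1)
    · refine Set.disjoint_left.mpr fun ω hω hω' => ?_
      exact absurd hω'.2.1 (not_lt.mpr (hω.1 s' h).1)
  rw [← measure_iUnion hdisj (fun s => Gmeas C b s)]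
  exact prob_le_one

lemma occupation (x : ↥C.E) (b : ℝ) (ε : ℝ) (hε : 0 < ε) (ρ : ℝ≥0∞) (a₀ : ℝ)
    (hκ : ∀ w : ↥C.E, (w : ℝ) ≤ a₀ →
      (∑' v : ↥C.E, if ((v : ℝ) ≤ (w : ℝ) + ε) then C.κ w v else 0) ≤ ρ)
    (hb : b ≤ a₀) :
    ∑' t : ℕ, C.P x {ω | Apred C b t ω} ≤ ∑' k : ℕ, Hfun ρ k (⌊1/ε⌋₊) := by
  set m := ⌊1/ε⌋₊ with hm
  -- each A-event is covered by entry-time events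
  have A_sub : ∀ t, {ω : ℕ → ↥C.E | Apred C b t ω}
      ⊆ ⋃ s ∈ Finset.range (t+1), {ω : ℕ → ↥C.E | Dpred C b s t ω} := by
    intro t ω hω
    obtain ⟨h1, h2⟩ := hω
    have mono2 : ∀ j, j ≤ t → ∀ i, i ≤ j → ((ω i : ℝ)) ≤ ((ω j : ℝ)) := by
      intro j
      induction j with
      | zero => intro _ i hi; rw [Nat.le_zero.mp hi]
      | succ j ihj =>
        intro hjt i hi
        rcases Nat.lt_succ_iff_lt_or_eq.mp (Nat.lt_succ_of_le hi) with h | h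
        · exact le_trans (ihj (by omega) i (by omega)) (le_of_lt (h2 j (by omega)))
        · rw [h]
    have hex : ∃ s, b - 1 < ((ω s : ℝ)) := ⟨t, h1.1⟩
    have hst : Nat.find hex ≤ t := Nat.find_le h1.1
    refine Set.mem_biUnion (show Nat.find hex ∈ Finset.range (t+1) from Finset.mem_range.mpr (by omega)) ?_
    refine ⟨fun j hj => ?_, fun j hsj hjt => ?_, h2⟩
    · exact not_lt.mp (Nat.find_min hex hj)
    · constructor
      · exact lt_of_lt_of_le (Nat.find_spec hex) (mono2 j hjt _ hsj)
      · exact le_trans (mono2 t le_rfl j hjt) h1.2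
  calc ∑' t : ℕ, C.P x {ω | Apred C b t ω}
      ≤ ∑' t : ℕ, ∑ s ∈ Finset.range (t+1), C.P x {ω | Dpred C b s t ω} := by
        refine Summable.tsum_le_tsum (fun t => ?_) ENNReal.summable ENNReal.summable
        exact le_trans (measure_mono (A_sub t)) (measure_biUnion_finset_le _ _)
    _ = ∑' t : ℕ, ∑' s : ℕ, (if s ≤ t then C.P x {ω | Dpred C b s t ω} else 0) := by
        refine tsum_congr fun t => ?_
        rw [tsum_eq_sum (s := Finset.range (t+1))
          (fun s hs => if_neg (fun hc => hs (Finset.mem_range.mpr (by omega))))]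
        exact (Finset.sum_congr rfl fun s hs =>
          by rw [if_pos (Nat.lt_succ_iff.mp (Finset.mem_range.mp hs))]).symm
    _ = ∑' s : ℕ, ∑' t : ℕ, (if s ≤ t then C.P x {ω | Dpred C b s t ω} else 0) :=
        ENNReal.tsum_comm
    _ = ∑' s : ℕ, ∑' k : ℕ, C.P x {ω | Dpred C b s (s+k) ω} := by
        refine tsum_congr fun s => ?_
        rw [← Function.Injective.tsum_eq (g := fun k => s + k)
          (f := fun t => if s ≤ t then C.P x {ω | Dpred C b s t ω} else 0)
          (fun a a' h => Nat.add_left_cancel h) ?_]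
        · exact (tsum_congr fun k => by rw [if_pos (Nat.le_add_right s k)]).symm
        · intro t ht
          rcases Nat.lt_or_ge t s with h | h
          · exact absurd (if_neg (by omega)) ht
          · exact ⟨t - s, show s + (t - s) = t by omega⟩
    _ ≤ ∑' s : ℕ, ∑' k : ℕ, C.P x {ω | Gpred C b s ω} * Hfun ρ k m := by
        refine Summable.tsum_le_tsum (fun s => Summable.tsum_le_tsum (fun k => ?_) ENNReal.summable
          ENNReal.summable) ENNReal.summable ENNReal.summable
        rw [D_decomp C x b s k]
        have hG : C.P x {ω | Gpred C b s ω}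
            = ∑' r : Fin (s+1) → ↥C.E,
                if Gpred C b s (extend s r) then W C x (extend s r) s else 0 := by
          refine findim C x s _ ?_
          rintro ω ω' h ⟨h1, h2⟩
          refine ⟨fun j hj => ?_, ?_⟩
          · rw [← h j (by omega), ← h (j+1) (by omega)]; exact h1 j hj
          · rw [← h s le_rfl]; exact h2
        rw [hG, ← ENNReal.tsum_mul_right]
        refine Summable.tsum_le_tsum (fun r => ?_) ENNReal.summable ENNReal.summable
        by_cases hGr : Gpred C b s (extend s r)
        · rw [if_pos hGr, if_pos hGr]
          refine mul_le_mul_right ?_ _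
          have hrl : ((r ⟨s, by omega⟩ : ↥C.E) : ℝ) ∈ Set.Ioc (b-1) b := by
            have := hGr.2
            rwa [extend_le s r le_rfl] at this
          refine le_trans (TS_le C ε hε ρ a₀ hκ b hb k _) ?_
          refine Hfun_mono_j ρ k _ _ ?_
          refine Nat.floor_mono (div_le_div_of_nonneg_right ?_ hε.le)
          have := hrl.1
          linarith
        · rw [if_neg hGr, if_neg hGr, zero_mul]
    _ = (∑' s : ℕ, C.P x {ω | Gpred C b s ω}) * ∑' k : ℕ, Hfun ρ k m := by
        rw [← ENNReal.tsum_mul_right]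
        exact tsum_congr fun s => ENNReal.tsum_mul_left
    _ ≤ 1 * ∑' k : ℕ, Hfun ρ k m := mul_le_mul_left (Gsum_le_one C x b) _
    _ = ∑' k : ℕ, Hfun ρ k m := one_mul _

end ARaux

namespace ARaux

variable (C : ARProcess)

lemma F_nonneg : ∀ t, 0 ≤ C.F t := Monotone.le_of_tendsto C.F_mono C.F_bot

lemma F_le_one : ∀ t, C.F t ≤ 1 := Monotone.ge_of_tendsto C.F_mono C.F_top

lemma exists_eps : ∃ ε : ℝ, 0 < ε ∧ ContinuousAt C.F ε ∧ C.F ε < 1 := by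
  have ht0 : ∃ t₀, 0 < t₀ ∧ C.F t₀ < 1 := by
    by_contra h
    push_neg at h
    have hzero : ∀ t ∈ Set.Ioi (0:ℝ), (fun t => 1 - C.F t) t = (fun _ => (0:ℝ)) t := by
      intro t ht
      have h1 := h t ht
      have h2 := F_le_one C t
      simp only
      linarith
    have hint : ∫ t in Set.Ioi (0:ℝ), (1 - C.F t) = 0 := by
      rw [setIntegral_congr_fun measurableSet_Ioi hzero, integral_zero]
    linarith [C.mean_pos]
  obtain ⟨t₀, ht₀, hF₀⟩ := ht0
  have hD : Set.Countable {x : ℝ | ¬ContinuousAt C.F x} :=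
    C.F_mono.countable_not_continuousAt
  have hdense : Dense ({x : ℝ | ¬ContinuousAt C.F x}ᶜ) := hD.dense_compl ℝ
  obtain ⟨ε, hεc, hεmem⟩ := hdense.exists_mem_open isOpen_Ioo (Set.nonempty_Ioo.mpr ht₀)
  refine ⟨ε, hεmem.1, not_not.mp hεc, ?_⟩
  exact lt_of_le_of_lt (C.F_mono hεmem.2.le) hF₀

lemma exists_a0 (ε : ℝ) (hc : ContinuousAt C.F ε) (hF : C.F ε < 1) :
    ∃ a₀ : ℝ, ∀ w : ↥C.E, (w : ℝ) ≤ a₀ →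
      (∑' v : ↥C.E, if ((v : ℝ) ≤ (w : ℝ) + ε) then C.κ w v else 0)
        ≤ ENNReal.ofReal ((1 + C.F ε)/2) := by
  have htend := C.F_conv ε hc
  have hev : ∀ᶠ w : ↥C.E in comap (fun x : ↥C.E => (x : ℝ)) atBot,
      ((C.P w) {ω | ((ω 1 : ℝ)) - ((w : ℝ)) ≤ ε}).toReal < (1 + C.F ε)/2 :=
    htend.eventually_lt_const (by linarith)
  rw [Filter.eventually_comap, Filter.eventually_atBot] at hev
  obtain ⟨a₀, ha⟩ := hev
  refine ⟨a₀, fun w hw => ?_⟩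
  have hprob := C.prob w
  have h1 := ha (w : ℝ) hw w rfl
  have h2 : C.P w {ω | ((ω 1 : ℝ)) - ((w : ℝ)) ≤ ε} ≤ ENNReal.ofReal ((1 + C.F ε)/2) := by
    rw [ENNReal.le_ofReal_iff_toReal_le (measure_ne_top _ _)
      (by linarith [F_nonneg C ε])]
    exact h1.le
  calc (∑' v : ↥C.E, if ((v : ℝ) ≤ (w : ℝ) + ε) then C.κ w v else 0)
      = ∑' v : ↥C.E, if ((v : ℝ) - (w : ℝ) ≤ ε) then C.κ w v else 0 := by
        refine tsum_congr fun v => ?_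
        congr 1
        rw [sub_le_iff_le_add, add_comm]
    _ = C.P w {ω | ((ω 1 : ℝ)) - ((w : ℝ)) ≤ ε} := (step_marginal C w ε).symm
    _ ≤ _ := h2

end ARaux

/-- (Lemma 3.4 of Bruhn.)  For an AR-process there are `a* ∈ ℝ` and
`û > 0` such that for every measurable `l : ℝ → [0,∞)`, all `y < z < a*` and every state
`x < y`, `E_x[Σ_{t=τ(y)}^{τ(z)-1} l(S_t)] ≤ û·Σ_{n=⌊y⌋}^{⌈z⌉} sup_{t ∈ (n-1,n]} l(t)`
(the time range `τ(y) ≤ t < τ(z)` is expressed by "`[y,∞)` has been reached by time `t` but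
`[z,∞)` has not"). -/
theorem stmt7 (C : ARProcess) :
    ∃ (astar : ℝ) (u : ℝ), 0 < u ∧
      ∀ l : ℝ → ℝ, Measurable l → (∀ t, 0 ≤ l t) →
      ∀ (y z : ℝ) (x : ↥C.E), (x : ℝ) < y → y < z → z < astar →
        (∫⁻ ω, ∑' t : ℕ,
            (if (∃ s ≤ t, y ≤ ((ω s : ℝ))) ∧ (∀ s ≤ t, ((ω s : ℝ)) < z)
              then ENNReal.ofReal (l ((ω t : ℝ))) else 0) ∂(C.P x))
          ≤ ENNReal.ofReal u *
              ∑ n ∈ Finset.Icc (Int.floor y) (Int.ceil z),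
                ⨆ t ∈ Set.Ioc ((n : ℝ) - 1) (n : ℝ), ENNReal.ofReal (l t) := by
  obtain ⟨ε, hε, hεc, hεF⟩ := ARaux.exists_eps C
  obtain ⟨a₀, ha₀⟩ := ARaux.exists_a0 C ε hεc hεF
  set ρ : ENNReal := ENNReal.ofReal ((1 + C.F ε)/2) with hρdef
  have hρ1 : ρ < 1 := ENNReal.ofReal_lt_one.mpr (by linarith)
  set m := ⌊1/ε⌋₊ with hm
  set U := ∑' k, ARaux.Hfun ρ k m with hUdef
  have hUne : U ≠ ⊤ := ARaux.Hfun_tsum_ne_top hρ1 m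
  have hUle : U ≤ ENNReal.ofReal (U.toReal + 1) := by
    conv_lhs => rw [← ENNReal.ofReal_toReal hUne]
    exact ENNReal.ofReal_le_ofReal (by linarith)
  refine ⟨a₀ - 1, U.toReal + 1, by positivity, ?_⟩
  intro l hl hl0 y z x hxy hyz hza
  have hprob := C.prob x
  have hcondmeas : ∀ t : ℕ, MeasurableSet {ω : ℕ → ↥C.E |
      (∃ s ≤ t, y ≤ ((ω s : ℝ))) ∧ (∀ s ≤ t, ((ω s : ℝ)) < z)} := by
    intro t
    refine ARaux.measFD C t _ ?_
    rintro ω ω' h ⟨⟨s, hs, hys⟩, h2⟩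
    exact ⟨⟨s, hs, by rwa [← h s hs]⟩, fun s hs => by rw [← h s hs]; exact h2 s hs⟩
  have hfmeas : ∀ t : ℕ, Measurable (fun ω : ℕ → ↥C.E =>
      if (∃ s ≤ t, y ≤ ((ω s : ℝ))) ∧ (∀ s ≤ t, ((ω s : ℝ)) < z)
        then ENNReal.ofReal (l ((ω t : ℝ))) else 0) := by
    intro t
    have heq : (fun ω : ℕ → ↥C.E =>
        if (∃ s ≤ t, y ≤ ((ω s : ℝ))) ∧ (∀ s ≤ t, ((ω s : ℝ)) < z)
          then ENNReal.ofReal (l ((ω t : ℝ))) else 0)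
        = Set.indicator {ω : ℕ → ↥C.E | (∃ s ≤ t, y ≤ ((ω s : ℝ))) ∧ (∀ s ≤ t, ((ω s : ℝ)) < z)}
            (fun ω => ENNReal.ofReal (l ((ω t : ℝ)))) := by
      funext ω; rw [Set.indicator_apply]; rfl
    rw [heq]
    exact (ENNReal.measurable_ofReal.comp (hl.comp
      (measurable_subtype_coe.comp (measurable_pi_apply t)))).indicator (hcondmeas t)
  have hApredmeas : ∀ (n : ℤ) (t : ℕ),
      MeasurableSet {ω : ℕ → ↥C.E | ARaux.Apred C ((n : ℝ)) t ω} := by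
    intro n t
    refine ARaux.measFD C t _ ?_
    rintro ω ω' h ⟨h1, h2⟩
    refine ⟨by rwa [← h t le_rfl], fun i hi => ?_⟩
    rw [← h i (by omega), ← h (i+1) (by omega)]; exact h2 i hi
  have hMae : ∀ᵐ ω ∂(C.P x), ∀ s : ℕ, ((ω s : ℝ)) < ((ω (s+1) : ℝ)) := by
    rw [ae_iff]
    have hset : {ω : ℕ → ↥C.E | ¬ ∀ s : ℕ, ((ω s : ℝ)) < ((ω (s+1) : ℝ))}
        = ⋃ s : ℕ, {ω : ℕ → ↥C.E | ((ω (s+1) : ℝ)) ≤ ((ω s : ℝ))} := by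
      ext ω
      simp only [Set.mem_setOf_eq, Set.mem_iUnion, not_forall, not_lt]
    rw [hset]
    exact measure_iUnion_null fun s => C.inc_pos x s
  have key : ∀ t : ℕ, (∫⁻ ω, (if (∃ s ≤ t, y ≤ ((ω s : ℝ))) ∧ (∀ s ≤ t, ((ω s : ℝ)) < z)
        then ENNReal.ofReal (l ((ω t : ℝ))) else 0) ∂(C.P x))
      ≤ ∑ n ∈ Finset.Icc (Int.floor y) (Int.ceil z),
          (⨆ r ∈ Set.Ioc ((n : ℝ) - 1) (n : ℝ), ENNReal.ofReal (l r))
            * C.P x {ω | ARaux.Apred C ((n : ℝ)) t ω} := by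
    intro t
    have hptwise : ∀ᵐ ω ∂(C.P x),
        (if (∃ s ≤ t, y ≤ ((ω s : ℝ))) ∧ (∀ s ≤ t, ((ω s : ℝ)) < z)
          then ENNReal.ofReal (l ((ω t : ℝ))) else 0)
        ≤ ∑ n ∈ Finset.Icc (Int.floor y) (Int.ceil z),
            Set.indicator {ω : ℕ → ↥C.E | ARaux.Apred C ((n : ℝ)) t ω}
              (fun _ => ⨆ r ∈ Set.Ioc ((n : ℝ) - 1) (n : ℝ), ENNReal.ofReal (l r)) ω := by
      refine hMae.mono fun ω hω => ?_
      by_cases hcond : (∃ s ≤ t, y ≤ ((ω s : ℝ))) ∧ (∀ s ≤ t, ((ω s : ℝ)) < z)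
      case neg => rw [if_neg hcond]; exact zero_le
      rw [if_pos hcond]
      obtain ⟨⟨s, hst, hys⟩, hlt⟩ := hcond
      have hmono : Monotone (fun i : ℕ => ((ω i : ℝ))) :=
        (strictMono_nat_of_lt_succ hω).monotone
      have hyt : y ≤ ((ω t : ℝ)) := le_trans hys (hmono hst)
      have hzt : ((ω t : ℝ)) < z := hlt t le_rfl
      have hmem : (⌈((ω t : ℝ))⌉ : ℤ) ∈ Finset.Icc (Int.floor y) (Int.ceil z) := by
        refine Finset.mem_Icc.mpr ⟨?_, Int.ceil_le_ceil hzt.le⟩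
        have h1 : (((Int.floor y) : ℤ) : ℝ) ≤ ((⌈((ω t : ℝ))⌉ : ℤ) : ℝ) :=
          le_trans (Int.floor_le y) (le_trans hyt (Int.le_ceil _))
        exact_mod_cast h1
      have hIo : ((ω t : ℝ)) ∈ Set.Ioc (((⌈((ω t : ℝ))⌉ : ℤ) : ℝ) - 1) ((⌈((ω t : ℝ))⌉ : ℤ) : ℝ) := by
        constructor
        · have := Int.ceil_lt_add_one ((ω t : ℝ)); linarith
        · exact Int.le_ceil _
      have hA : ω ∈ {ω : ℕ → ↥C.E | ARaux.Apred C (((⌈((ω t : ℝ))⌉ : ℤ) : ℝ)) t ω} :=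
        ⟨hIo, fun i _ => hω i⟩
      refine le_trans ?_ (Finset.single_le_sum (f := fun n : ℤ =>
        Set.indicator {ω : ℕ → ↥C.E | ARaux.Apred C ((n : ℝ)) t ω}
          (fun _ => ⨆ r ∈ Set.Ioc ((n : ℝ) - 1) (n : ℝ), ENNReal.ofReal (l r)) ω)
        (fun n _ => zero_le) hmem)
      refine le_trans (le_biSup (fun r => ENNReal.ofReal (l r)) hIo) ?_
      exact le_of_eq (Set.indicator_of_mem hA
        (fun _ => ⨆ r ∈ Set.Ioc (((⌈((ω t : ℝ))⌉ : ℤ) : ℝ) - 1) ((⌈((ω t : ℝ))⌉ : ℤ) : ℝ),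
          ENNReal.ofReal (l r))).symm
    refine le_trans (lintegral_mono_ae hptwise) ?_
    rw [lintegral_finset_sum _ (fun n _ => measurable_const.indicator (hApredmeas n t))]
    refine Finset.sum_le_sum fun n _ => ?_
    rw [lintegral_indicator_const (hApredmeas n t)]
  rw [lintegral_tsum (fun t => (hfmeas t).aemeasurable)]
  refine le_trans (Summable.tsum_le_tsum key ENNReal.summable ENNReal.summable) ?_
  rw [Summable.tsum_finsetSum (fun n _ => ENNReal.summable)]
  have hocc : ∀ n ∈ Finset.Icc (Int.floor y) (Int.ceil z),
      (∑' t : ℕ, C.P x {ω | ARaux.Apred C ((n : ℝ)) t ω}) ≤ U := by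
    intro n hn
    have hb : ((n : ℝ)) ≤ a₀ := by
      have h1 : (n : ℝ) ≤ ((Int.ceil z : ℤ) : ℝ) :=
        Int.cast_le.mpr (Finset.mem_Icc.mp hn).2
      have h2 := Int.ceil_lt_add_one z
      linarith
    exact ARaux.occupation C x ((n : ℝ)) ε hε ρ a₀ ha₀ hb
  calc ∑ n ∈ Finset.Icc (Int.floor y) (Int.ceil z),
        ∑' t : ℕ, (⨆ r ∈ Set.Ioc ((n : ℝ) - 1) (n : ℝ), ENNReal.ofReal (l r))
          * C.P x {ω | ARaux.Apred C ((n : ℝ)) t ω}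
      = ∑ n ∈ Finset.Icc (Int.floor y) (Int.ceil z),
        (⨆ r ∈ Set.Ioc ((n : ℝ) - 1) (n : ℝ), ENNReal.ofReal (l r))
          * ∑' t : ℕ, C.P x {ω | ARaux.Apred C ((n : ℝ)) t ω} :=
        Finset.sum_congr rfl fun n _ => ENNReal.tsum_mul_left
    _ ≤ ∑ n ∈ Finset.Icc (Int.floor y) (Int.ceil z),
        (⨆ r ∈ Set.Ioc ((n : ℝ) - 1) (n : ℝ), ENNReal.ofReal (l r))
          * ENNReal.ofReal (U.toReal + 1) :=
        Finset.sum_le_sum fun n hn => mul_le_mul_right (le_trans (hocc n hn) hUle) _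
    _ = ENNReal.ofReal (U.toReal + 1) *
        ∑ n ∈ Finset.Icc (Int.floor y) (Int.ceil z),
          ⨆ r ∈ Set.Ioc ((n : ℝ) - 1) (n : ℝ), ENNReal.ofReal (l r) := by
        rw [← Finset.sum_mul, mul_comm]
end

section
/- As n → ∞, E[I_n·log I_n] = (1/b)·n·log n + E[V·log V]·n + o(n). -/
open MeasureTheory Filter Topology Asymptotics

noncomputable def binProb (m k : ℕ) (p : ℝ) : ℝ := (m.choose k : ℝ) * p ^ k * (1 - p) ^ (m - k)

lemma binProb_sum (m : ℕ) (p : ℝ) : ∑ k ∈ Finset.range (m + 1), binProb m k p = 1 := by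
  have h := add_pow p (1 - p) m
  rw [add_sub_cancel, one_pow] at h
  rw [h]
  apply Finset.sum_congr rfl
  intro k _
  simp only [binProb]; ring

lemma binProb_nonneg {m k : ℕ} {p : ℝ} (hp : p ∈ Set.Icc (0:ℝ) 1) : 0 ≤ binProb m k p := by
  obtain ⟨h0, h1⟩ := hp
  have h2 : (0:ℝ) ≤ 1 - p := by linarith
  unfold binProb
  positivity

lemma binProb_mean (m : ℕ) (p : ℝ) :
    ∑ k ∈ Finset.range (m + 1), (k : ℝ) * binProb m k p = m * p := by
  have h := bernsteinPolynomial.sum_smul ℝ m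
  have h2 := congrArg (Polynomial.eval p) h
  simp only [Polynomial.eval_finset_sum, Polynomial.eval_smul, Polynomial.eval_X,
    bernsteinPolynomial, Polynomial.eval_mul, Polynomial.eval_pow, Polynomial.eval_natCast,
    Polynomial.eval_sub, Polynomial.eval_one, smul_eq_mul, nsmul_eq_mul] at h2
  rw [← h2]
  apply Finset.sum_congr rfl
  intro k _
  simp only [binProb]

open unitInterval in
lemma bernstein_unif (g : ℝ → ℝ) (hg : Continuous g) {ε : ℝ} (hε : 0 < ε) :
    ∀ᶠ m : ℕ in atTop, ∀ p ∈ Set.Icc (0:ℝ) 1,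
      |(∑ k ∈ Finset.range (m + 1), g ((k : ℝ) / m) * binProb m k p) - g p| ≤ ε := by
  set G : C(I, ℝ) := ⟨fun x => g x, hg.comp continuous_subtype_val⟩ with hG
  have h := bernsteinApproximation_uniform G
  rw [Metric.tendsto_atTop] at h
  obtain ⟨N, hN⟩ := h ε hε
  filter_upwards [eventually_ge_atTop N] with m hm p hp
  have key : (∑ k ∈ Finset.range (m + 1), g ((k : ℝ) / m) * binProb m k p)
      = bernsteinApproximation m G ⟨p, hp⟩ := by
    rw [bernsteinApproximation.apply]
    rw [← Fin.sum_univ_eq_sum_range (fun k => g ((k : ℝ) / m) * binProb m k p) (m+1)]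
    apply Finset.sum_congr rfl
    intro k _
    rw [bernstein_apply]
    simp only [binProb, bernstein.z, hG, ContinuousMap.coe_mk]
    rw [smul_eq_mul, mul_comm]
  rw [key]
  have := ContinuousMap.dist_apply_le_dist (f := bernsteinApproximation m G) (g := G) ⟨p, hp⟩
  have h2 := (this.trans_lt (hN m hm)).le
  rw [Real.dist_eq] at h2
  exact h2

lemma unif_est (s₁ : ℕ) {ε : ℝ} (hε : 0 < ε) :
    ∀ᶠ m : ℕ in atTop, ∀ p ∈ Set.Icc (0:ℝ) 1,
      |(∑ k ∈ Finset.range (m + 1),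
            (((k + s₁ : ℕ) : ℝ) * Real.log ((k + s₁ : ℕ) : ℝ)) * binProb m k p)
          - (((m : ℝ) * p + s₁) * Real.log m + m * (p * Real.log p))| ≤ ε * m := by
  set φ : ℝ → ℝ := fun x => x * Real.log x with hφ
  -- uniform continuity of φ on [0,2]
  have hφc : Continuous φ := Real.continuous_mul_log
  have hUC : UniformContinuousOn φ (Set.Icc (0:ℝ) 2) :=
    (isCompact_Icc).uniformContinuousOn_of_continuous hφc.continuousOn
  rw [Metric.uniformContinuousOn_iff] at hUC
  obtain ⟨δ, hδ, hδc⟩ := hUC (ε/2) (by linarith)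
  have hsm : Tendsto (fun m : ℕ => (s₁ : ℝ) / m) atTop (𝓝 0) :=
    tendsto_const_div_atTop_nhds_zero_nat _
  filter_upwards [bernstein_unif φ hφc (show (0:ℝ) < ε/2 by linarith),
    eventually_ge_atTop 1, eventually_ge_atTop s₁,
    hsm.eventually (gt_mem_nhds hδ)] with m hB hm1 hms hmδ p hp
  have hm0 : (m : ℝ) ≠ 0 := by positivity
  have hm0' : (0:ℝ) < m := by positivity
  -- key identity
  have key : ∀ j : ℕ, ((j : ℝ)) * Real.log j = (j : ℝ) * Real.log m + m * φ ((j : ℝ) / m) := by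
    intro j
    rcases Nat.eq_zero_or_pos j with h | h
    · subst h; simp [hφ]
    · have hj : (j : ℝ) ≠ 0 := by positivity
      simp only [hφ]
      rw [Real.log_div hj hm0]
      field_simp
      ring
  have e1 : (∑ k ∈ Finset.range (m + 1),
        (((k + s₁ : ℕ) : ℝ) * Real.log ((k + s₁ : ℕ) : ℝ)) * binProb m k p)
      = Real.log m * ((m : ℝ) * p) + (s₁ : ℝ) * Real.log m
        + (m : ℝ) * ∑ k ∈ Finset.range (m + 1), φ (((k : ℝ) + s₁) / m) * binProb m k p := by
    have step : ∀ k ∈ Finset.range (m + 1),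
        (((k + s₁ : ℕ) : ℝ) * Real.log ((k + s₁ : ℕ) : ℝ)) * binProb m k p
        = Real.log m * ((k : ℝ) * binProb m k p) + ((s₁ : ℝ) * Real.log m) * binProb m k p
          + (m : ℝ) * (φ (((k : ℝ) + s₁) / m) * binProb m k p) := by
      intro k _
      have := key (k + s₁)
      push_cast at this ⊢
      rw [this]
      ring
    rw [Finset.sum_congr rfl step]
    rw [Finset.sum_add_distrib, Finset.sum_add_distrib, ← Finset.mul_sum, ← Finset.mul_sum,
      ← Finset.mul_sum, binProb_mean, binProb_sum, mul_one]
  rw [e1]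
  -- now reduce to the Bernstein estimate plus uniform continuity
  have hw : ∀ k, 0 ≤ binProb m k p := fun k => binProb_nonneg hp
  have hsum1 : ∑ k ∈ Finset.range (m + 1), binProb m k p = 1 := binProb_sum m p
  have hshift : |(∑ k ∈ Finset.range (m + 1), φ (((k : ℝ) + s₁) / m) * binProb m k p)
      - (∑ k ∈ Finset.range (m + 1), φ ((k : ℝ) / m) * binProb m k p)| ≤ ε / 2 := by
    rw [← Finset.sum_sub_distrib]
    refine (Finset.abs_sum_le_sum_abs _ _).trans ?_
    have : ∀ k ∈ Finset.range (m + 1),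
        |φ (((k : ℝ) + s₁) / m) * binProb m k p - φ ((k : ℝ) / m) * binProb m k p|
          ≤ (ε / 2) * binProb m k p := by
      intro k hk
      rw [← sub_mul, abs_mul, abs_of_nonneg (hw k)]
      apply mul_le_mul_of_nonneg_right _ (hw k)
      have hkm : (k : ℝ) ≤ m := by
        have := Finset.mem_range.mp hk
        exact_mod_cast Nat.lt_succ_iff.mp this
      have h1 : ((k : ℝ) + s₁) / m ∈ Set.Icc (0:ℝ) 2 := by
        constructor
        · positivity
        · rw [div_le_iff₀ hm0']
          have : (s₁ : ℝ) ≤ m := by exact_mod_cast hms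
          linarith
      have h2 : (k : ℝ) / m ∈ Set.Icc (0:ℝ) 2 := by
        constructor
        · positivity
        · rw [div_le_iff₀ hm0']; linarith
      have hd : dist (((k : ℝ) + s₁) / m) ((k : ℝ) / m) < δ := by
        rw [Real.dist_eq, add_div, add_sub_cancel_left, abs_of_nonneg (by positivity)]
        exact hmδ
      have := hδc _ h1 _ h2 hd
      rw [Real.dist_eq] at this
      exact this.le
    refine (Finset.sum_le_sum this).trans ?_
    rw [← Finset.mul_sum, hsum1, mul_one]
  have hbern := hB p hp
  -- final triangle inequality
  have expand : Real.log m * ((m : ℝ) * p) + (s₁ : ℝ) * Real.log m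
        + (m : ℝ) * ∑ k ∈ Finset.range (m + 1), φ (((k : ℝ) + s₁) / m) * binProb m k p
      - (((m : ℝ) * p + s₁) * Real.log m + m * (p * Real.log p))
      = (m : ℝ) * ((∑ k ∈ Finset.range (m + 1), φ (((k : ℝ) + s₁) / m) * binProb m k p)
          - φ p) := by
    simp only [hφ]; ring
  rw [expand, abs_mul, abs_of_pos hm0', mul_comm (ε) (m:ℝ)]
  apply mul_le_mul_of_nonneg_left _ hm0'.le
  calc |(∑ k ∈ Finset.range (m + 1), φ (((k : ℝ) + s₁) / m) * binProb m k p) - φ p|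
      ≤ |(∑ k ∈ Finset.range (m + 1), φ (((k : ℝ) + s₁) / m) * binProb m k p)
          - (∑ k ∈ Finset.range (m + 1), φ ((k : ℝ) / m) * binProb m k p)|
        + |(∑ k ∈ Finset.range (m + 1), φ ((k : ℝ) / m) * binProb m k p) - φ p| :=
        abs_sub_le _ _ _
    _ ≤ ε / 2 + ε / 2 := add_le_add hshift hbern
    _ = ε := by ring

lemma binProb_continuous (m k : ℕ) : Continuous fun p : ℝ => binProb m k p := by
  unfold binProb; fun_prop

lemma binProb_le {m k : ℕ} {p : ℝ} (hp : p ∈ Set.Icc (0:ℝ) 1) :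
    binProb m k p ≤ (m.choose k : ℝ) := by
  obtain ⟨h0, h1⟩ := hp
  have h2 : (0:ℝ) ≤ 1 - p := by linarith
  unfold binProb
  calc (m.choose k : ℝ) * p ^ k * (1 - p) ^ (m - k)
      ≤ (m.choose k : ℝ) * 1 * 1 := by
        apply mul_le_mul
        · apply mul_le_mul_of_nonneg_left (pow_le_one₀ h0 h1) (by positivity)
        · exact pow_le_one₀ h2 (by linarith)
        · positivity
        · positivity
    _ = (m.choose k : ℝ) := by ring

lemma exp_formula {Ω : Type*} [MeasurableSpace Ω] (ℙ : Measure Ω) [IsProbabilityMeasure ℙ]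
    (V : Ω → ℝ) (hVmeas : Measurable V) (hV01 : ∀ ω, V ω ∈ Set.Icc (0:ℝ) 1)
    (X : Ω → ℕ) (hXmeas : Measurable X) (m s₁ : ℕ)
    (hdist : ∀ k ≤ m, (ℙ {ω | X ω = k + s₁}).toReal = ∫ ω, binProb m k (V ω) ∂ℙ)
    (f : ℕ → ℝ) :
    ∫ ω, f (X ω) ∂ℙ = ∫ ω, ∑ k ∈ Finset.range (m + 1), f (k + s₁) * binProb m k (V ω) ∂ℙ := by
  have hint : ∀ k : ℕ, Integrable (fun ω => binProb m k (V ω)) ℙ := by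
    intro k
    refine ⟨((binProb_continuous m k).measurable.comp hVmeas).aestronglyMeasurable, ?_⟩
    apply HasFiniteIntegral.of_bounded (C := (m.choose k : ℝ))
    filter_upwards with ω
    rw [Real.norm_eq_abs, abs_of_nonneg (binProb_nonneg (hV01 ω))]
    exact binProb_le (hV01 ω)
  set A : ℕ → Set Ω := fun k => {ω | X ω = k + s₁} with hA
  have hAmeas : ∀ k, MeasurableSet (A k) := fun k => hXmeas (measurableSet_singleton (k + s₁))
  have hsum : ∑ k ∈ Finset.range (m + 1), (ℙ (A k)).toReal = 1 := by
    have : ∀ k ∈ Finset.range (m + 1), (ℙ (A k)).toReal = ∫ ω, binProb m k (V ω) ∂ℙ := by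
      intro k hk
      exact hdist k (Nat.lt_succ_iff.mp (Finset.mem_range.mp hk))
    rw [Finset.sum_congr rfl this, ← integral_finset_sum _ (fun k _ => hint k)]
    have : ∀ ω, ∑ k ∈ Finset.range (m + 1), binProb m k (V ω) = 1 :=
      fun ω => binProb_sum m (V ω)
    rw [integral_congr_ae (ae_of_all _ this)]
    simp
  have hdisj : (↑(Finset.range (m + 1)) : Set ℕ).PairwiseDisjoint A := by
    intro i _ j _ hij
    simp only [Function.onFun, Set.disjoint_left]
    intro ω h1 h2
    simp only [hA, Set.mem_setOf_eq] at h1 h2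
    exact hij (by omega : i = j)
  have hU : ℙ (⋃ k ∈ Finset.range (m + 1), A k) = 1 := by
    rw [measure_biUnion_finset hdisj (fun k _ => hAmeas k)]
    have hne : ∀ k ∈ Finset.range (m + 1), ℙ (A k) ≠ ⊤ := fun k _ => measure_ne_top _ _
    have h1 : (∑ k ∈ Finset.range (m + 1), ℙ (A k)).toReal = 1 := by
      rw [ENNReal.toReal_sum hne]; exact hsum
    have h2 : (∑ k ∈ Finset.range (m + 1), ℙ (A k)) ≠ ⊤ := by
      exact (ENNReal.sum_lt_top.mpr (fun k hk => (hne k hk).lt_top)).ne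
    rw [← ENNReal.ofReal_toReal h2, h1, ENNReal.ofReal_one]
  have hae : ∀ᵐ ω ∂ℙ, ω ∈ ⋃ k ∈ Finset.range (m + 1), A k := by
    have hc : ℙ ((⋃ k ∈ Finset.range (m + 1), A k)ᶜ) = 0 :=
      (prob_compl_eq_zero_iff (Finset.measurableSet_biUnion _ (fun k _ => hAmeas k))).mpr hU
    rw [ae_iff]
    exact hc
  have step1 : ∫ ω, f (X ω) ∂ℙ
      = ∫ ω, ∑ k ∈ Finset.range (m + 1),
          (A k).indicator (fun _ => f (k + s₁)) ω ∂ℙ := by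
    apply integral_congr_ae
    filter_upwards [hae] with ω hω
    rw [Set.mem_iUnion₂] at hω
    obtain ⟨k₀, hk₀mem, hk₀⟩ := hω
    have hk₀' : X ω = k₀ + s₁ := hk₀
    rw [Finset.sum_eq_single k₀]
    · rw [Set.indicator_of_mem hk₀, hk₀']
    · intro k _ hk
      apply Set.indicator_of_notMem
      simp only [hA, Set.mem_setOf_eq, hk₀']
      omega
    · intro h; exact absurd hk₀mem h
  rw [step1, integral_finset_sum _ (fun k _ =>
    (integrable_const (f (k + s₁))).indicator (hAmeas k))]
  rw [integral_finset_sum _ (fun k _ => (hint k).const_mul (f (k + s₁)))]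
  apply Finset.sum_congr rfl
  intro k hk
  rw [integral_indicator_const _ (hAmeas k), measureReal_def, integral_const_mul,
    ← hdist k (Nat.lt_succ_iff.mp (Finset.mem_range.mp hk)), smul_eq_mul, mul_comm]

lemma log_littleO_nat : (fun n : ℕ => Real.log n) =o[atTop] fun n : ℕ => (n : ℝ) :=
  Real.isLittleO_log_id_atTop.comp_tendsto tendsto_natCast_atTop_atTop

lemma norm_natCast_tendsto : Tendsto (fun n : ℕ => ‖(n : ℝ)‖) atTop atTop := by
  have : (fun n : ℕ => ‖(n : ℝ)‖) = fun n : ℕ => (n : ℝ) := by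
    funext n; rw [Real.norm_natCast]
  rw [this]
  exact tendsto_natCast_atTop_atTop

lemma nlogn_diff_littleO (c₀ : ℕ) :
    (fun n : ℕ => (n : ℝ) * Real.log n - ((n - c₀ : ℕ) : ℝ) * Real.log ((n - c₀ : ℕ) : ℝ))
      =o[atTop] fun n : ℕ => (n : ℝ) := by
  have hbound : (fun n : ℕ => (c₀ : ℝ) * Real.log n + c₀) =o[atTop] fun n : ℕ => (n : ℝ) :=
    (log_littleO_nat.const_mul_left _).add
      (Asymptotics.isLittleO_const_left.mpr (Or.inr norm_natCast_tendsto))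
  rw [isLittleO_iff] at hbound ⊢
  intro c hc
  filter_upwards [hbound hc, eventually_ge_atTop (2 * c₀ + 2)] with n hn hn2
  have hc₀n : c₀ ≤ n := by omega
  have hmn : ((n - c₀ : ℕ) : ℝ) = (n : ℝ) - c₀ := by
    push_cast [Nat.cast_sub hc₀n]; ring
  set mr : ℝ := ((n - c₀ : ℕ) : ℝ) with hmr
  have hm1 : (1 : ℝ) ≤ mr := by
    rw [hmr]; exact_mod_cast (by omega : 1 ≤ n - c₀)
  have hmpos : (0 : ℝ) < mr := by linarith
  have hnr : mr ≤ (n : ℝ) := by rw [hmn]; simp [Nat.cast_nonneg]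
  have hnpos : (0 : ℝ) < n := by linarith
  have hlogm0 : 0 ≤ Real.log mr := Real.log_nonneg hm1
  have hlogle : Real.log mr ≤ Real.log n := Real.log_le_log hmpos hnr
  have h0 : mr * Real.log mr ≤ (n : ℝ) * Real.log n :=
    mul_le_mul hnr hlogle hlogm0 hnpos.le
  have hdivlog : Real.log (n : ℝ) - Real.log mr = Real.log ((n : ℝ) / mr) :=
    (Real.log_div hnpos.ne' hmpos.ne').symm
  have hlogdiv : Real.log ((n : ℝ) / mr) ≤ (n : ℝ) / mr - 1 :=
    Real.log_le_sub_one_of_pos (div_pos hnpos hmpos)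
  have hkey : mr * (Real.log (n : ℝ) - Real.log mr) ≤ (c₀ : ℝ) := by
    rw [hdivlog]
    have : mr * ((n : ℝ) / mr - 1) = (n : ℝ) - mr := by field_simp
    calc mr * Real.log ((n : ℝ) / mr) ≤ mr * ((n : ℝ) / mr - 1) :=
          mul_le_mul_of_nonneg_left hlogdiv hmpos.le
      _ = (n : ℝ) - mr := this
      _ = (c₀ : ℝ) := by rw [hmn]; ring
  have hub : (n : ℝ) * Real.log n - mr * Real.log mr ≤ (c₀ : ℝ) * Real.log n + c₀ := by
    have expand : (n : ℝ) * Real.log n - mr * Real.log mr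
        = ((n : ℝ) - mr) * Real.log n + mr * (Real.log (n : ℝ) - Real.log mr) := by ring
    have h2 : ((n : ℝ) - mr) * Real.log n = (c₀ : ℝ) * Real.log n := by rw [hmn]; ring
    rw [expand, h2]
    linarith
  rw [Real.norm_eq_abs, abs_of_nonneg (by linarith)]
  calc (n : ℝ) * Real.log n - mr * Real.log mr ≤ (c₀ : ℝ) * Real.log n + c₀ := hub
    _ ≤ ‖(c₀ : ℝ) * Real.log n + c₀‖ := le_abs_self _
    _ ≤ c * ‖(n : ℝ)‖ := hn

lemma binProb_integrable {Ω : Type*} [MeasurableSpace Ω] (ℙ : Measure Ω) [IsProbabilityMeasure ℙ]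
    (V : Ω → ℝ) (hVmeas : Measurable V) (hV01 : ∀ ω, V ω ∈ Set.Icc (0:ℝ) 1) (m k : ℕ) :
    Integrable (fun ω => binProb m k (V ω)) ℙ := by
  refine ⟨((binProb_continuous m k).measurable.comp hVmeas).aestronglyMeasurable, ?_⟩
  apply HasFiniteIntegral.of_bounded (C := (m.choose k : ℝ))
  filter_upwards with ω
  rw [Real.norm_eq_abs, abs_of_nonneg (binProb_nonneg (hV01 ω))]
  exact binProb_le (hV01 ω)

/-- As `n → ∞`, `E[I_n · log I_n] = (1/b)·n·log n + E[V·log V]·n + o(n)`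
for the subtree size `I n` of a random split tree with `n` balls (with `0·log 0 = 0`). -/
theorem stmt13
    (b s₀ s₁ : ℕ) (hb : 2 ≤ b)
    {Ω : Type*} [MeasurableSpace Ω] (ℙ : Measure Ω) [IsProbabilityMeasure ℙ]
    (V : Ω → ℝ) (hVmeas : Measurable V)
    (hV01 : ∀ ω, V ω ∈ Set.Icc (0:ℝ) 1)
    (hVdens : ℙ.map V ≪ (volume : Measure ℝ))
    (hVtail : ∀ x : ℝ, x < 1 → ℙ {ω | V ω ≤ x} < 1)
    (hEV : (∫ ω, V ω ∂ℙ) = 1 / b)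
    (I : ℕ → Ω → ℕ) (hImeas : ∀ n, Measurable (I n))
    (hIdist : ∀ n : ℕ, s₀ + b * s₁ ≤ n → ∀ k : ℕ, k ≤ n - s₀ - b * s₁ →
      (ℙ {ω | I n ω = k + s₁}).toReal
        = ∫ ω, ((n - s₀ - b * s₁).choose k : ℝ) * V ω ^ k
            * (1 - V ω) ^ (n - s₀ - b * s₁ - k) ∂ℙ) :
    (fun n : ℕ => (∫ ω, (I n ω : ℝ) * Real.log (I n ω) ∂ℙ)
        - (1 / b : ℝ) * n * Real.log n - (∫ ω, V ω * Real.log (V ω) ∂ℙ) * n)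
      =o[atTop] fun n : ℕ => (n : ℝ) := by
  set Cφ : ℝ := ∫ ω, V ω * Real.log (V ω) ∂ℙ with hCφ
  set c₀ : ℕ := s₀ + b * s₁ with hc₀def
  have hM : ∀ n : ℕ, n - s₀ - b * s₁ = n - c₀ := fun n => Nat.sub_sub n s₀ (b * s₁)
  set D : ℕ → ℝ := fun n => (∫ ω, (I n ω : ℝ) * Real.log (I n ω) ∂ℙ)
      - (((n - c₀ : ℕ) : ℝ) * Real.log ((n - c₀ : ℕ) : ℝ) * (1 / b)
        + (s₁ : ℝ) * Real.log ((n - c₀ : ℕ) : ℝ) + ((n - c₀ : ℕ) : ℝ) * Cφ) with hD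
  set R : ℕ → ℝ := fun n => ((n - c₀ : ℕ) : ℝ) * Real.log ((n - c₀ : ℕ) : ℝ) * (1 / b)
      + (s₁ : ℝ) * Real.log ((n - c₀ : ℕ) : ℝ) + ((n - c₀ : ℕ) : ℝ) * Cφ
      - (1 / b : ℝ) * n * Real.log n - Cφ * n with hR
  have hsplit : (fun n : ℕ => (∫ ω, (I n ω : ℝ) * Real.log (I n ω) ∂ℙ)
        - (1 / b : ℝ) * n * Real.log n - Cφ * n) = fun n => D n + R n := by
    funext n; simp only [hD, hR]; ring
  rw [hsplit]
  have hVint : Integrable V ℙ := by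
    refine ⟨hVmeas.aestronglyMeasurable, ?_⟩
    apply HasFiniteIntegral.of_bounded (C := 1)
    filter_upwards with ω
    obtain ⟨h0, h1⟩ := hV01 ω
    rw [Real.norm_eq_abs, abs_of_nonneg h0]; exact h1
  have hφVint : Integrable (fun ω => V ω * Real.log (V ω)) ℙ := by
    refine ⟨(hVmeas.mul (Real.measurable_log.comp hVmeas)).aestronglyMeasurable, ?_⟩
    apply HasFiniteIntegral.of_bounded (C := 1)
    filter_upwards with ω
    obtain ⟨h0, h1⟩ := hV01 ω
    rcases eq_or_lt_of_le h0 with h | h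
    · rw [Real.norm_eq_abs, ← h]; simp
    · rw [Real.norm_eq_abs, mul_comm]
      exact (Real.abs_log_mul_self_lt (V ω) h h1).le
  -- `D` is little-o
  have hDo : D =o[atTop] fun n : ℕ => (n : ℝ) := by
    rw [isLittleO_iff]
    intro ε hε
    filter_upwards [(tendsto_sub_atTop_nat c₀).eventually (unif_est s₁ hε),
      eventually_ge_atTop c₀] with n hP hn
    set m : ℕ := n - c₀ with hm
    have hdist' : ∀ k ≤ m, (ℙ {ω | I n ω = k + s₁}).toReal = ∫ ω, binProb m k (V ω) ∂ℙ := by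
      intro k hk
      have h := hIdist n (by omega) k (by rw [hM n]; exact hk)
      rw [hM n] at h
      simpa only [binProb] using h
    have key : (∫ ω, (I n ω : ℝ) * Real.log (I n ω) ∂ℙ)
        = ∫ ω, ∑ k ∈ Finset.range (m + 1),
            (((k + s₁ : ℕ) : ℝ) * Real.log ((k + s₁ : ℕ) : ℝ)) * binProb m k (V ω) ∂ℙ :=
      exp_formula ℙ V hVmeas hV01 (I n) (hImeas n) m s₁ hdist'
        (fun j => (j : ℝ) * Real.log (j : ℝ))
    set G : Ω → ℝ := fun ω => ∑ k ∈ Finset.range (m + 1),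
        (((k + s₁ : ℕ) : ℝ) * Real.log ((k + s₁ : ℕ) : ℝ)) * binProb m k (V ω) with hGdef
    set H : Ω → ℝ := fun ω => ((m : ℝ) * Real.log m) * V ω
        + ((s₁ : ℝ) * Real.log m + (m : ℝ) * (V ω * Real.log (V ω))) with hHdef
    have hGint : Integrable G ℙ := by
      rw [hGdef]
      exact integrable_finset_sum _ (fun k _ =>
        (binProb_integrable ℙ V hVmeas hV01 m k).const_mul _)
    have hHint : Integrable H ℙ := by
      rw [hHdef]
      exact (hVint.const_mul _).add ((integrable_const _).add (hφVint.const_mul _))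
    have hHval : ∫ ω, H ω ∂ℙ = (m : ℝ) * Real.log m * (1 / b)
        + ((s₁ : ℝ) * Real.log m + (m : ℝ) * Cφ) := by
      have i1 : Integrable (fun ω => ((m : ℝ) * Real.log m) * V ω) ℙ := hVint.const_mul _
      have i2 : Integrable (fun ω => (m : ℝ) * (V ω * Real.log (V ω))) ℙ := hφVint.const_mul _
      have i3 : Integrable (fun ω => (s₁ : ℝ) * Real.log m + (m : ℝ) * (V ω * Real.log (V ω))) ℙ :=
        (integrable_const _).add i2
      rw [hHdef]
      simp only []
      rw [integral_add i1 i3, integral_add (integrable_const _) i2,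
        integral_const_mul, integral_const_mul, hEV, integral_const]
      simp [hCφ, integral_const_mul]
    have hDn : D n = ∫ ω, (G ω - H ω) ∂ℙ := by
      rw [integral_sub hGint hHint, ← key, hHval]
      simp only [hD, ← hm]
      ring
    rw [hDn]
    have bnd : ∀ᵐ ω ∂ℙ, ‖G ω - H ω‖ ≤ ε * m := by
      filter_upwards with ω
      have h1 := hP (V ω) (hV01 ω)
      have h2 : G ω - H ω = (∑ k ∈ Finset.range (m + 1),
          (((k + s₁ : ℕ) : ℝ) * Real.log ((k + s₁ : ℕ) : ℝ)) * binProb m k (V ω))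
          - (((m : ℝ) * V ω + s₁) * Real.log m + (m : ℝ) * (V ω * Real.log (V ω))) := by
        simp only [hGdef, hHdef]; ring
      rw [Real.norm_eq_abs, h2]
      exact h1
    calc ‖∫ ω, (G ω - H ω) ∂ℙ‖ ≤ (ε * m) * (ℙ Set.univ).toReal :=
          norm_integral_le_of_norm_le_const bnd
      _ = ε * m := by simp
      _ ≤ ε * n := by
          apply mul_le_mul_of_nonneg_left _ hε.le
          exact_mod_cast Nat.sub_le n c₀
      _ = ε * ‖(n : ℝ)‖ := by rw [Real.norm_natCast]
  -- `R` is little-o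
  have hRo : R =o[atTop] fun n : ℕ => (n : ℝ) := by
    have h1 : (fun n : ℕ => (-(1 / b : ℝ)) * ((n : ℝ) * Real.log n
        - ((n - c₀ : ℕ) : ℝ) * Real.log ((n - c₀ : ℕ) : ℝ))) =o[atTop] fun n : ℕ => (n : ℝ) :=
      (nlogn_diff_littleO c₀).const_mul_left _
    have h2 : (fun n : ℕ => (s₁ : ℝ) * Real.log ((n - c₀ : ℕ) : ℝ)) =o[atTop]
        fun n : ℕ => (n : ℝ) := by
      have hcomp := log_littleO_nat.comp_tendsto (tendsto_sub_atTop_nat c₀)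
      have hO : (fun n : ℕ => ((n - c₀ : ℕ) : ℝ)) =O[atTop] fun n : ℕ => (n : ℝ) := by
        apply Asymptotics.isBigO_of_le
        intro n
        rw [Real.norm_natCast, Real.norm_natCast]
        exact_mod_cast Nat.sub_le n c₀
      exact (hcomp.trans_isBigO hO).const_mul_left _
    have h3 : (fun n : ℕ => (((n - c₀ : ℕ) : ℝ) - n) * Cφ) =o[atTop]
        fun n : ℕ => (n : ℝ) := by
      have hconst : (fun _ : ℕ => (-(c₀ : ℝ)) * Cφ) =o[atTop] fun n : ℕ => (n : ℝ) :=
        Asymptotics.isLittleO_const_left.mpr (Or.inr norm_natCast_tendsto)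
      apply hconst.congr' _ EventuallyEq.rfl
      filter_upwards [eventually_ge_atTop c₀] with n hn
      have : ((n - c₀ : ℕ) : ℝ) = (n : ℝ) - c₀ := by
        push_cast [Nat.cast_sub hn]; ring
      rw [this]; ring
    have : R = fun n : ℕ => ((-(1 / b : ℝ)) * ((n : ℝ) * Real.log n
          - ((n - c₀ : ℕ) : ℝ) * Real.log ((n - c₀ : ℕ) : ℝ)))
        + (s₁ : ℝ) * Real.log ((n - c₀ : ℕ) : ℝ)
        + (((n - c₀ : ℕ) : ℝ) - n) * Cφ := by
      funext n; simp only [hR]; ring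
    rw [this]
    exact (h1.add h2).add h3
  exact hDo.add hRo
end
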